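/- arXiv:2205.01968 — 6 statements merged into one kernel-verified Lean document; each statement's English description precedes it below -/
import Mathlib

section
/- Every f ∈ Q([0,T];Y) has bounded range in Y (i.e. {f(t) : t ∈ [0,T]} is a bounded subset of the topological vector space Y) and is continuous at every point of the form t = Tr with r ∈ [0,1] irrational. In particular, f is continuous at all but at most countably many points of [0,T]. -/
open Filter Topology Set

noncomputable section

/-- The path space `Y^{[0,T]}` equipped with the topology (uniformity) of uniform
convergence. -/
abbrev PathSpace (Y : Type*) [UniformSpace Y] (T : ℝ) : Type _ :=
  UniformFun (Set.Icc (0 : ℝ) T) Y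

/-- `Q_n([0,T];Y)`: functions that are constant on every open interval
`(t_{i-1}^n, t_i^n)` where `t_i^n = i T / n`, `1 ≤ i ≤ n`. -/
def Qn (Y : Type*) [UniformSpace Y] (T : ℝ) (n : ℕ) : Set (PathSpace Y T) :=
  {f | ∀ i : ℕ, 1 ≤ i → i ≤ n → ∀ s t : Set.Icc (0 : ℝ) T,
      ((i : ℝ) - 1) * T / n < (s : ℝ) → (s : ℝ) < (i : ℝ) * T / n →
      ((i : ℝ) - 1) * T / n < (t : ℝ) → (t : ℝ) < (i : ℝ) * T / n →
      UniformFun.toFun f s = UniformFun.toFun f t}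

/-- `Q_∞([0,T];Y) = ⋃_{n ∈ ℕ} Q_n([0,T];Y)`. -/
def Qinfty (Y : Type*) [UniformSpace Y] (T : ℝ) : Set (PathSpace Y T) :=
  ⋃ n ∈ Set.Ici 1, Qn Y T n

/-- `Q([0,T];Y)`: the closure of `Q_∞([0,T];Y)` in the topology of uniform convergence. -/
def Qspace (Y : Type*) [UniformSpace Y] (T : ℝ) : Set (PathSpace Y T) :=
  closure (Qinfty Y T)

/-- `C([0,T];Y)` viewed inside the path space. -/
def Cspace (Y : Type*) [UniformSpace Y] (T : ℝ) : Set (PathSpace Y T) :=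
  {f | Continuous (UniformFun.toFun f)}

open scoped Uniformity

namespace QAux

variable {Y : Type*} [UniformSpace Y] {T : ℝ}

lemma exists_approx {f : PathSpace Y T} (hf : f ∈ Qspace Y T) {V : Set (Y × Y)}
    (hV : V ∈ 𝓤 Y) :
    ∃ n : ℕ, 1 ≤ n ∧ ∃ g ∈ Qn Y T n,
      ∀ x, (UniformFun.toFun f x, UniformFun.toFun g x) ∈ V := by
  obtain ⟨g, hgQ, hgV⟩ :=
    (mem_closure_iff_nhds_basis (UniformFun.hasBasis_nhds (Set.Icc (0:ℝ) T) Y f)).mp hf V hV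
  simp only [Qinfty, Set.mem_iUnion, Set.mem_Ici, exists_prop] at hgQ
  obtain ⟨n, hn, hgn⟩ := hgQ
  exact ⟨n, hn, g, hgn, fun x => hgV x⟩

lemma position (hT : 0 < T) {n : ℕ} (hn : 1 ≤ n) {x : ℝ} (hx0 : 0 ≤ x) (hxT : x ≤ T) :
    (∃ i : ℕ, i ≤ n ∧ x = (i : ℝ) * T / n) ∨
    (∃ i : ℕ, 1 ≤ i ∧ i ≤ n ∧ ((i : ℝ) - 1) * T / n < x ∧ x < (i : ℝ) * T / n) := by
  have hn0 : (0:ℝ) < n := by exact_mod_cast hn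
  set y : ℝ := x * n / T with hy
  have hy0 : 0 ≤ y := by positivity
  have hxn : x * n = y * T := by rw [hy]; field_simp
  have hyn : y ≤ (n : ℝ) := by
    rw [hy, div_le_iff₀ hT]; nlinarith
  set i := ⌈y⌉₊ with hi
  have hin : i ≤ n := Nat.ceil_le.mpr (by exact_mod_cast hyn)
  have hyi : y ≤ (i : ℝ) := Nat.le_ceil y
  by_cases hcase : y = (i : ℝ)
  · left
    refine ⟨i, hin, ?_⟩
    rw [eq_div_iff hn0.ne']
    nlinarith
  · right
    have hypos : 0 < y := by
      rcases hy0.eq_or_lt with h | h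
      · exact absurd (by rw [hi, ← h]; norm_num) hcase
      · exact h
    have h1i : 1 ≤ i := Nat.ceil_pos.mpr hypos
    have hylt : y < (i : ℝ) := lt_of_le_of_ne hyi hcase
    have hgt : (i : ℝ) - 1 < y := by
      have := Nat.ceil_lt_add_one hy0
      rw [← hi] at this
      linarith
    refine ⟨i, h1i, hin, ?_, ?_⟩
    · rw [div_lt_iff₀ hn0]; nlinarith
    · rw [lt_div_iff₀ hn0]; nlinarith

lemma finite_range (hT : 0 < T) {n : ℕ} (hn : 1 ≤ n) {g : PathSpace Y T}
    (hg : g ∈ Qn Y T n) : (Set.range (UniformFun.toFun g)).Finite := by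
  have hn0 : (0:ℝ) < n := by exact_mod_cast hn
  classical
  set A : Set ℝ := (Set.range fun i : Fin (n+1) => (i : ℝ) * T / n) ∪
      (Set.range fun i : Fin (n+1) => ((i : ℝ) - 1) * T / n + T / (2*n)) with hA
  have hAfin : A.Finite := (Set.finite_range _).union (Set.finite_range _)
  have hBfin : (Subtype.val ⁻¹' A : Set (Set.Icc (0:ℝ) T)).Finite :=
    hAfin.preimage Subtype.val_injective.injOn
  apply Set.Finite.subset (hBfin.image (UniformFun.toFun g))
  rintro _ ⟨x, rfl⟩
  rcases position hT hn x.2.1 x.2.2 with ⟨i, hin, hxi⟩ | ⟨i, h1i, hin, hlt, hgt⟩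
  · exact ⟨x, Or.inl ⟨⟨i, Nat.lt_succ_of_le hin⟩, by simpa using hxi.symm⟩, rfl⟩
  · have h1i' : (1:ℝ) ≤ i := by exact_mod_cast h1i
    have hin' : (i:ℝ) ≤ n := by exact_mod_cast hin
    have hm : ∃ m : ℝ, m = ((i : ℝ) - 1) * T / n + T / (2*n) := ⟨_, rfl⟩
    obtain ⟨m, hm⟩ := hm
    have hhalf : T / (2*n) + T / (2*n) = T / n := by field_simp; ring
    have hpos : 0 < T / (2*n) := by positivity
    have hsplit : ((i:ℝ) - 1) * T / n = (i:ℝ) * T / n - T / n := by ring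
    have hm1 : ((i : ℝ) - 1) * T / n < m := by rw [hm]; linarith
    have hm2 : m < (i : ℝ) * T / n := by rw [hm, hsplit]; linarith
    have hiT : (i : ℝ) * T / n ≤ T := by
      rw [div_le_iff₀ hn0]; nlinarith
    have h0m : 0 ≤ ((i:ℝ) - 1) * T / n :=
      div_nonneg (mul_nonneg (by linarith) hT.le) hn0.le
    have hmIcc : m ∈ Set.Icc (0:ℝ) T := ⟨by rw [hm]; linarith, by linarith⟩
    have heq := hg i h1i hin x ⟨m, hmIcc⟩ hlt hgt hm1 hm2
    refine ⟨⟨m, hmIcc⟩, Or.inr ⟨⟨i, Nat.lt_succ_of_le hin⟩, by simp [hm]⟩, heq.symm⟩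

lemma continuousAt_irrational (hT : 0 < T) {f : PathSpace Y T} (hf : f ∈ Qspace Y T)
    {r : ℝ} (hr : Irrational r) (hrmem : T * r ∈ Set.Icc (0:ℝ) T) :
    ContinuousAt (UniformFun.toFun f) ⟨T * r, hrmem⟩ := by
  set x₀ : Set.Icc (0:ℝ) T := ⟨T * r, hrmem⟩ with hx₀
  rw [Uniform.continuousAt_iff'_right]
  rw [Filter.tendsto_def]
  intro V hV
  obtain ⟨W, hW, hWsymm, hWV⟩ := comp_symm_mem_uniformity_sets hV
  obtain ⟨n, hn, g, hg, hfg⟩ := exists_approx hf hW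
  have hn0 : (0:ℝ) < n := by exact_mod_cast hn
  rcases position hT hn hrmem.1 hrmem.2 with ⟨i, hin, heq⟩ | ⟨i, h1i, hin, hlt, hgt⟩
  · exfalso
    rw [eq_div_iff hn0.ne'] at heq
    have hrn : r * n = (i : ℝ) := mul_left_cancel₀ hT.ne' (by linear_combination heq)
    refine hr ⟨(i : ℚ) / (n : ℚ), ?_⟩
    have hn0' : ((n:ℚ) : ℝ) ≠ 0 := by push_cast; exact hn0.ne'
    push_cast
    rw [div_eq_iff (by exact_mod_cast hn0.ne' : ((n:ℕ):ℝ) ≠ 0)]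
    exact hrn.symm
  · have hUopen : IsOpen {t : Set.Icc (0:ℝ) T |
        ((i : ℝ) - 1) * T / n < (t : ℝ) ∧ (t : ℝ) < (i : ℝ) * T / n} :=
      (isOpen_Ioo (a := ((i : ℝ) - 1) * T / n) (b := (i : ℝ) * T / n)).preimage
        continuous_subtype_val
    have hU : {t : Set.Icc (0:ℝ) T |
        ((i : ℝ) - 1) * T / n < (t : ℝ) ∧ (t : ℝ) < (i : ℝ) * T / n} ∈ 𝓝 x₀ :=
      hUopen.mem_nhds ⟨hlt, hgt⟩
    filter_upwards [hU] with t ht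
    apply hWV
    refine ⟨UniformFun.toFun g x₀, hfg x₀, ?_⟩
    rw [hg i h1i hin x₀ t hlt hgt ht.1 ht.2]
    exact hWsymm.symm _ _ (hfg t)

end QAux

/-- Every `f ∈ Q([0,T];Y)` has bounded range in `Y`, is continuous at every irrational
multiple `T·r` of `T`, and consequently is continuous outside an at most countable set. -/
theorem mem_Qspace_bounded_and_continuous {Y : Type*} [AddCommGroup Y] [Module ℝ Y]
    [UniformSpace Y] [IsUniformAddGroup Y] [ContinuousSMul ℝ Y] [LocallyConvexSpace ℝ Y]
    [T2Space Y] (T : ℝ) (hT : 0 < T) (f : PathSpace Y T) (hf : f ∈ Qspace Y T) :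
    Bornology.IsVonNBounded ℝ (Set.range (UniformFun.toFun f)) ∧
    (∀ r : ℝ, Irrational r → ∀ (hr : T * r ∈ Set.Icc (0 : ℝ) T),
      ContinuousAt (UniformFun.toFun f) ⟨T * r, hr⟩) ∧
    Set.Countable {t : Set.Icc (0 : ℝ) T | ¬ ContinuousAt (UniformFun.toFun f) t} := by
  refine ⟨?_, fun r hr hrmem => QAux.continuousAt_irrational hT hf hr hrmem, ?_⟩
  · apply TotallyBounded.isVonNBounded ℝ
    intro d hd
    obtain ⟨n, hn, g, hg, hfg⟩ := QAux.exists_approx hf hd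
    refine ⟨Set.range (UniformFun.toFun g), QAux.finite_range hT hn hg, ?_⟩
    rintro _ ⟨x, rfl⟩
    exact Set.mem_biUnion ⟨x, rfl⟩ (hfg x)
  · have hsub : {t : Set.Icc (0 : ℝ) T | ¬ ContinuousAt (UniformFun.toFun f) t} ⊆
        Subtype.val ⁻¹' (Set.range fun q : ℚ => (q : ℝ) * T) := by
      intro t ht
      by_contra hR
      apply ht
      have hirr : Irrational ((t : ℝ) / T) := by
        rintro ⟨q, hq⟩
        exact hR ⟨q, by show (q : ℝ) * T = (t : ℝ); rw [hq]; field_simp⟩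
      have hTt : T * ((t : ℝ) / T) = (t : ℝ) := by field_simp
      have hmem : T * ((t : ℝ) / T) ∈ Set.Icc (0 : ℝ) T := by rw [hTt]; exact t.2
      have h2 := QAux.continuousAt_irrational hT hf hirr hmem
      have heq : (⟨T * ((t : ℝ) / T), hmem⟩ : Set.Icc (0 : ℝ) T) = t := Subtype.ext hTt
      rwa [heq] at h2
    exact ((Set.countable_range _).preimage Subtype.val_injective).mono hsub
end
end

section
/- If Y is sequentially complete, then Q([0,T];Y) coincides with the set of all functions f : [0,T] → Y that are continuous at every point t ∈ (T·ℚ^∁) ∩ [0,T] (irrational multiples of T), have a right limit at every t ∈ [0,T), and have a left limit at every t ∈ (0,T]. -/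
open Filter Topology Set Uniformity

noncomputable section
section SeqComplete

variable {Y : Type*} [UniformSpace Y]

/-- A countably generated Cauchy filter converges in a sequentially complete uniform space. -/
lemma exists_le_nhds_of_cauchy_of_seq {l : Filter Y} [l.IsCountablyGenerated]
    (hl : Cauchy l)
    (hseq : ∀ u : ℕ → Y, CauchySeq u → ∃ y : Y, Tendsto u atTop (nhds y)) :
    ∃ y : Y, l ≤ nhds y := by
  obtain ⟨s, hs⟩ := l.exists_antitone_basis
  have hne : ∀ n : ℕ, (s n).Nonempty := fun n =>
    (cauchy_iff.mp hl).1.nonempty_of_mem (hs.toHasBasis.mem_of_mem trivial)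
  choose x hx using hne
  have hcs : CauchySeq x := by
    rw [cauchySeq_iff]
    intro V hV
    obtain ⟨S, hSl, hS⟩ := (cauchy_iff.mp hl).2 V hV
    obtain ⟨N, -, hN⟩ := hs.toHasBasis.mem_iff.mp hSl
    exact ⟨N, fun k hk m hm =>
      hS ⟨hN (hs.antitone hk (hx k)), hN (hs.antitone hm (hx m))⟩⟩
  obtain ⟨y, hy⟩ := hseq x hcs
  refine ⟨y, fun S hS => ?_⟩
  obtain ⟨U, hU, hball⟩ := UniformSpace.mem_nhds_iff.mp hS
  obtain ⟨W, hW, hWs, hWU⟩ := comp_symm_mem_uniformity_sets hU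
  obtain ⟨A, hAl, hA⟩ := (cauchy_iff.mp hl).2 W hW
  obtain ⟨N, -, hN⟩ := hs.toHasBasis.mem_iff.mp hAl
  have h1 : ∀ᶠ m in atTop, x m ∈ UniformSpace.ball y W :=
    hy (UniformSpace.ball_mem_nhds y hW)
  obtain ⟨m, hmW, hmN⟩ := (h1.and (eventually_ge_atTop N)).exists
  refine Filter.mem_of_superset (hs.toHasBasis.mem_of_mem (i := N) trivial) fun z hz => ?_
  have h2 : (x m, z) ∈ W := hA ⟨hN (hs.antitone hmN (hx m)), hN hz⟩
  exact hball (hWU (SetRel.mem_comp.2 ⟨x m, hmW, h2⟩))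

end SeqComplete

section Grid

variable {T : ℝ}

lemma grid_lt_iff (hT : 0 < T) {n : ℕ} (hn : 1 ≤ n) (x t : ℝ) :
    x * T / n < t ↔ x < t * n / T := by
  have hn0 : (0:ℝ) < n := by exact_mod_cast hn
  rw [div_lt_iff₀ hn0, lt_div_iff₀ hT]

lemma lt_grid_iff (hT : 0 < T) {n : ℕ} (hn : 1 ≤ n) (x t : ℝ) :
    t < x * T / n ↔ t * n / T < x := by
  have hn0 : (0:ℝ) < n := by exact_mod_cast hn
  rw [lt_div_iff₀ hn0, div_lt_iff₀ hT]

lemma grid_le_iff (hT : 0 < T) {n : ℕ} (hn : 1 ≤ n) (x t : ℝ) :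
    x * T / n ≤ t ↔ x ≤ t * n / T := by
  have hn0 : (0:ℝ) < n := by exact_mod_cast hn
  rw [div_le_iff₀ hn0, le_div_iff₀ hT]

lemma le_grid_iff (hT : 0 < T) {n : ℕ} (hn : 1 ≤ n) (x t : ℝ) :
    t ≤ x * T / n ↔ t * n / T ≤ x := by
  have hn0 : (0:ℝ) < n := by exact_mod_cast hn
  rw [le_div_iff₀ hn0, div_le_iff₀ hT]

lemma grid_eq (hT : 0 < T) {n : ℕ} (hn : 1 ≤ n) (x : ℝ) :
    (x * n / T) * T / n = x := by
  have hn0 : (0:ℝ) ≠ n := by exact_mod_cast (by omega : 0 ≠ n)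
  field_simp

/-- A grid point `j T / n` is never strictly inside the `i`-th open grid interval. -/
lemma grid_not_mem_open (hT : 0 < T) {n : ℕ} (hn : 1 ≤ n) {i j : ℕ} {x : ℝ}
    (hj : x = (j:ℝ) * T / n) (h1 : ((i:ℝ)-1) * T / n < x) (h2 : x < (i:ℝ) * T / n) :
    False := by
  have hn0 : (0:ℝ) < n := by exact_mod_cast hn
  have hTn : (0:ℝ) < T / n := by positivity
  subst hj
  rw [mul_div_assoc, mul_div_assoc] at h1 h2
  have hij1 : (i:ℝ) - 1 < j := lt_of_mul_lt_mul_right h1 hTn.le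
  have hij2 : (j:ℝ) < i := lt_of_mul_lt_mul_right h2 hTn.le
  have e1 : i < j + 1 := by exact_mod_cast (by linarith : (i:ℝ) < (j:ℝ) + 1)
  have e2 : j < i := by exact_mod_cast hij2
  omega

lemma exists_open_grid (hT : 0 < T) {n : ℕ} (hn : 1 ≤ n) {x : ℝ}
    (h0 : 0 ≤ x) (h1 : x ≤ T) (hng : ∀ j : ℕ, x ≠ (j:ℝ) * T / n) :
    ∃ i : ℕ, 1 ≤ i ∧ i ≤ n ∧ ((i:ℝ)-1) * T / n < x ∧ x < (i:ℝ) * T / n := by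
  have hn0 : (0:ℝ) < n := by exact_mod_cast hn
  have hx0 : 0 < x := h0.lt_of_ne (fun h => hng 0 (by simp [← h]))
  have hxT : x < T := h1.lt_of_ne (fun h => hng n (by rw [h]; field_simp))
  set a : ℝ := x * n / T with ha
  have ha0 : 0 < a := by positivity
  have han : a ≤ n := by
    rw [ha, div_le_iff₀ hT]
    nlinarith
  refine ⟨⌈a⌉₊, Nat.ceil_pos.2 ha0, Nat.ceil_le.2 han, ?_, ?_⟩
  · rw [grid_lt_iff hT hn, ← ha]
    have := Nat.ceil_lt_add_one ha0.le
    linarith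
  · rw [lt_grid_iff hT hn, ← ha]
    rcases lt_or_eq_of_le (Nat.le_ceil a) with h | h
    · exact h
    · exact absurd (by rw [← grid_eq hT hn x, ← ha, ← h] : x = (⌈a⌉₊:ℝ) * T / n) (hng ⌈a⌉₊)


lemma exists_grid_right (hT : 0 < T) {n : ℕ} (hn : 1 ≤ n) {x : ℝ}
    (h0 : 0 ≤ x) (h1 : x < T) :
    ∃ i : ℕ, 1 ≤ i ∧ i ≤ n ∧ ((i:ℝ)-1) * T / n ≤ x ∧ x < (i:ℝ) * T / n := by
  have hn0 : (0:ℝ) < n := by exact_mod_cast hn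
  set a : ℝ := x * n / T with ha
  have ha0 : 0 ≤ a := by positivity
  have han : a < n := by rw [ha, div_lt_iff₀ hT]; nlinarith
  refine ⟨⌊a⌋₊ + 1, by omega, by have := (Nat.floor_lt ha0).2 han; omega, ?_, ?_⟩
  · rw [grid_le_iff hT hn, ← ha]
    push_cast
    have := Nat.floor_le ha0
    linarith
  · rw [lt_grid_iff hT hn, ← ha]
    push_cast
    exact Nat.lt_floor_add_one a

lemma exists_grid_left (hT : 0 < T) {n : ℕ} (hn : 1 ≤ n) {x : ℝ}
    (h0 : 0 < x) (h1 : x ≤ T) :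
    ∃ i : ℕ, 1 ≤ i ∧ i ≤ n ∧ ((i:ℝ)-1) * T / n < x ∧ x ≤ (i:ℝ) * T / n := by
  have hn0 : (0:ℝ) < n := by exact_mod_cast hn
  set a : ℝ := x * n / T with ha
  have ha0 : 0 < a := by positivity
  have han : a ≤ n := by rw [ha, div_le_iff₀ hT]; nlinarith
  refine ⟨⌈a⌉₊, Nat.ceil_pos.2 ha0, Nat.ceil_le.2 han, ?_, ?_⟩
  · rw [grid_lt_iff hT hn, ← ha]
    have := Nat.ceil_lt_add_one ha0.le
    linarith
  · rw [le_grid_iff hT hn, ← ha]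
    exact Nat.le_ceil a

/-- The ceiling index of a point strictly inside the `i`-th open grid interval is `i`. -/
lemma ceil_eq_of_mem_open (hT : 0 < T) {n : ℕ} (hn : 1 ≤ n) {i : ℕ} (hi1 : 1 ≤ i) {x : ℝ}
    (h1 : ((i:ℝ)-1) * T / n < x) (h2 : x < (i:ℝ) * T / n) :
    ⌈x * n / T⌉₊ = i := by
  rw [grid_lt_iff hT hn] at h1
  rw [lt_grid_iff hT hn] at h2
  rw [Nat.ceil_eq_iff (by omega)]
  constructor
  · rw [Nat.cast_sub hi1]
    push_cast
    linarith
  · linarith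

end Grid

section Osc

variable {Y : Type*} [UniformSpace Y] {T : ℝ}

lemma right_osc (hT : 0 < T) {F : Set.Icc (0:ℝ) T → Y}
    (hF : ∀ t : Set.Icc (0:ℝ) T, (t : ℝ) < T → ∃ y : Y,
      Tendsto F (nhdsWithin t {s : Set.Icc (0:ℝ) T | (t:ℝ) < (s:ℝ)}) (nhds y))
    {W : Set (Y × Y)} (hW : W ∈ uniformity Y) (hWs : SetRel.IsSymm W)
    (t : Set.Icc (0:ℝ) T) :
    ∃ δ > 0, ∀ s s' : Set.Icc (0:ℝ) T, (t:ℝ) < s → (s:ℝ) < t + δ →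
      (t:ℝ) < s' → (s':ℝ) < t + δ → (F s, F s') ∈ SetRel.comp W W := by
  rcases eq_or_lt_of_le t.2.2 with hTt | htT
  · exact ⟨1, one_pos, fun s s' hs _ _ _ =>
      absurd (hs.trans_le s.2.2) (by simp [hTt])⟩
  · obtain ⟨y, hy⟩ := hF t htT
    have hb : F ⁻¹' (UniformSpace.ball y W) ∈
        nhdsWithin t {s : Set.Icc (0:ℝ) T | (t:ℝ) < (s:ℝ)} :=
      hy (UniformSpace.ball_mem_nhds y hW)
    obtain ⟨δ, hδ, hsub⟩ := Metric.mem_nhdsWithin_iff.mp hb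
    refine ⟨δ, hδ, fun s s' h1 h2 h3 h4 => ?_⟩
    have hms : s ∈ Metric.ball t δ := by
      rw [Metric.mem_ball, Subtype.dist_eq, Real.dist_eq, abs_lt]
      constructor <;> linarith
    have hms' : s' ∈ Metric.ball t δ := by
      rw [Metric.mem_ball, Subtype.dist_eq, Real.dist_eq, abs_lt]
      constructor <;> linarith
    have h5 : (y, F s) ∈ W := hsub ⟨hms, h1⟩
    have h6 : (y, F s') ∈ W := hsub ⟨hms', h3⟩
    exact SetRel.mem_comp.2 ⟨y, hWs.symm _ _ h5, h6⟩

lemma left_osc (hT : 0 < T) {F : Set.Icc (0:ℝ) T → Y}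
    (hF : ∀ t : Set.Icc (0:ℝ) T, 0 < (t : ℝ) → ∃ y : Y,
      Tendsto F (nhdsWithin t {s : Set.Icc (0:ℝ) T | (s:ℝ) < (t:ℝ)}) (nhds y))
    {W : Set (Y × Y)} (hW : W ∈ uniformity Y) (hWs : SetRel.IsSymm W)
    (t : Set.Icc (0:ℝ) T) :
    ∃ δ > 0, ∀ s s' : Set.Icc (0:ℝ) T, (t:ℝ) - δ < s → (s:ℝ) < t →
      (t:ℝ) - δ < s' → (s':ℝ) < t → (F s, F s') ∈ SetRel.comp W W := by
  rcases (eq_or_lt_of_le t.2.1).symm with h0t | h0t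
  · obtain ⟨y, hy⟩ := hF t h0t
    have hb : F ⁻¹' (UniformSpace.ball y W) ∈
        nhdsWithin t {s : Set.Icc (0:ℝ) T | (s:ℝ) < (t:ℝ)} :=
      hy (UniformSpace.ball_mem_nhds y hW)
    obtain ⟨δ, hδ, hsub⟩ := Metric.mem_nhdsWithin_iff.mp hb
    refine ⟨δ, hδ, fun s s' h1 h2 h3 h4 => ?_⟩
    have hms : s ∈ Metric.ball t δ := by
      rw [Metric.mem_ball, Subtype.dist_eq, Real.dist_eq, abs_lt]
      constructor <;> linarith
    have hms' : s' ∈ Metric.ball t δ := by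
      rw [Metric.mem_ball, Subtype.dist_eq, Real.dist_eq, abs_lt]
      constructor <;> linarith
    have h5 : (y, F s) ∈ W := hsub ⟨hms, h2⟩
    have h6 : (y, F s') ∈ W := hsub ⟨hms', h4⟩
    exact SetRel.mem_comp.2 ⟨y, hWs.symm _ _ h5, h6⟩
  · exact ⟨1, one_pos, fun s s' _ hs _ _ =>
      absurd (lt_of_le_of_lt s.2.1 hs) (by simp [← h0t])⟩

end Osc
section Forward

variable {Y : Type*} [UniformSpace Y] {T : ℝ}

lemma approx_of_mem_Qspace {f : PathSpace Y T} (hf : f ∈ Qspace Y T)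
    {V : Set (Y × Y)} (hV : V ∈ uniformity Y) :
    ∃ g ∈ Qinfty Y T, ∀ x, (UniformFun.toFun f x, UniformFun.toFun g x) ∈ V := by
  have h := (mem_closure_iff_nhds_basis
    (UniformFun.hasBasis_nhds (Set.Icc (0:ℝ) T) Y f)).mp hf V hV
  obtain ⟨g, hg1, hg2⟩ := h
  exact ⟨g, hg1, hg2⟩

lemma mem_Qinfty_iff {g : PathSpace Y T} :
    g ∈ Qinfty Y T ↔ ∃ n : ℕ, 1 ≤ n ∧ g ∈ Qn Y T n := by
  simp [Qinfty, Set.mem_iUnion, Set.mem_Ici]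

lemma neBot_right (hT : 0 < T) {t : Set.Icc (0:ℝ) T} (ht : (t:ℝ) < T) :
    (nhdsWithin t {s : Set.Icc (0:ℝ) T | (t:ℝ) < (s:ℝ)}).NeBot := by
  rw [← mem_closure_iff_nhdsWithin_neBot, Metric.mem_closure_iff]
  intro ε hε
  have hb1 : (t:ℝ) < min ((t:ℝ) + ε/2) T := lt_min (by linarith) ht
  have hb2 : min ((t:ℝ) + ε/2) T ≤ (t:ℝ) + ε/2 := min_le_left _ _
  refine ⟨⟨min ((t:ℝ) + ε/2) T, ⟨le_min (by linarith [t.2.1]) hT.le, min_le_right _ _⟩⟩,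
    hb1, ?_⟩
  rw [Subtype.dist_eq, Real.dist_eq, abs_lt]
  constructor <;> simp only [] <;> linarith

lemma neBot_left (hT : 0 < T) {t : Set.Icc (0:ℝ) T} (ht : 0 < (t:ℝ)) :
    (nhdsWithin t {s : Set.Icc (0:ℝ) T | (s:ℝ) < (t:ℝ)}).NeBot := by
  rw [← mem_closure_iff_nhdsWithin_neBot, Metric.mem_closure_iff]
  intro ε hε
  have hb1 : max ((t:ℝ) - ε/2) 0 < (t:ℝ) := max_lt (by linarith) ht
  have hb2 : (t:ℝ) - ε/2 ≤ max ((t:ℝ) - ε/2) 0 := le_max_left _ _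
  refine ⟨⟨max ((t:ℝ) - ε/2) 0, ⟨le_max_right _ _, max_le (by linarith [t.2.2]) hT.le⟩⟩,
    hb1, ?_⟩
  rw [Subtype.dist_eq, Real.dist_eq, abs_lt]
  constructor <;> simp only [] <;> linarith

lemma right_limit_of_mem_Qspace (hT : 0 < T) {f : PathSpace Y T} (hf : f ∈ Qspace Y T)
    (hseq : ∀ u : ℕ → Y, CauchySeq u → ∃ y : Y, Tendsto u atTop (nhds y))
    (t : Set.Icc (0:ℝ) T) (ht : (t:ℝ) < T) :
    ∃ y : Y, Tendsto (UniformFun.toFun f)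
      (nhdsWithin t {s : Set.Icc (0:ℝ) T | (t:ℝ) < (s:ℝ)}) (nhds y) := by
  haveI hne : (nhdsWithin t {s : Set.Icc (0:ℝ) T | (t:ℝ) < (s:ℝ)}).NeBot :=
    neBot_right hT ht
  have hcauchy : Cauchy (Filter.map (UniformFun.toFun f)
      (nhdsWithin t {s : Set.Icc (0:ℝ) T | (t:ℝ) < (s:ℝ)})) := by
    rw [cauchy_iff]
    refine ⟨hne.map _, fun U hU => ?_⟩
    obtain ⟨W, hW, hWs, hWU⟩ := comp_symm_mem_uniformity_sets hU
    obtain ⟨g, hgQ, hg⟩ := approx_of_mem_Qspace hf hW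
    obtain ⟨n, hn, hgn⟩ := mem_Qinfty_iff.mp hgQ
    obtain ⟨i, hi1, hin, hlow, hup⟩ := exists_grid_right hT hn t.2.1 ht
    have hAl : {s : Set.Icc (0:ℝ) T | (s:ℝ) < (i:ℝ)*T/n} ∩
        {s : Set.Icc (0:ℝ) T | (t:ℝ) < (s:ℝ)} ∈
        nhdsWithin t {s : Set.Icc (0:ℝ) T | (t:ℝ) < (s:ℝ)} := by
      rw [nhdsWithin]
      exact inter_mem_inf ((isOpen_Iio.preimage continuous_subtype_val).mem_nhds hup)
        (mem_principal_self _)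
    refine ⟨_, image_mem_map hAl, ?_⟩
    rintro ⟨z, z'⟩ ⟨⟨s, hs, rfl⟩, ⟨s', hs', rfl⟩⟩
    have he : UniformFun.toFun g s = UniformFun.toFun g s' :=
      hgn i hi1 hin s s' (lt_of_le_of_lt hlow hs.2) hs.1 (lt_of_le_of_lt hlow hs'.2) hs'.1
    exact hWU (SetRel.mem_comp.2 ⟨UniformFun.toFun g s, hg s, by
      rw [he]; exact hWs.symm _ _ (hg s')⟩)
  obtain ⟨y, hy⟩ := exists_le_nhds_of_cauchy_of_seq hcauchy hseq
  exact ⟨y, hy⟩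

lemma left_limit_of_mem_Qspace (hT : 0 < T) {f : PathSpace Y T} (hf : f ∈ Qspace Y T)
    (hseq : ∀ u : ℕ → Y, CauchySeq u → ∃ y : Y, Tendsto u atTop (nhds y))
    (t : Set.Icc (0:ℝ) T) (ht : 0 < (t:ℝ)) :
    ∃ y : Y, Tendsto (UniformFun.toFun f)
      (nhdsWithin t {s : Set.Icc (0:ℝ) T | (s:ℝ) < (t:ℝ)}) (nhds y) := by
  haveI hne : (nhdsWithin t {s : Set.Icc (0:ℝ) T | (s:ℝ) < (t:ℝ)}).NeBot :=
    neBot_left hT ht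
  have hcauchy : Cauchy (Filter.map (UniformFun.toFun f)
      (nhdsWithin t {s : Set.Icc (0:ℝ) T | (s:ℝ) < (t:ℝ)})) := by
    rw [cauchy_iff]
    refine ⟨hne.map _, fun U hU => ?_⟩
    obtain ⟨W, hW, hWs, hWU⟩ := comp_symm_mem_uniformity_sets hU
    obtain ⟨g, hgQ, hg⟩ := approx_of_mem_Qspace hf hW
    obtain ⟨n, hn, hgn⟩ := mem_Qinfty_iff.mp hgQ
    obtain ⟨i, hi1, hin, hlow, hup⟩ := exists_grid_left hT hn ht t.2.2
    have hAl : {s : Set.Icc (0:ℝ) T | ((i:ℝ)-1)*T/n < (s:ℝ)} ∩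
        {s : Set.Icc (0:ℝ) T | (s:ℝ) < (t:ℝ)} ∈
        nhdsWithin t {s : Set.Icc (0:ℝ) T | (s:ℝ) < (t:ℝ)} := by
      rw [nhdsWithin]
      exact inter_mem_inf ((isOpen_Ioi.preimage continuous_subtype_val).mem_nhds hlow)
        (mem_principal_self _)
    refine ⟨_, image_mem_map hAl, ?_⟩
    rintro ⟨z, z'⟩ ⟨⟨s, hs, rfl⟩, ⟨s', hs', rfl⟩⟩
    have he : UniformFun.toFun g s = UniformFun.toFun g s' :=
      hgn i hi1 hin s s' hs.1 (lt_of_lt_of_le hs.2 hup) hs'.1 (lt_of_lt_of_le hs'.2 hup)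
    exact hWU (SetRel.mem_comp.2 ⟨UniformFun.toFun g s, hg s, by
      rw [he]; exact hWs.symm _ _ (hg s')⟩)
  obtain ⟨y, hy⟩ := exists_le_nhds_of_cauchy_of_seq hcauchy hseq
  exact ⟨y, hy⟩

lemma continuousAt_of_mem_Qspace (hT : 0 < T) {f : PathSpace Y T} (hf : f ∈ Qspace Y T)
    {r : ℝ} (hirr : Irrational r) (hr : T * r ∈ Set.Icc (0:ℝ) T) :
    ContinuousAt (UniformFun.toFun f) ⟨T * r, hr⟩ := by
  rw [ContinuousAt, Uniform.tendsto_nhds_right, Filter.tendsto_def]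
  intro U hU
  obtain ⟨W, hW, hWs, hWU⟩ := comp_symm_mem_uniformity_sets hU
  obtain ⟨g, hgQ, hg⟩ := approx_of_mem_Qspace hf hW
  obtain ⟨n, hn, hgn⟩ := mem_Qinfty_iff.mp hgQ
  have hn0 : (0:ℝ) < n := by exact_mod_cast hn
  have hng : ∀ j : ℕ, T * r ≠ (j:ℝ) * T / n := by
    intro j h
    apply Rat.not_irrational ((j:ℚ)/(n:ℚ))
    have hrn : r * n = j := by
      have h2 : T * (r * n) = T * j := by field_simp at h; linear_combination T * h
      exact mul_left_cancel₀ hT.ne' h2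
    have hrq : r = (((j:ℚ)/(n:ℚ) : ℚ) : ℝ) := by
      push_cast
      field_simp
      linarith
    rwa [← hrq]
  obtain ⟨i, hi1, hin, h1, h2⟩ := exists_open_grid hT hn hr.1 hr.2 hng
  set x : Set.Icc (0:ℝ) T := ⟨T * r, hr⟩ with hx
  have hN : Subtype.val ⁻¹' Set.Ioo (((i:ℝ)-1)*T/n) ((i:ℝ)*T/n) ∈ 𝓝 x :=
    ((isOpen_Ioo).preimage continuous_subtype_val).mem_nhds (by
      rw [Set.mem_preimage, Set.mem_Ioo]; exact ⟨h1, h2⟩)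
  refine Filter.mem_of_superset hN fun s hs => ?_
  rw [Set.mem_preimage, Set.mem_Ioo] at hs
  have he : UniformFun.toFun g s = UniformFun.toFun g x := hgn i hi1 hin s x hs.1 hs.2 h1 h2
  exact hWU (SetRel.mem_comp.2 ⟨UniformFun.toFun g x, hg x, by
    rw [← he]; exact hWs.symm _ _ (hg s)⟩)

end Forward
section Backward

variable {Y : Type*} [UniformSpace Y] {T : ℝ}

lemma mem_Qspace_of_regulated (hT : 0 < T) {f : PathSpace Y T}
    (hf1 : ∀ r : ℝ, Irrational r → ∀ (hr : T * r ∈ Set.Icc (0 : ℝ) T),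
      ContinuousAt (UniformFun.toFun f) ⟨T * r, hr⟩)
    (hf2 : ∀ t : Set.Icc (0 : ℝ) T, (t : ℝ) < T → ∃ y : Y,
      Tendsto (UniformFun.toFun f)
        (nhdsWithin t {s : Set.Icc (0 : ℝ) T | (t : ℝ) < (s : ℝ)}) (nhds y))
    (hf3 : ∀ t : Set.Icc (0 : ℝ) T, 0 < (t : ℝ) → ∃ y : Y,
      Tendsto (UniformFun.toFun f)
        (nhdsWithin t {s : Set.Icc (0 : ℝ) T | (s : ℝ) < (t : ℝ)}) (nhds y)) :
    f ∈ Qspace Y T := by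
  classical
  set F := UniformFun.toFun f with hF
  rw [Qspace, mem_closure_iff_nhds_basis (UniformFun.hasBasis_nhds (Set.Icc (0:ℝ) T) Y f)]
  intro U hU
  obtain ⟨W, hW, hWs, hWU⟩ := comp_symm_mem_uniformity_sets hU
  -- the set of "good" points, where oscillation is controlled in a two-sided neighborhood
  set Good : Set (Set.Icc (0:ℝ) T) := {t | ∃ δ > 0, ∀ s s' : Set.Icc (0:ℝ) T,
    dist s t < δ → dist s' t < δ → (F s, F s') ∈ SetRel.comp W W} with hGoodDef
  -- Step A: bad points are rational multiples of T
  have hBrat : ∀ t : Set.Icc (0:ℝ) T, t ∉ Good → ∃ q : ℚ, (t:ℝ) = T * q := by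
    intro t ht
    by_contra hq
    push_neg at hq
    have hirr : Irrational ((t:ℝ)/T) := by
      rw [Irrational]
      rintro ⟨q, hq'⟩
      refine hq q ?_
      rw [eq_div_iff hT.ne'] at hq'
      linarith
    have htt : T * ((t:ℝ)/T) = (t:ℝ) := by field_simp
    have hmem : T * ((t:ℝ)/T) ∈ Set.Icc (0:ℝ) T := by rw [htt]; exact t.2
    have hc := hf1 _ hirr hmem
    have he : (⟨T * ((t:ℝ)/T), hmem⟩ : Set.Icc (0:ℝ) T) = t := Subtype.ext htt
    rw [he] at hc
    have hb : F ⁻¹' (UniformSpace.ball (F t) W) ∈ 𝓝 t :=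
      hc (UniformSpace.ball_mem_nhds _ hW)
    obtain ⟨ε, hε, hsub⟩ := Metric.mem_nhds_iff.mp hb
    exact ht ⟨ε, hε, fun s s' hs hs' => SetRel.mem_comp.2 ⟨F t,
      hWs.symm _ _ (hsub (Metric.mem_ball.mpr hs)), hsub (Metric.mem_ball.mpr hs')⟩⟩
  -- Step B: oscillation radii
  have hosc : ∀ t : Set.Icc (0:ℝ) T, ∃ δ, 0 < δ ∧
      ((∀ s s' : Set.Icc (0:ℝ) T, (t:ℝ) < s → (s:ℝ) < t + δ →
        (t:ℝ) < s' → (s':ℝ) < t + δ → (F s, F s') ∈ SetRel.comp W W) ∧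
      (∀ s s' : Set.Icc (0:ℝ) T, (t:ℝ) - δ < s → (s:ℝ) < t →
        (t:ℝ) - δ < s' → (s':ℝ) < t → (F s, F s') ∈ SetRel.comp W W) ∧
      (t ∈ Good → ∀ s s' : Set.Icc (0:ℝ) T,
        dist s t < δ → dist s' t < δ → (F s, F s') ∈ SetRel.comp W W)) := by
    intro t
    obtain ⟨δp, hδp, hp⟩ := right_osc hT hf2 hW hWs t
    obtain ⟨δm, hδm, hm⟩ := left_osc hT hf3 hW hWs t
    by_cases hB : t ∈ Good
    · obtain ⟨δB, hδB, hB'⟩ := hB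
      have k1 : min (min δp δm) δB ≤ δp := le_trans (min_le_left _ _) (min_le_left _ _)
      have k2 : min (min δp δm) δB ≤ δm := le_trans (min_le_left _ _) (min_le_right _ _)
      have k3 : min (min δp δm) δB ≤ δB := min_le_right _ _
      refine ⟨min (min δp δm) δB, lt_min (lt_min hδp hδm) hδB, ?_, ?_, ?_⟩
      · exact fun s s' h1 h2 h3 h4 => hp s s' h1 (by linarith) h3 (by linarith)
      · exact fun s s' h1 h2 h3 h4 => hm s s' (by linarith) h2 (by linarith) h4
      · exact fun _ s s' h1 h2 => hB' s s' (by linarith) (by linarith)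
    · have k1 : min δp δm ≤ δp := min_le_left _ _
      have k2 : min δp δm ≤ δm := min_le_right _ _
      refine ⟨min δp δm, lt_min hδp hδm, ?_, ?_, fun hB' => absurd hB' hB⟩
      · exact fun s s' h1 h2 h3 h4 => hp s s' h1 (by linarith) h3 (by linarith)
      · exact fun s s' h1 h2 h3 h4 => hm s s' (by linarith) h2 (by linarith) h4
  choose δo hδo hR hL hG using hosc
  -- Step C: the bad set is finite
  have hgood : ∀ t : Set.Icc (0:ℝ) T, ∃ ρ, 0 < ρ ∧
      ∀ u : Set.Icc (0:ℝ) T, dist u t < ρ → u ≠ t → u ∈ Good := by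
    intro t
    refine ⟨δo t, hδo t, fun u hu hne => ?_⟩
    have hne' : (u:ℝ) ≠ (t:ℝ) := fun h => hne (Subtype.ext h)
    rw [Subtype.dist_eq, Real.dist_eq, abs_lt] at hu
    rcases hne'.lt_or_gt with h | h
    · refine ⟨min ((t:ℝ) - u) (u - ((t:ℝ) - δo t)), lt_min (by linarith) (by linarith), ?_⟩
      intro s s' hs hs'
      rw [Subtype.dist_eq, Real.dist_eq, abs_lt] at hs hs'
      have k1 := min_le_left ((t:ℝ) - u) (u - ((t:ℝ) - δo t))
      have k2 := min_le_right ((t:ℝ) - u) (u - ((t:ℝ) - δo t))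
      exact hL t s s' (by linarith) (by linarith) (by linarith) (by linarith)
    · refine ⟨min ((u:ℝ) - t) (((t:ℝ) + δo t) - u), lt_min (by linarith) (by linarith), ?_⟩
      intro s s' hs hs'
      rw [Subtype.dist_eq, Real.dist_eq, abs_lt] at hs hs'
      have k1 := min_le_left ((u:ℝ) - t) (((t:ℝ) + δo t) - u)
      have k2 := min_le_right ((u:ℝ) - t) (((t:ℝ) + δo t) - u)
      exact hR t s s' (by linarith) (by linarith) (by linarith) (by linarith)
  choose ρ hρ hρG using hgood
  haveI : CompactSpace (Set.Icc (0:ℝ) T) := isCompact_iff_compactSpace.mp isCompact_Icc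
  obtain ⟨sfin, hcov⟩ := isCompact_univ.elim_finite_subcover
    (fun t : Set.Icc (0:ℝ) T => Metric.ball t (ρ t))
    (fun t => Metric.isOpen_ball)
    (fun x _ => Set.mem_iUnion.2 ⟨x, Metric.mem_ball_self (hρ x)⟩)
  have hBsub : {t : Set.Icc (0:ℝ) T | t ∉ Good} ⊆ ↑sfin := by
    intro b hb
    obtain ⟨t, htfin, hbt⟩ := Set.mem_iUnion₂.mp (hcov (Set.mem_univ b))
    by_cases hbe : b = t
    · subst hbe; exact htfin
    · exact absurd (hρG t b (Metric.mem_ball.mp hbt) hbe) hb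
  have hBfin : {t : Set.Icc (0:ℝ) T | t ∉ Good}.Finite :=
    Set.Finite.subset sfin.finite_toSet hBsub
  -- Step D: denominators
  set den : Set.Icc (0:ℝ) T → ℕ := fun b =>
    if h : ∃ q : ℚ, (b:ℝ) = T * q then (Classical.choose h).den else 1 with hdenDef
  set d : ℕ := ∏ b ∈ hBfin.toFinset, den b with hdDef
  have hd1 : 0 < d := Finset.prod_pos (fun b _ => by
    simp only [hdenDef]
    split
    · exact Rat.pos _
    · exact one_pos)
  -- Step E: Lebesgue number
  obtain ⟨δ₀, hδ₀, hleb⟩ := lebesgue_number_lemma_of_metric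
    (c := fun t : Set.Icc (0:ℝ) T => Metric.ball t (δo t)) isCompact_univ
    (fun t => Metric.isOpen_ball)
    (fun x _ => Set.mem_iUnion.2 ⟨x, Metric.mem_ball_self (hδo x)⟩)
  -- Step F: choose n
  set n : ℕ := d * (⌈T / δ₀⌉₊ + 1) with hnDef
  have hn1 : 1 ≤ n := Nat.one_le_iff_ne_zero.mpr (Nat.mul_ne_zero hd1.ne' (Nat.succ_ne_zero _))
  have hn0 : (0:ℝ) < n := by exact_mod_cast hn1
  have hfine : T / n < δ₀ := by
    rw [div_lt_iff₀ hn0]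
    have h1 : T / δ₀ < ((⌈T / δ₀⌉₊ + 1 : ℕ) : ℝ) := by
      push_cast
      linarith [Nat.le_ceil (T / δ₀)]
    have h2 : ((⌈T / δ₀⌉₊ + 1 : ℕ) : ℝ) ≤ n := by
      exact_mod_cast Nat.le_mul_of_pos_left _ hd1
    have h3 : T / δ₀ < n := lt_of_lt_of_le h1 h2
    have h4 : T = (T/δ₀) * δ₀ := by field_simp
    nlinarith
  -- Step G: bad points are grid points
  have hBgrid : ∀ b : Set.Icc (0:ℝ) T, b ∉ Good → ∃ j : ℕ, (b:ℝ) = (j:ℝ) * T / n := by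
    intro b hb
    have hex : ∃ q : ℚ, (b:ℝ) = T * q := hBrat b hb
    have hq' : (b:ℝ) = T * (Classical.choose hex : ℚ) := Classical.choose_spec hex
    set q' : ℚ := Classical.choose hex with hq'Def
    have hdvd : q'.den ∣ n := by
      have h1 : den b = q'.den := by simp only [hdenDef]; rw [dif_pos hex]
      have h2 : den b ∣ d := Finset.dvd_prod_of_mem den (hBfin.mem_toFinset.mpr hb)
      rw [h1] at h2
      exact h2.trans (dvd_mul_right _ _)
    obtain ⟨m, hm⟩ := hdvd
    have hm0 : m ≠ 0 := by
      rintro rfl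
      rw [Nat.mul_zero] at hm
      omega
    have hq0 : 0 ≤ q' := by
      by_contra hneg
      push_neg at hneg
      have : (q':ℝ) < 0 := by exact_mod_cast hneg
      nlinarith [b.2.1]
    refine ⟨q'.num.toNat * m, ?_⟩
    have e1 : ((q'.den : ℕ) : ℝ) ≠ 0 := Nat.cast_ne_zero.mpr q'.den_nz
    have e2 : ((m : ℕ) : ℝ) ≠ 0 := Nat.cast_ne_zero.mpr hm0
    have hnum : ((q'.num.toNat : ℕ) : ℝ) = ((q'.num : ℤ) : ℝ) := by
      exact_mod_cast Int.toNat_of_nonneg (Rat.num_nonneg.mpr hq0)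
    rw [hq', hm]
    push_cast [Rat.cast_def]
    rw [hnum]
    field_simp
  -- Step H: the approximating step function
  set mid : Set.Icc (0:ℝ) T → ℝ := fun x =>
    (2 * (⌈(x:ℝ) * n / T⌉₊ : ℝ) - 1) * T / (2*n) with hmidDef
  set Gfun : Set.Icc (0:ℝ) T → Y := fun x =>
    if _ : ∃ j : ℕ, (x:ℝ) = (j:ℝ) * T / n then F x
    else F (Set.projIcc 0 T hT.le (mid x)) with hGfunDef
  refine ⟨UniformFun.ofFun Gfun, ?_, ?_⟩
  · -- membership in Qinfty
    refine mem_Qinfty_iff.mpr ⟨n, hn1, ?_⟩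
    intro i hi1 hin s t hs1 hs2 ht1 ht2
    have hsng : ¬∃ j : ℕ, (s:ℝ) = (j:ℝ) * T / n := fun ⟨j, hj⟩ =>
      grid_not_mem_open hT hn1 hj hs1 hs2
    have htng : ¬∃ j : ℕ, (t:ℝ) = (j:ℝ) * T / n := fun ⟨j, hj⟩ =>
      grid_not_mem_open hT hn1 hj ht1 ht2
    show Gfun s = Gfun t
    simp only [hGfunDef]
    rw [dif_neg hsng, dif_neg htng]
    simp only [hmidDef]
    rw [ceil_eq_of_mem_open hT hn1 hi1 hs1 hs2, ceil_eq_of_mem_open hT hn1 hi1 ht1 ht2]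
  · -- closeness
    show ∀ x : Set.Icc (0:ℝ) T, (F x, Gfun x) ∈ U
    intro x
    by_cases hx : ∃ j : ℕ, (x:ℝ) = (j:ℝ) * T / n
    · simp only [hGfunDef]
      rw [dif_pos hx]
      exact refl_mem_uniformity hU
    · have hng : ∀ j : ℕ, (x:ℝ) ≠ (j:ℝ)*T/n := by push_neg at hx; exact hx
      obtain ⟨i, hi1, hin, h1, h2⟩ := exists_open_grid hT hn1 x.2.1 x.2.2 hng
      have hceilx : ⌈(x:ℝ) * n / T⌉₊ = i := ceil_eq_of_mem_open hT hn1 hi1 h1 h2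
      have hmidx : mid x = (2*(i:ℝ) - 1) * T / (2*n) := by
        simp only [hmidDef]
        rw [hceilx]
      have h2n0 : (0:ℝ) < 2*n := by positivity
      have hi1R : (1:ℝ) ≤ i := by exact_mod_cast hi1
      have hinR : (i:ℝ) ≤ n := by exact_mod_cast hin
      have hc1 : ((i:ℝ)-1)*T/n < (2*(i:ℝ) - 1) * T / (2*n) := by
        rw [div_lt_div_iff₀ hn0 h2n0]; nlinarith
      have hc2 : (2*(i:ℝ) - 1) * T / (2*n) < (i:ℝ)*T/n := by
        rw [div_lt_div_iff₀ h2n0 hn0]; nlinarith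
      have hlow0 : (0:ℝ) ≤ ((i:ℝ)-1)*T/n := by
        apply div_nonneg _ hn0.le
        nlinarith
      have hupT : (i:ℝ)*T/n ≤ T := by
        rw [div_le_iff₀ hn0]; nlinarith
      have hcI : (2*(i:ℝ) - 1) * T / (2*n) ∈ Set.Icc (0:ℝ) T :=
        ⟨le_trans hlow0 hc1.le, le_trans hc2.le hupT⟩
      have hlen : (i:ℝ)*T/n - ((i:ℝ)-1)*T/n = T/n := by ring
      set x' : Set.Icc (0:ℝ) T := Set.projIcc 0 T hT.le (mid x) with hx'Def
      have hx'c : (x' : ℝ) = (2*(i:ℝ) - 1) * T / (2*n) := by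
        rw [hx'Def, hmidx, Set.projIcc_of_mem hT.le hcI]
      obtain ⟨t, ht⟩ := hleb x (Set.mem_univ x)
      have hdx : dist x t < δo t := Metric.mem_ball.mp (ht (Metric.mem_ball_self hδ₀))
      have hdx' : dist x' t < δo t := Metric.mem_ball.mp (ht (by
        rw [Metric.mem_ball, Subtype.dist_eq, Real.dist_eq, hx'c, abs_lt]
        constructor <;> linarith))
      simp only [hGfunDef]
      rw [dif_neg hx]
      apply hWU
      by_cases hBt : t ∈ Good
      · exact hG t hBt x x' hdx hdx'
      · obtain ⟨j, hj⟩ := hBgrid t hBt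
        have hdxR : -(δo t) < (x:ℝ) - t ∧ (x:ℝ) - t < δo t := by
          rw [Subtype.dist_eq, Real.dist_eq, abs_lt] at hdx
          exact hdx
        have hdx'R : -(δo t) < (2*(i:ℝ) - 1) * T / (2*n) - t ∧
            (2*(i:ℝ) - 1) * T / (2*n) - t < δo t := by
          rw [Subtype.dist_eq, Real.dist_eq, hx'c, abs_lt] at hdx'
          exact hdx'
        have howl : (t:ℝ) ≤ ((i:ℝ)-1)*T/n ∨ (i:ℝ)*T/n ≤ (t:ℝ) := by
          by_contra hcon
          push_neg at hcon
          exact grid_not_mem_open hT hn1 hj hcon.1 hcon.2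
        rcases howl with hle | hge
        · exact hR t x x' (lt_of_le_of_lt hle h1) (by linarith [hdxR.2])
            (by rw [hx'c]; exact lt_of_le_of_lt hle hc1)
            (by rw [hx'c]; linarith [hdx'R.2])
        · exact hL t x x' (by linarith [hdxR.1]) (lt_of_lt_of_le h2 hge)
            (by rw [hx'c]; linarith [hdx'R.1])
            (by rw [hx'c]; exact lt_of_lt_of_le hc2 hge)

end Backward

/-- If `Y` is sequentially complete, `Q([0,T];Y)` coincides with the set of functions that
are continuous at every irrational multiple of `T` in `[0,T]`, have right limits on `[0,T)`
and left limits on `(0,T]`. -/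
theorem Qspace_eq_of_seqComplete {Y : Type*} [AddCommGroup Y] [Module ℝ Y]
    [UniformSpace Y] [IsUniformAddGroup Y] [ContinuousSMul ℝ Y] [LocallyConvexSpace ℝ Y]
    [T2Space Y] (T : ℝ) (hT : 0 < T)
    (hseq : ∀ u : ℕ → Y, CauchySeq u → ∃ y : Y, Tendsto u atTop (nhds y)) :
    Qspace Y T =
      {f : PathSpace Y T |
        (∀ r : ℝ, Irrational r → ∀ (hr : T * r ∈ Set.Icc (0 : ℝ) T),
          ContinuousAt (UniformFun.toFun f) ⟨T * r, hr⟩) ∧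
        (∀ t : Set.Icc (0 : ℝ) T, (t : ℝ) < T → ∃ y : Y,
          Tendsto (UniformFun.toFun f)
            (nhdsWithin t {s : Set.Icc (0 : ℝ) T | (t : ℝ) < (s : ℝ)}) (nhds y)) ∧
        (∀ t : Set.Icc (0 : ℝ) T, 0 < (t : ℝ) → ∃ y : Y,
          Tendsto (UniformFun.toFun f)
            (nhdsWithin t {s : Set.Icc (0 : ℝ) T | (s : ℝ) < (t : ℝ)}) (nhds y))} := by
  ext f
  constructor
  · intro hf
    exact ⟨fun r hirr hr => continuousAt_of_mem_Qspace hT hf hirr hr,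
      fun t ht => right_limit_of_mem_Qspace hT hf hseq t ht,
      fun t ht => left_limit_of_mem_Qspace hT hf hseq t ht⟩
  · rintro ⟨hf1, hf2, hf3⟩
    exact mem_Qspace_of_regulated hT hf1 hf2 hf3
end
end

section
/- Suppose that every compact subset of Y is metrizable, and let M ⊆ Q([0,T];Y) be such that the set {f(t) : t ∈ [0,T], f ∈ M} is relatively compact in Y. Then M, equipped with the topology of uniform convergence, is metrizable. -/
open Filter Topology Set

noncomputable section

open scoped Uniformity

/-- If every compact subset of `Y` is metrizable and the set of all values of members of
`M ⊆ Q([0,T];Y)` is relatively compact in `Y`, then `M`, with the topology of uniform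
convergence, is metrizable. -/
theorem metrizable_of_values_relatively_compact {Y : Type*} [AddCommGroup Y] [Module ℝ Y]
    [UniformSpace Y] [IsUniformAddGroup Y] [ContinuousSMul ℝ Y] [LocallyConvexSpace ℝ Y]
    [T2Space Y] (T : ℝ) (hT : 0 < T)
    (hcm : ∀ K : Set Y, IsCompact K → TopologicalSpace.MetrizableSpace K)
    (M : Set (PathSpace Y T)) (hMQ : M ⊆ Qspace Y T)
    (hval : IsCompact (closure {y : Y | ∃ f ∈ M, ∃ t : Set.Icc (0 : ℝ) T,
      UniformFun.toFun f t = y})) :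
    TopologicalSpace.MetrizableSpace M := by
  set K : Set Y := closure {y : Y | ∃ f ∈ M, ∃ t : Set.Icc (0 : ℝ) T,
      UniformFun.toFun f t = y} with hK
  have hKval : ∀ f : M, ∀ t : Set.Icc (0 : ℝ) T,
      UniformFun.toFun (f : PathSpace Y T) t ∈ K :=
    fun f t => subset_closure ⟨f, f.2, t, rfl⟩
  haveI : CompactSpace K := isCompact_iff_compactSpace.mp hval
  haveI : TopologicalSpace.MetrizableSpace K := hcm K hval
  -- the subtype uniformity on K is countably generated
  have hKcg : IsCountablyGenerated (𝓤 K) := by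
    obtain ⟨m, hm⟩ : ∃ m : MetricSpace K, m.toUniformSpace.toTopologicalSpace =
        (instTopologicalSpaceSubtype : TopologicalSpace K) :=
      ⟨TopologicalSpace.metrizableSpaceMetric K, rfl⟩
    have heq : (instUniformSpaceSubtype : UniformSpace K) = m.toUniformSpace :=
      unique_uniformity_of_compact rfl hm
    rw [show (𝓤 K) = @uniformity K m.toUniformSpace by rw [heq]]
    letI := m; exact EMetric.instIsCountablyGeneratedUniformity
  -- basis of the uniformity on K
  have hbK : (𝓤 K).HasBasis (· ∈ 𝓤 Y)
      (fun V => (fun q : K × K => ((q.1 : Y), (q.2 : Y))) ⁻¹' V) := by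
    rw [uniformity_subtype]
    exact (𝓤 Y).basis_sets.comap _
  obtain ⟨u, hu, hbasis⟩ := hbK.exists_antitone_subbasis
  -- basis of the uniformity on M
  have hbM : (𝓤 M).HasBasis (· ∈ 𝓤 Y)
      (fun V => (fun q : M × M =>
        ((q.1 : PathSpace Y T), (q.2 : PathSpace Y T))) ⁻¹'
          UniformFun.gen (Set.Icc (0 : ℝ) T) Y V) := by
    rw [uniformity_subtype]
    exact (UniformFun.hasBasis_uniformity _ _).comap _
  have hbM' : (𝓤 M).HasBasis (fun _ : ℕ => True)
      (fun n => (fun q : M × M =>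
        ((q.1 : PathSpace Y T), (q.2 : PathSpace Y T))) ⁻¹'
          UniformFun.gen (Set.Icc (0 : ℝ) T) Y (u n)) := by
    refine hbM.to_hasBasis (fun V hV => ?_) (fun n _ => ⟨u n, hu n, subset_rfl⟩)
    have hVK : (fun q : K × K => ((q.1 : Y), (q.2 : Y))) ⁻¹' V ∈ 𝓤 K :=
      hbK.mem_of_mem hV
    obtain ⟨n, hn⟩ := hbasis.mem_iff.mp hVK
    refine ⟨n, trivial, fun fg hfg => ?_⟩
    intro t
    have : ((⟨UniformFun.toFun (fg.1 : PathSpace Y T) t, hKval fg.1 t⟩ : K),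
        (⟨UniformFun.toFun (fg.2 : PathSpace Y T) t, hKval fg.2 t⟩ : K)) ∈
        (fun q : K × K => ((q.1 : Y), (q.2 : Y))) ⁻¹' u n := hfg t
    exact hn this
  haveI : IsCountablyGenerated (𝓤 M) := hbM'.isCountablyGenerated
  haveI : T0Space M := inferInstance
  exact UniformSpace.metrizableSpace
end
end

section
/- Let K be a compact subset of Y, let n ∈ ℕ, τ = T/n, t_i = iτ, and let C_n([0,T];K) be the set of functions f : [0,T] → K satisfying f(t) = ((t − t_{i−1})/τ) f(t_i) + ((t_i − t)/τ) f(t_{i−1}) for all t ∈ [t_{i−1}, t_i] and every i ∈ {1,…,n} (i.e. f is affine on each partition interval with nodal values in K). Then C_n([0,T];K) is a compact subset of C([0,T];Y) with the topology of uniform convergence. -/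
open Filter Topology Set

noncomputable section

/-- `C_n([0,T];K)`: functions `[0,T] → K` that are affine on each partition interval
`[t_{i-1}, t_i]`, `t_i = i·(T/n)`, with values in `K`. -/
def CnK (Y : Type*) [AddCommGroup Y] [Module ℝ Y] [UniformSpace Y] (T : ℝ) (n : ℕ)
    (K : Set Y) : Set (PathSpace Y T) :=
  {f | (∀ t : Set.Icc (0 : ℝ) T, UniformFun.toFun f t ∈ K) ∧
    (∀ i : ℕ, 1 ≤ i → i ≤ n →
      ∀ (h1 : ((i : ℝ) - 1) * (T / n) ∈ Set.Icc (0 : ℝ) T)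
        (h2 : (i : ℝ) * (T / n) ∈ Set.Icc (0 : ℝ) T),
      ∀ t : Set.Icc (0 : ℝ) T,
        ((i : ℝ) - 1) * (T / n) ≤ (t : ℝ) → (t : ℝ) ≤ (i : ℝ) * (T / n) →
        UniformFun.toFun f t =
          (((t : ℝ) - ((i : ℝ) - 1) * (T / n)) / (T / n)) •
              UniformFun.toFun f ⟨(i : ℝ) * (T / n), h2⟩ +
            (((i : ℝ) * (T / n) - (t : ℝ)) / (T / n)) •
              UniformFun.toFun f ⟨((i : ℝ) - 1) * (T / n), h1⟩)}

namespace PAaux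

/-- clamped partition index of `t`. -/
def idx (T : ℝ) (n : ℕ) (t : ℝ) : ℕ := min n (max 1 ⌈t / (T / n)⌉₊)

lemma idx_le (T : ℝ) (n : ℕ) (t : ℝ) : idx T n t ≤ n := min_le_left _ _

lemma one_le_idx {n : ℕ} (hn : 1 ≤ n) (T t : ℝ) : 1 ≤ idx T n t :=
  le_min hn (le_max_left _ _)

variable {T : ℝ} {n : ℕ}

lemma tau_pos (hT : 0 < T) (hn : 1 ≤ n) : 0 < T / n :=
  div_pos hT (by exact_mod_cast hn)

lemma idx_bracket (hT : 0 < T) (hn : 1 ≤ n) {t : ℝ} (ht : t ∈ Set.Icc (0:ℝ) T) :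
    ((idx T n t : ℝ) - 1) * (T / n) ≤ t ∧ t ≤ (idx T n t : ℝ) * (T / n) := by
  have hτ : 0 < T / n := tau_pos hT hn
  set c := ⌈t / (T / n)⌉₊ with hc
  have hx0 : 0 ≤ t / (T / n) := div_nonneg ht.1 hτ.le
  have hcn : c ≤ n := by
    rw [hc, Nat.ceil_le]
    rw [div_le_iff₀ hτ]
    calc t ≤ T := ht.2
    _ = n * (T / n) := by field_simp
  have hidx : idx T n t = max 1 c := min_eq_right (max_le hn hcn)
  rcases Nat.eq_zero_or_pos c with h0 | h1
  · have ht0 : t ≤ 0 := by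
      have h := (Nat.ceil_eq_zero (R := ℝ)).mp h0
      have heq : t = (t / (T / n)) * (T / n) := by field_simp
      nlinarith
    have ht0' : t = 0 := le_antisymm ht0 ht.1
    rw [hidx, h0]
    norm_num [ht0']
    exact hτ.le
  · have : max 1 c = c := max_eq_right h1
    rw [hidx, this]
    constructor
    · have : (c : ℝ) < t / (T / n) + 1 := by
        rw [hc]; exact Nat.ceil_lt_add_one hx0
      have h2 : (c : ℝ) - 1 < t / (T / n) := by linarith
      nlinarith [(lt_div_iff₀ hτ).mp (by linarith : ((c:ℝ) - 1) < t / (T/n))]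
    · have : t / (T / n) ≤ c := Nat.le_ceil _
      calc t = (t / (T/n)) * (T/n) := by field_simp
      _ ≤ c * (T/n) := by nlinarith

variable {Y : Type*} [AddCommGroup Y] [Module ℝ Y]

/-- Piecewise affine interpolation of nodal values `v`. -/
def interpFun (T : ℝ) (n : ℕ) (v : Fin (n+1) → Y) (t : ℝ) : Y :=
  ((t - ((idx T n t : ℝ) - 1) * (T / n)) / (T / n)) •
      v ⟨idx T n t, Nat.lt_succ_of_le (idx_le T n t)⟩ +
    (((idx T n t : ℝ) * (T / n) - t) / (T / n)) •
      v ⟨idx T n t - 1, Nat.lt_succ_of_le (le_trans (Nat.sub_le _ _) (idx_le T n t))⟩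

/-- affine combination of the nodal values `v (j-1), v j` with weights determined by `t`. -/
def nodeComb (T : ℝ) (n : ℕ) (v : Fin (n+1) → Y) (j : ℕ) (hj : j ≤ n) (t : ℝ) : Y :=
  ((t - ((j : ℝ) - 1) * (T / n)) / (T / n)) • v ⟨j, Nat.lt_succ_of_le hj⟩ +
    (((j : ℝ) * (T / n) - t) / (T / n)) •
      v ⟨j - 1, Nat.lt_succ_of_le (le_trans (Nat.sub_le _ _) hj)⟩

lemma interpFun_def (T : ℝ) (n : ℕ) (v : Fin (n+1) → Y) (t : ℝ) :
    interpFun T n v t = nodeComb T n v (idx T n t) (idx_le T n t) t := rfl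

lemma nodeComb_right (hT : 0 < T) (hn : 1 ≤ n) (v : Fin (n+1) → Y) {j : ℕ} (hj : j ≤ n)
    (ht : t = (j : ℝ) * (T / n)) :
    nodeComb T n v j hj t = v ⟨j, Nat.lt_succ_of_le hj⟩ := by
  have hτ : (T / n) ≠ 0 := (tau_pos hT hn).ne'
  subst ht
  unfold nodeComb
  rw [show ((j:ℝ) * (T/n) - ((j:ℝ) - 1) * (T/n)) / (T/n) = 1 by field_simp; ring,
    show ((j:ℝ) * (T/n) - (j:ℝ) * (T/n)) / (T/n) = 0 by simp]
  simp

lemma nodeComb_left (hT : 0 < T) (hn : 1 ≤ n) (v : Fin (n+1) → Y) {j : ℕ} (hj : j ≤ n)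
    (ht : t = ((j : ℝ) - 1) * (T / n)) :
    nodeComb T n v j hj t =
      v ⟨j - 1, Nat.lt_succ_of_le (le_trans (Nat.sub_le _ _) hj)⟩ := by
  have hτ : (T / n) ≠ 0 := (tau_pos hT hn).ne'
  subst ht
  unfold nodeComb
  rw [show (((j:ℝ) - 1) * (T/n) - ((j:ℝ) - 1) * (T/n)) / (T/n) = 0 by simp,
    show ((j:ℝ) * (T/n) - ((j:ℝ) - 1) * (T/n)) / (T/n) = 1 by field_simp; ring]
  simp

/-- The interpolation formula does not depend on the choice of valid interval index. -/
lemma interpFun_eq (hT : 0 < T) (hn : 1 ≤ n) (v : Fin (n+1) → Y) {t : ℝ} {j : ℕ}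
    (hj1 : 1 ≤ j) (hjn : j ≤ n)
    (hl : ((j : ℝ) - 1) * (T / n) ≤ t) (hu : t ≤ (j : ℝ) * (T / n)) :
    interpFun T n v t = nodeComb T n v j hjn t := by
  have hτ : 0 < T / n := tau_pos hT hn
  have ht : t ∈ Set.Icc (0:ℝ) T := by
    constructor
    · have h1 : (1:ℝ) ≤ (j:ℝ) := by exact_mod_cast hj1
      nlinarith
    · have hjn' : (j : ℝ) ≤ n := by exact_mod_cast hjn
      have h2 : (j : ℝ) * (T / n) ≤ n * (T / n) := by nlinarith
      have hTn : (n : ℝ) * (T / n) = T := by field_simp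
      linarith
  rw [interpFun_def]
  set i := idx T n t with hi
  have hi1 : 1 ≤ i := one_le_idx hn T t
  have hin : i ≤ n := idx_le T n t
  obtain ⟨hbl, hbu⟩ := idx_bracket hT hn ht
  rw [← hi] at hbl hbu
  rcases lt_trichotomy i j with hij | hij | hij
  · -- t = i * τ = (j-1) * τ, and j = i + 1
    have h1 : (i : ℝ) * (T / n) ≤ ((j : ℝ) - 1) * (T / n) := by
      have : (i : ℝ) + 1 ≤ j := by exact_mod_cast hij
      nlinarith
    have ht_eq : t = (i : ℝ) * (T / n) := le_antisymm hbu (le_trans h1 hl)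
    have hji : j = i + 1 := by
      have h2 : ((j : ℝ) - 1) * (T / n) ≤ (i:ℝ) * (T / n) := ht_eq ▸ hl
      have h3 : (j : ℝ) - 1 ≤ i := by nlinarith
      have h4 : j ≤ i + 1 := by exact_mod_cast (by linarith : (j:ℝ) ≤ (i:ℝ) + 1)
      omega
    have ht_eq' : t = ((j : ℝ) - 1) * (T / n) := by
      rw [ht_eq, hji]; push_cast; ring
    rw [nodeComb_right hT hn v hin ht_eq, nodeComb_left hT hn v hjn ht_eq']
    exact congrArg v (Fin.ext (show i = j - 1 by omega))
  · subst hij; rfl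
  · -- t = j * τ = (i-1) * τ, and i = j + 1
    have h1 : (j : ℝ) * (T / n) ≤ ((i : ℝ) - 1) * (T / n) := by
      have : (j : ℝ) + 1 ≤ i := by exact_mod_cast hij
      nlinarith
    have ht_eq : t = (j : ℝ) * (T / n) := le_antisymm hu (le_trans h1 hbl)
    have hji : i = j + 1 := by
      have h2 : ((i : ℝ) - 1) * (T / n) ≤ (j:ℝ) * (T / n) := ht_eq ▸ hbl
      have h3 : (i : ℝ) - 1 ≤ j := by nlinarith
      have h4 : i ≤ j + 1 := by exact_mod_cast (by linarith : (i:ℝ) ≤ (j:ℝ) + 1)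
      omega
    have ht_eq' : t = ((i : ℝ) - 1) * (T / n) := by
      rw [ht_eq, hji]; push_cast; ring
    rw [nodeComb_left hT hn v hin ht_eq', nodeComb_right hT hn v hjn ht_eq]
    exact congrArg v (Fin.ext (show i - 1 = j by omega))

lemma node_mem (hT : 0 < T) (hn : 1 ≤ n) {k : ℕ} (hk : k ≤ n) :
    (k : ℝ) * (T / n) ∈ Set.Icc (0:ℝ) T := by
  have hτ : 0 < T / n := tau_pos hT hn
  constructor
  · positivity
  · have hk' : (k : ℝ) ≤ n := by exact_mod_cast hk
    have : (k : ℝ) * (T / n) ≤ n * (T / n) := by nlinarith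
    have hTn : (n : ℝ) * (T / n) = T := by field_simp
    linarith

/-- continuity of the interpolation in `t`. -/
lemma continuous_interpFun [TopologicalSpace Y] [IsTopologicalAddGroup Y]
    [ContinuousSMul ℝ Y] (hT : 0 < T) (hn : 1 ≤ n) (v : Fin (n+1) → Y) :
    Continuous fun t : Set.Icc (0:ℝ) T => interpFun T n v (t : ℝ) := by
  have hτ : 0 < T / n := tau_pos hT hn
  apply LocallyFinite.continuous
    (f := fun j : Fin n => (Subtype.val ⁻¹'
      Set.Icc ((j : ℝ) * (T / n)) (((j : ℝ) + 1) * (T / n)) : Set (Set.Icc (0:ℝ) T)))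
  · exact locallyFinite_of_finite _
  · ext t
    simp only [Set.mem_iUnion, Set.mem_univ, iff_true, Set.mem_preimage, Set.mem_Icc]
    set i := idx T n (t : ℝ) with hi
    have hi1 : 1 ≤ i := one_le_idx hn T _
    have hin : i ≤ n := idx_le T n _
    obtain ⟨hbl, hbu⟩ := idx_bracket hT hn t.2
    refine ⟨⟨i - 1, by omega⟩, ?_, ?_⟩
    · have : ((i - 1 : ℕ) : ℝ) = (i : ℝ) - 1 := by
        push_cast [Nat.cast_sub hi1]; ring
      rw [show (((⟨i - 1, by omega⟩ : Fin n) : ℕ) : ℝ) = (i : ℝ) - 1 from this]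
      exact hbl
    · have : (((i - 1 : ℕ) : ℝ) + 1) = (i : ℝ) := by
        push_cast [Nat.cast_sub hi1]; ring
      rw [show (((⟨i - 1, by omega⟩ : Fin n) : ℕ) : ℝ) + 1 = (i : ℝ) from this]
      exact hbu
  · exact fun j => IsClosed.preimage continuous_subtype_val isClosed_Icc
  · intro j
    have hj1 : 1 ≤ (j : ℕ) + 1 := by omega
    have hjn : (j : ℕ) + 1 ≤ n := j.2
    apply ContinuousOn.congr (f := fun t : Set.Icc (0:ℝ) T =>
      nodeComb T n v ((j : ℕ) + 1) hjn (t : ℝ))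
    · apply Continuous.continuousOn
      unfold nodeComb
      exact (((continuous_subtype_val.sub continuous_const).div_const _).smul
        continuous_const).add
        (((continuous_const.sub continuous_subtype_val).div_const _).smul continuous_const)
    · intro t ht
      simp only [Set.mem_preimage, Set.mem_Icc] at ht
      apply interpFun_eq hT hn v hj1 hjn
      · push_cast; linarith [ht.1]
      · push_cast; linarith [ht.2]

/-- continuity of the interpolation in the nodal values, into the uniform-convergence
structure. -/
lemma continuous_interp [UniformSpace Y] [IsUniformAddGroup Y] [ContinuousSMul ℝ Y]
    [LocallyConvexSpace ℝ Y] (hT : 0 < T) (hn : 1 ≤ n) :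
    Continuous fun v : Fin (n+1) → Y =>
      (UniformFun.ofFun fun t : Set.Icc (0:ℝ) T => interpFun T n v (t : ℝ) :
        UniformFun (Set.Icc (0:ℝ) T) Y) := by
  have hτ : 0 < T / n := tau_pos hT hn
  rw [continuous_iff_continuousAt]
  intro v₀
  rw [ContinuousAt,
    (UniformFun.hasBasis_nhds (Set.Icc (0:ℝ) T) Y _).tendsto_right_iff]
  intro V hV
  rw [uniformity_eq_comap_nhds_zero Y, Filter.mem_comap] at hV
  obtain ⟨W, hW, hWV⟩ := hV
  obtain ⟨W', ⟨hW'mem, hW'conv⟩, hW'W⟩ :=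
    (LocallyConvexSpace.convex_basis_zero ℝ Y).mem_iff.mp hW
  have hev : ∀ᶠ v in 𝓝 v₀, ∀ k : Fin (n+1), v k - v₀ k ∈ W' := by
    rw [Filter.eventually_all]
    intro k
    have hk : Filter.Tendsto (fun v : Fin (n+1) → Y => v k - v₀ k) (𝓝 v₀) (𝓝 0) := by
      have := ((continuous_apply k).tendsto v₀).sub (tendsto_const_nhds (x := v₀ k))
      simpa using this
    exact hk.eventually (eventually_mem_set.mpr hW'mem)
  filter_upwards [hev] with v hv
  intro t
  apply hWV
  show (fun p : Y × Y => p.2 - p.1) (_, _) ∈ W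
  apply hW'W
  set i := idx T n (t : ℝ) with hi
  have hi1 : 1 ≤ i := one_le_idx hn T _
  have hin : i ≤ n := idx_le T n _
  obtain ⟨hbl, hbu⟩ := idx_bracket hT hn t.2
  set a : ℝ := ((t : ℝ) - ((i : ℝ) - 1) * (T / n)) / (T / n) with ha
  set b : ℝ := ((i : ℝ) * (T / n) - (t : ℝ)) / (T / n) with hb
  have ha0 : 0 ≤ a := div_nonneg (by linarith) hτ.le
  have hb0 : 0 ≤ b := div_nonneg (by linarith) hτ.le
  have hab : a + b = 1 := by rw [ha, hb]; field_simp; ring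
  have key : interpFun T n v (t : ℝ) - interpFun T n v₀ (t : ℝ) =
      a • (v ⟨i, Nat.lt_succ_of_le hin⟩ - v₀ ⟨i, Nat.lt_succ_of_le hin⟩) +
        b • (v ⟨i - 1, Nat.lt_succ_of_le (le_trans (Nat.sub_le _ _) hin)⟩ -
          v₀ ⟨i - 1, Nat.lt_succ_of_le (le_trans (Nat.sub_le _ _) hin)⟩) := by
    rw [interpFun_def, interpFun_def]
    unfold nodeComb
    rw [smul_sub, smul_sub]
    simp only [← hi, ← ha, ← hb]
    abel
  simpa [key] using hW'conv (hv _) (hv _) ha0 hb0 hab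

end PAaux

/-- If `K ⊆ Y` is compact then `C_n([0,T];K)` consists of continuous functions and is a
compact subset of `C([0,T];Y)` with the topology of uniform convergence. -/
theorem piecewise_affine_compact {Y : Type*} [AddCommGroup Y] [Module ℝ Y]
    [UniformSpace Y] [IsUniformAddGroup Y] [ContinuousSMul ℝ Y] [LocallyConvexSpace ℝ Y]
    [T2Space Y] (T : ℝ) (hT : 0 < T) (n : ℕ) (hn : 1 ≤ n)
    (K : Set Y) (hK : IsCompact K) :
    (∀ f ∈ CnK Y T n K, Continuous (UniformFun.toFun f)) ∧
      IsCompact (CnK Y T n K) := by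
  have hτ : 0 < T / n := PAaux.tau_pos hT hn
  -- nodal values of a path
  let nodes : PathSpace Y T → Fin (n+1) → Y := fun f k =>
    UniformFun.toFun f ⟨(k : ℝ) * (T / n), PAaux.node_mem hT hn (Nat.lt_succ_iff.mp k.2)⟩
  -- every element of `CnK` is the interpolation of its nodal values
  have hrep : ∀ f ∈ CnK Y T n K,
      UniformFun.toFun f = fun t : Set.Icc (0:ℝ) T =>
        PAaux.interpFun T n (nodes f) (t : ℝ) := by
    intro f hf
    funext t
    set i := PAaux.idx T n (t : ℝ) with hidef
    have hi1 : 1 ≤ i := PAaux.one_le_idx hn T _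
    have hin : i ≤ n := PAaux.idx_le T n _
    obtain ⟨hbl, hbu⟩ := PAaux.idx_bracket hT hn t.2
    have hcast : ((i - 1 : ℕ) : ℝ) = (i : ℝ) - 1 := by
      push_cast [Nat.cast_sub hi1]; ring
    have h1 : ((i : ℝ) - 1) * (T / n) ∈ Set.Icc (0:ℝ) T := by
      rw [← hcast]; exact PAaux.node_mem hT hn (by omega)
    have h2 : (i : ℝ) * (T / n) ∈ Set.Icc (0:ℝ) T := PAaux.node_mem hT hn hin
    have haff := hf.2 i hi1 hin h1 h2 t hbl hbu
    rw [PAaux.interpFun_def, haff]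
    unfold PAaux.nodeComb
    congr 1
    simp only [← hidef]
    exact congrArg _ (congrArg (UniformFun.toFun f) (Subtype.ext (show ((i:ℝ) - 1) * (T / n) = ((i - 1 : ℕ) : ℝ) * (T / n) by rw [hcast])))
  constructor
  · intro f hf
    rw [hrep f hf]
    exact PAaux.continuous_interpFun hT hn (nodes f)
  · -- `CnK` is a closed subset of the compact image of `K^(n+1)` under interpolation
    have himg : IsCompact ((fun v : Fin (n+1) → Y =>
        (UniformFun.ofFun fun t : Set.Icc (0:ℝ) T => PAaux.interpFun T n v (t : ℝ) :
          PathSpace Y T)) '' (Set.univ.pi fun _ : Fin (n+1) => K)) :=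
      (isCompact_univ_pi fun _ => hK).image (PAaux.continuous_interp hT hn)
    have hsub : CnK Y T n K ⊆ (fun v : Fin (n+1) → Y =>
        (UniformFun.ofFun fun t : Set.Icc (0:ℝ) T => PAaux.interpFun T n v (t : ℝ) :
          PathSpace Y T)) '' (Set.univ.pi fun _ : Fin (n+1) => K) := by
      intro f hf
      refine ⟨nodes f, fun k _ => hf.1 _, ?_⟩
      have := hrep f hf
      exact congrArg UniformFun.ofFun this.symm
    have hev : ∀ t : Set.Icc (0:ℝ) T,
        Continuous fun f : PathSpace Y T => UniformFun.toFun f t := fun t =>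
      (UniformFun.uniformContinuous_eval Y t).continuous
    have hcl : IsClosed (CnK Y T n K) := by
      rw [CnK, Set.setOf_and]
      apply IsClosed.inter
      · rw [Set.setOf_forall]
        exact isClosed_iInter fun t => hK.isClosed.preimage (hev t)
      · simp only [Set.setOf_forall]
        refine isClosed_iInter fun i => isClosed_iInter fun _ => isClosed_iInter fun _ =>
          isClosed_iInter fun h1 => isClosed_iInter fun h2 => isClosed_iInter fun t =>
          isClosed_iInter fun _ => isClosed_iInter fun _ => ?_
        exact isClosed_eq (hev t)
          (((hev _).const_smul _).add ((hev _).const_smul _))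
    exact himg.of_isClosed_subset hcl hsub
end
end

section
/- Under the stated hypotheses, each F_n is μ_n-measurable and F is μ-measurable. If in addition all F_n and F are non-negative and for every r ∈ (0,1) the set D_r = {x ∈ K_{r,∞} : there exist x_n ∈ K_{r,n} with x_n → x and liminf_n F_n(x_n) < F(x)} satisfies μ*(D_r) = 0, where μ* is the outer measure associated with μ, then ∫_Z F dμ ≤ liminf_{n→∞} ∫_Z F_n dμ_n. -/
open Filter Topology Set MeasureTheory
open scoped ENNReal

noncomputable section

/-! ### Auxiliary lemmas -/

lemma ereal_coe_abs {a : EReal} (h : 0 ≤ a) : ((a.abs : ℝ≥0∞) : EReal) = a := by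
  rcases eq_or_lt_of_le h with h0 | h0
  · simp [← h0]
  · have := EReal.sign_mul_abs a
    rwa [_root_.sign_pos h0, SignType.coe_one, one_mul] at this

lemma urysohn_cr {Z : Type*} [TopologicalSpace Z] [CompletelyRegularSpace Z]
    {C U : Set Z} (hC : IsCompact C) (hU : IsOpen U) (hCU : C ⊆ U) :
    ∃ f : BoundedContinuousFunction Z ℝ, (∀ z, f z ∈ Set.Icc (0:ℝ) 1) ∧
      (∀ z ∈ C, f z = 1) ∧ ∀ z ∉ U, f z = 0 := by
  classical
  have key : ∀ x : C, ∃ g : Z → ℝ, Continuous g ∧ (∀ z, g z ∈ Set.Icc (0:ℝ) 1) ∧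
      g x = 1 ∧ ∀ z ∉ U, g z = 0 := by
    rintro ⟨x, hx⟩
    obtain ⟨f, cf, hfx, hfK⟩ := CompletelyRegularSpace.completely_regular x Uᶜ
      hU.isClosed_compl (by simp [hCU hx])
    refine ⟨fun z => 1 - (f z : ℝ), (continuous_const.sub
      (continuous_subtype_val.comp cf)), fun z => ?_, by simp [hfx], fun z hz => ?_⟩
    · have := (f z).2
      simp only [Set.mem_Icc] at this ⊢
      constructor <;> [linarith [this.2]; linarith [this.1]]
    · have : f z = 1 := hfK hz
      simp [this]
  choose g hgc hg01 hgx hg0 using key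
  obtain ⟨t, ht⟩ := hC.elim_finite_subcover (fun x : C => {z | (1:ℝ)/2 < g x z})
    (fun x => isOpen_lt continuous_const (hgc x))
    (fun z hz => Set.mem_iUnion.2 ⟨⟨z, hz⟩, by simp [hgx ⟨z, hz⟩]; norm_num⟩)
  set G : Z → ℝ := fun z => min 1 (2 * ∑ i ∈ t, g i z) with hG
  have hGc : Continuous G := continuous_const.min (continuous_const.mul
    (continuous_finset_sum t fun i _ => hgc i))
  have hG01 : ∀ z, G z ∈ Set.Icc (0:ℝ) 1 := by
    intro z
    constructor
    · apply le_min zero_le_one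
      have : (0:ℝ) ≤ ∑ i ∈ t, g i z := Finset.sum_nonneg fun i _ => (hg01 i z).1
      linarith
    · exact min_le_left _ _
  refine ⟨BoundedContinuousFunction.mkOfBound ⟨G, hGc⟩ 1 (fun x y => ?_), hG01, ?_, ?_⟩
  · rw [Real.dist_eq]
    have hx := hG01 x; have hy := hG01 y
    simp only [Set.mem_Icc] at hx hy
    rw [abs_le]; constructor <;> simp only [ContinuousMap.coe_mk] <;> linarith
  · intro z hz
    obtain ⟨i, hit, hiz⟩ : ∃ i ∈ t, z ∈ {w | (1:ℝ)/2 < g i w} := by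
      have := ht hz
      simpa using this
    have hsum : (1:ℝ)/2 < ∑ i ∈ t, g i z := by
      calc (1:ℝ)/2 < g i z := hiz
        _ ≤ ∑ i ∈ t, g i z := Finset.single_le_sum (fun j _ => (hg01 j z).1) hit
    show min 1 (2 * ∑ i ∈ t, g i z) = 1
    rw [min_eq_left]; linarith
  · intro z hz
    show min 1 (2 * ∑ i ∈ t, g i z) = 0
    have : ∀ i ∈ t, g i z = 0 := fun i _ => hg0 i z hz
    rw [Finset.sum_congr rfl this]
    simp

lemma open_liminf {Z : Type*} [TopologicalSpace Z] [CompletelyRegularSpace Z]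
    [MeasurableSpace Z] [BorelSpace Z]
    (μn : ℕ → Measure Z) (μ : Measure Z)
    (hμn : ∀ n, IsProbabilityMeasure (μn n)) (hμ : IsProbabilityMeasure μ)
    (hRadon : μ.InnerRegular)
    (hweak : ∀ f : BoundedContinuousFunction Z ℝ,
      Tendsto (fun n => ∫ x, f x ∂(μn n)) atTop (nhds (∫ x, f x ∂μ)))
    {V : Set Z} (hV : IsOpen V) :
    μ V ≤ Filter.atTop.liminf (fun n => μn n V) := by
  have main : ∀ C : Set Z, IsCompact C → IsClosed C → C ⊆ V →
      μ C ≤ Filter.atTop.liminf (fun n => μn n V) := by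
    intro C hC hCcl hCV
    obtain ⟨f, hf01, hfC, hfV⟩ := urysohn_cr hC hV hCV
    have hfint : ∀ (ν : Measure Z) [IsProbabilityMeasure ν], Integrable f ν := by
      intro ν _; exact f.integrable ν
    have h1 : (μ C).toReal ≤ ∫ x, f x ∂μ := by
      have : ∫ x, C.indicator (1 : Z → ℝ) x ∂μ ≤ ∫ x, f x ∂μ := by
        apply integral_mono ((integrable_indicator_iff hCcl.measurableSet).2
          (integrableOn_const (measure_ne_top _ _))) (hfint μ)
        intro x
        by_cases hx : x ∈ C
        · simp only [Set.indicator_of_mem hx, Pi.one_apply, hfC x hx]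
          exact le_rfl
        · simp only [Set.indicator_of_notMem hx]
          exact (hf01 x).1
      rwa [integral_indicator_one hCcl.measurableSet] at this
    have h2 : ∀ n, ∫ x, f x ∂(μn n) ≤ (μn n V).toReal := by
      intro n
      have : ∫ x, f x ∂(μn n) ≤ ∫ x, V.indicator (1 : Z → ℝ) x ∂(μn n) := by
        apply integral_mono (hfint (μn n)) ((integrable_indicator_iff hV.measurableSet).2
          (integrableOn_const (measure_ne_top _ _)))
        intro x
        by_cases hx : x ∈ V
        · simp only [Set.indicator_of_mem hx]
          exact (hf01 x).2
        · simp [Set.indicator_of_notMem hx, hfV x hx]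
      rwa [integral_indicator_one hV.measurableSet] at this
    have hbd : Filter.atTop.liminf (fun n => μn n V) ≤ 1 := by
      apply Filter.liminf_le_of_frequently_le'
      apply Filter.Frequently.of_forall
      intro n; exact prob_le_one
    refine ENNReal.le_of_forall_pos_le_add fun ε hε _ => ?_
    have hev : ∀ᶠ n in atTop, (μ C).toReal - ε < ∫ x, f x ∂(μn n) := by
      apply (hweak f).eventually
      apply lt_mem_nhds
      have : (0:ℝ) < ε := hε
      linarith
    have : ∀ᶠ n in atTop, μ C ≤ μn n V + ε := by
      filter_upwards [hev] with n hn
      have h3 : (μ C).toReal ≤ (μn n V).toReal + ε := by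
        have := h2 n; linarith
      calc μ C = ENNReal.ofReal (μ C).toReal := by
            rw [ENNReal.ofReal_toReal (measure_ne_top μ C)]
        _ ≤ ENNReal.ofReal ((μn n V).toReal + ε) := ENNReal.ofReal_le_ofReal h3
        _ ≤ ENNReal.ofReal (μn n V).toReal + ENNReal.ofReal ε := ENNReal.ofReal_add_le
        _ = μn n V + ε := by
            rw [ENNReal.ofReal_toReal (measure_ne_top _ V), ENNReal.ofReal_coe_nnreal]
    calc μ C ≤ Filter.atTop.liminf (fun n => μn n V + ε) :=
          Filter.le_liminf_of_le (by isBoundedDefault) this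
      _ ≤ Filter.atTop.liminf (fun n => μn n V) + ε := by
          have := liminf_add_const atTop (fun n => μn n V) (ε : ℝ≥0∞)
            (by isBoundedDefault) (by isBoundedDefault)
          rw [← this]
  by_contra hcon
  push_neg at hcon
  obtain ⟨C, hCV, hCcomp, hCgt⟩ := hV.measurableSet.exists_lt_isCompact hcon
  have h1 : IsCompact (closure C) := hCcomp.closure
  have h2 : closure C ⊆ V := hCcomp.closure_subset_of_isOpen hV hCV
  have := main (closure C) h1 isClosed_closure h2
  exact absurd (le_trans (measure_mono subset_closure) this) (not_le.2 hCgt)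

lemma nullmeas_aux {Z : Type*} [MeasurableSpace Z] (ν : Measure Z) [IsProbabilityMeasure ν]
    (f : Z → EReal) (S : ℕ → Set Z) (hSm : ∀ k, MeasurableSet (S k))
    (hmeas : ∀ k, Measurable fun x : S k => f (x : Z))
    (hν : ∀ k : ℕ, ENNReal.ofReal (1 - 1/(k+1)) ≤ ν (S k)) : NullMeasurable f ν := by
  classical
  set T := ⋃ k, S k with hT
  have key : ∀ k : ℕ, ν Tᶜ ≤ ENNReal.ofReal (1/(k+1)) := by
    intro k
    have h1 : ν Tᶜ ≤ ν (S k)ᶜ := measure_mono (compl_subset_compl.2 (subset_iUnion S k))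
    have h2 : ν (S k)ᶜ = 1 - ν (S k) := prob_compl_eq_one_sub (hSm k)
    have h3 : (1:ℝ≥0∞) - ν (S k) ≤ 1 - ENNReal.ofReal (1 - 1/(k+1)) :=
      tsub_le_tsub_left (hν k) 1
    have h4 : (1:ℝ≥0∞) - ENNReal.ofReal (1 - 1/(k+1)) = ENNReal.ofReal (1/(k+1)) := by
      rw [← ENNReal.ofReal_one, ← ENNReal.ofReal_sub]
      · norm_num
      · have hk1 : (1:ℝ)/(k+1) ≤ 1 := by
          rw [div_le_one (by positivity)]
          linarith [Nat.cast_nonneg (α := ℝ) k]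
        linarith
    calc ν Tᶜ ≤ ν (S k)ᶜ := h1
      _ = 1 - ν (S k) := h2
      _ ≤ 1 - ENNReal.ofReal (1 - 1/(k+1)) := h3
      _ = ENNReal.ofReal (1/(k+1)) := h4
  have hTnull : ν Tᶜ = 0 := by
    refine le_antisymm ?_ zero_le
    refine ENNReal.le_of_forall_pos_le_add fun ε hε _ => ?_
    obtain ⟨k, hk⟩ := exists_nat_one_div_lt (show (0:ℝ) < ε from hε)
    calc ν Tᶜ ≤ ENNReal.ofReal (1/(k+1)) := key k
      _ ≤ ENNReal.ofReal ε := ENNReal.ofReal_le_ofReal (by exact_mod_cast hk.le)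
      _ = (ε : ℝ≥0∞) := ENNReal.ofReal_coe_nnreal
      _ = 0 + ε := by rw [zero_add]
  intro B hB
  have hpre : ∀ k, MeasurableSet (S k ∩ f ⁻¹' B) := by
    intro k
    have h1 : MeasurableSet ((fun x : S k => f (x : Z)) ⁻¹' B) := hmeas k hB
    have h2 := (hSm k).subtype_image h1
    rwa [show ((fun x : S k => f (x:Z)) ⁻¹' B) = (Subtype.val ⁻¹' (f ⁻¹' B) : Set (S k)) from rfl,
      Subtype.image_preimage_coe] at h2
  have hdecomp : f ⁻¹' B = (⋃ k, S k ∩ f ⁻¹' B) ∪ (f ⁻¹' B ∩ Tᶜ) := by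
    ext x
    simp only [Set.mem_union, Set.mem_iUnion, Set.mem_inter_iff, Set.mem_compl_iff, hT,
      Set.mem_preimage]
    constructor
    · intro hx
      by_cases hxT : ∃ k, x ∈ S k
      · exact Or.inl ⟨hxT.choose, hxT.choose_spec, hx⟩
      · exact Or.inr ⟨hx, by simpa using hxT⟩
    · rintro (⟨k, _, hx⟩ | ⟨hx, _⟩) <;> exact hx
  rw [hdecomp]
  exact (MeasurableSet.iUnion hpre).nullMeasurableSet.union
    (NullMeasurableSet.of_null (measure_mono_null inter_subset_right hTnull))

lemma ennreal_le_liminf_add {u v : ℕ → ℝ≥0∞} :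
    Filter.atTop.liminf u + Filter.atTop.liminf v ≤
      Filter.atTop.liminf (fun n => u n + v n) := by
  rw [Filter.liminf_eq, Filter.liminf_eq, sSup_eq_iSup, sSup_eq_iSup]
  refine ENNReal.biSup_add_biSup_le' (p := fun a => ∀ᶠ n in atTop, a ≤ u n)
    (q := fun b => ∀ᶠ n in atTop, b ≤ v n)
    ⟨0, Filter.Eventually.of_forall fun n => zero_le⟩
    ⟨0, Filter.Eventually.of_forall fun n => zero_le⟩
    fun a ha b hb => ?_
  exact Filter.le_liminf_of_le (by isBoundedDefault)
    ((ha.and hb).mono fun n h => add_le_add h.1 h.2)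

lemma ennreal_sum_liminf_le {ι : Type*} (t : Finset ι) (f : ι → ℕ → ℝ≥0∞) :
    (∑ i ∈ t, Filter.atTop.liminf (f i)) ≤
      Filter.atTop.liminf (fun n => ∑ i ∈ t, f i n) := by
  classical
  induction t using Finset.induction_on with
  | empty => simp
  | insert a t' hnotmem ih =>
    rw [Finset.sum_insert hnotmem]
    calc Filter.atTop.liminf (f a) + ∑ i ∈ t', Filter.atTop.liminf (f i)
        ≤ Filter.atTop.liminf (f a) + Filter.atTop.liminf (fun n => ∑ i ∈ t', f i n) :=
          add_le_add_right ih _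
      _ ≤ Filter.atTop.liminf (fun n => f a n + ∑ i ∈ t', f i n) := ennreal_le_liminf_add
      _ = Filter.atTop.liminf (fun n => ∑ i ∈ insert a t', f i n) := by
          apply Filter.liminf_congr
          exact Filter.Eventually.of_forall fun n =>
            (Finset.sum_insert (f := fun i => f i n) hnotmem).symm

lemma ennreal_mul_liminf_le {c : ℝ≥0∞} {u : ℕ → ℝ≥0∞} :
    c * Filter.atTop.liminf u ≤ Filter.atTop.liminf (fun n => c * u n) := by
  calc c * Filter.atTop.liminf u
      = Filter.atTop.liminf (fun _ => c) * Filter.atTop.liminf u := by rw [Filter.liminf_const]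
    _ ≤ Filter.atTop.liminf ((fun _ => c) * u) := ENNReal.le_liminf_mul
    _ = Filter.atTop.liminf (fun n => c * u n) := rfl

lemma level_bound (s : ℝ≥0∞) : ∀ (m : ℕ) (a : ℝ≥0∞),
    min a (m * s) ≤ ∑ i ∈ Finset.range m, (if (i : ℝ≥0∞) * s < a then s else 0)
  | 0, a => by simp
  | (m+1), a => by
    by_cases h : a ≤ (m : ℝ≥0∞) * s
    · have h1 : min a (((m:ℕ)+1 : ℕ) * s) = min a ((m : ℝ≥0∞) * s) := by
        push_cast
        rw [min_eq_left (h.trans (mul_le_mul_left (by exact_mod_cast le_of_lt (Nat.lt_succ_self m)) s)),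
          min_eq_left h]
      rw [h1]
      refine (level_bound s m a).trans ?_
      exact Finset.sum_le_sum_of_subset (Finset.range_subset_range.2 (Nat.le_succ m))
    · push_neg at h
      have h2 : min a ((m : ℝ≥0∞) * s) = (m : ℝ≥0∞) * s := min_eq_right h.le
      have h3 : (m : ℝ≥0∞) * s ≤ ∑ i ∈ Finset.range m, (if (i : ℝ≥0∞) * s < a then s else 0) := by
        have := level_bound s m a
        rwa [h2] at this
      rw [Finset.sum_range_succ]
      have h4 : (if ((m:ℕ) : ℝ≥0∞) * s < a then s else 0) = s := if_pos h
      rw [h4]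
      calc min a (((m:ℕ)+1 : ℕ) * s) ≤ ((m:ℕ)+1 : ℕ) * s := min_le_right _ _
        _ = (m : ℝ≥0∞) * s + s := by push_cast; ring
        _ ≤ (∑ i ∈ Finset.range m, (if (i : ℝ≥0∞) * s < a then s else 0)) + s :=
            add_le_add_left h3 s

set_option maxHeartbeats 1000000 in
/-- Portmanteau-type theorem, part 1. Let `Z` be completely regular, `μ_n, μ` Radon
probability measures with `μ_n → μ` weakly, and `K_{r,n}` closed metrizable sets,
decreasing in `n`, with `μ_n(K_{r,n}) ≥ 1 - r` and `K_{r,∞} = ⋂_n K_{r,n}`. If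
`F_n, F : Z → [-∞,∞]` have Borel measurable restrictions to every `K_{r,n}`, then each
`F_n` is `μ_n`-measurable and `F` is `μ`-measurable, and if moreover `F_n, F ≥ 0` and the
exceptional sets `D_r` are `μ`-outer-null, then `∫ F dμ ≤ liminf ∫ F_n dμ_n`. -/
theorem portmanteau_liminf {Z : Type*} [TopologicalSpace Z] [CompletelyRegularSpace Z]
    [MeasurableSpace Z] [BorelSpace Z]
    (μn : ℕ → Measure Z) (μ : Measure Z)
    (hμn : ∀ n, IsProbabilityMeasure (μn n)) (hμ : IsProbabilityMeasure μ)
    (hRadonn : ∀ n, (μn n).InnerRegular) (hRadon : μ.InnerRegular)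
    (hweak : ∀ f : BoundedContinuousFunction Z ℝ,
      Tendsto (fun n => ∫ x, f x ∂(μn n)) atTop (nhds (∫ x, f x ∂μ)))
    (K : ℝ → ℕ → Set Z)
    (hKclosed : ∀ r > (0 : ℝ), ∀ n, IsClosed (K r n))
    (hKmetr : ∀ r > (0 : ℝ), ∀ n, TopologicalSpace.MetrizableSpace (K r n))
    (hKanti : ∀ r > (0 : ℝ), Antitone (K r))
    (hKmeas : ∀ r > (0 : ℝ), ∀ n, ENNReal.ofReal (1 - r) ≤ μn n (K r n))
    (Fn : ℕ → Z → EReal) (F : Z → EReal)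
    (hFnmeas : ∀ r > (0 : ℝ), ∀ n m, Measurable fun x : K r n => Fn m (x : Z))
    (hFmeas : ∀ r > (0 : ℝ), ∀ n, Measurable fun x : K r n => F (x : Z)) :
    ((∀ n, NullMeasurable (Fn n) (μn n)) ∧ NullMeasurable F μ) ∧
    ((∀ n x, 0 ≤ Fn n x) → (∀ x, 0 ≤ F x) →
      (∀ r ∈ Set.Ioo (0 : ℝ) 1,
        μ {x | x ∈ ⋂ n, K r n ∧ ∃ u : ℕ → Z, (∀ n, u n ∈ K r n) ∧
            Tendsto u atTop (nhds x) ∧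
            Filter.atTop.liminf (fun n => Fn n (u n)) < F x} = 0) →
      ∫⁻ x, (F x).abs ∂μ ≤
        Filter.atTop.liminf fun n => ∫⁻ x, (Fn n x).abs ∂(μn n)) := by
  classical
  -- closed-set lower bound for μ
  have hμK : ∀ r, 0 < r → ∀ n, ENNReal.ofReal (1 - r) ≤ μ (K r n) := by
    intro r hr n
    have hcl := hKclosed r hr n
    have h1 : μ (K r n)ᶜ ≤ Filter.atTop.liminf (fun m => μn m (K r n)ᶜ) :=
      open_liminf μn μ hμn hμ hRadon hweak hcl.isOpen_compl
    have h2 : ∀ᶠ m in atTop, μn m (K r n)ᶜ ≤ 1 - ENNReal.ofReal (1 - r) := by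
      rw [eventually_atTop]
      refine ⟨n, fun m hm => ?_⟩
      have hsub : K r m ⊆ K r n := hKanti r hr hm
      have hKm : ENNReal.ofReal (1 - r) ≤ μn m (K r n) :=
        le_trans (hKmeas r hr m) (measure_mono hsub)
      rw [prob_compl_eq_one_sub hcl.measurableSet]
      exact tsub_le_tsub_left hKm 1
    have h3 : Filter.atTop.liminf (fun m => μn m (K r n)ᶜ) ≤ 1 - ENNReal.ofReal (1 - r) :=
      Filter.liminf_le_of_frequently_le' h2.frequently
    have h4 : μ (K r n)ᶜ ≤ 1 - ENNReal.ofReal (1 - r) := h1.trans h3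
    have h5 : (1:ℝ≥0∞) ≤ μ (K r n) + μ (K r n)ᶜ := by
      have := measure_union_le (μ := μ) (K r n) (K r n)ᶜ
      rwa [Set.union_compl_self, measure_univ] at this
    calc ENNReal.ofReal (1 - r) = 1 - (1 - ENNReal.ofReal (1 - r)) := by
          rw [ENNReal.sub_sub_cancel ENNReal.one_ne_top
            (by rw [← ENNReal.ofReal_one]; exact ENNReal.ofReal_le_ofReal (by linarith))]
      _ ≤ 1 - μ (K r n)ᶜ := tsub_le_tsub_left h4 1
      _ ≤ μ (K r n) := by
          rw [tsub_le_iff_right]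
          exact h5
  have hpos : ∀ k : ℕ, (0:ℝ) < 1/(k+1) := fun k => by positivity
  have hNFn : ∀ n, NullMeasurable (Fn n) (μn n) := by
    intro n
    exact nullmeas_aux (μn n) (Fn n) (fun k => K (1/(k+1)) n)
      (fun k => (hKclosed _ (hpos k) n).measurableSet)
      (fun k => hFnmeas _ (hpos k) n n)
      (fun k => hKmeas _ (hpos k) n)
  have hNF : NullMeasurable F μ :=
    nullmeas_aux μ F (fun k => K (1/(k+1)) 0)
      (fun k => (hKclosed _ (hpos k) 0).measurableSet)
      (fun k => hFmeas _ (hpos k) 0)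
      (fun k => hμK _ (hpos k) 0)
  refine ⟨⟨hNFn, hNF⟩, ?_⟩
  intro hFn0 hF0 hD
  -- measurable a.e.-version ψ of (F ·).abs
  have habs : Measurable (EReal.abs) := by
    apply EReal.measurable_of_measurable_real
    simp only [EReal.abs_def]
    exact ENNReal.measurable_ofReal.comp _root_.measurable_abs
  have hφae : AEMeasurable (fun x => (F x).abs) μ :=
    habs.comp_aemeasurable hNF.aemeasurable
  set ψ := hφae.mk (fun x => (F x).abs) with hψdef
  have hψm : Measurable ψ := hφae.measurable_mk
  have hψae : (fun x => (F x).abs) =ᵐ[μ] ψ := hφae.ae_eq_mk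
  set L := Filter.atTop.liminf (fun n => ∫⁻ x, (Fn n x).abs ∂(μn n)) with hLdef
  -- the core estimate
  have core : ∀ r ∈ Set.Ioo (0:ℝ) 1, ∀ s : ℝ≥0∞, 0 < s → s ≠ ⊤ → ∀ m : ℕ,
      ∫⁻ x, min (ψ x) (m * s) ∂μ ≤
        L + s + ((m : ℝ≥0∞) * s + (m : ℝ≥0∞) * s) * ENNReal.ofReal r := by
    rintro r ⟨hr0, hr1⟩ s hs hstop m
    haveI hmetr := hKmetr r hr0 0
    letI : MetricSpace (K r 0) := TopologicalSpace.metrizableSpaceMetric _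
    set Kinf := ⋂ n, K r n with hKinfdef
    have hKinfcl : IsClosed Kinf := isClosed_iInter fun n => hKclosed r hr0 n
    have hKinfm : MeasurableSet Kinf := hKinfcl.measurableSet
    have hKinfsub : ∀ n, Kinf ⊆ K r n := fun n => iInter_subset _ n
    have hsub1 : (1:ℝ≥0∞) - ENNReal.ofReal (1 - r) = ENNReal.ofReal r := by
      rw [← ENNReal.ofReal_one, ← ENNReal.ofReal_sub _ (by linarith)]
      norm_num
    have hcomplμn : ∀ n, μn n (K r n)ᶜ ≤ ENNReal.ofReal r := by
      intro n
      rw [prob_compl_eq_one_sub (hKclosed r hr0 n).measurableSet]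
      calc (1:ℝ≥0∞) - μn n (K r n) ≤ 1 - ENNReal.ofReal (1-r) :=
            tsub_le_tsub_left (hKmeas r hr0 n) 1
        _ = ENNReal.ofReal r := hsub1
    have hcomplμ : μ Kinfᶜ ≤ ENNReal.ofReal r := by
      have h1 : μ Kinfᶜ = ⨆ n, μ (K r n)ᶜ := by
        rw [hKinfdef, Set.compl_iInter]
        exact Directed.measure_iUnion
          (Monotone.directed_le fun a b hab => compl_subset_compl.2 (hKanti r hr0 hab))
      rw [h1]
      refine iSup_le fun n => ?_
      rw [prob_compl_eq_one_sub (hKclosed r hr0 n).measurableSet]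
      calc (1:ℝ≥0∞) - μ (K r n) ≤ 1 - ENNReal.ofReal (1-r) :=
            tsub_le_tsub_left (hμK r hr0 n) 1
        _ = ENNReal.ofReal r := hsub1
    have hK0cl : IsClosed (K r 0) := hKclosed r hr0 0
    set A : ℕ → ℕ → Set (K r 0) := fun i k =>
      {x : K r 0 | (x:Z) ∈ Kinf ∧ ∀ n, k ≤ n → ∀ y : K r 0, (y:Z) ∈ K r n →
        dist x y < 1/((k:ℝ)+1) → (i:ℝ≥0∞) * s ≤ (Fn n (y:Z)).abs} with hAdef
    have hAmono : ∀ i, Monotone (A i) := by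
      intro i k k' hkk' x hx
      refine ⟨hx.1, fun n hn y hy hd => hx.2 n (le_trans hkk' hn) y hy ?_⟩
      refine hd.trans_le ?_
      apply one_div_le_one_div_of_le (by positivity)
      have : (k:ℝ) ≤ (k':ℝ) := by exact_mod_cast hkk'
      linarith
    have hAanti : ∀ k i i', i ≤ i' → A i' k ⊆ A i k := by
      intro k i i' hii x hx
      refine ⟨hx.1, fun n hn y hy hd => le_trans ?_ (hx.2 n hn y hy hd)⟩
      exact mul_le_mul_left (by exact_mod_cast hii) s
    have hAcl : ∀ i k, IsClosed (A i k) := by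
      intro i k
      have h1 : IsClosed {x : K r 0 | (x:Z) ∈ Kinf} :=
        hKinfcl.preimage continuous_subtype_val
      have h2 : ∀ n, IsClosed {x : K r 0 | ∀ y : K r 0, (y:Z) ∈ K r n →
          dist x y < 1/((k:ℝ)+1) → (i:ℝ≥0∞) * s ≤ (Fn n (y:Z)).abs} := by
        intro n
        rw [← isOpen_compl_iff, Metric.isOpen_iff]
        intro x hx
        simp only [Set.mem_compl_iff, Set.mem_setOf_eq] at hx
        push_neg at hx
        obtain ⟨y, hy1, hy2, hy3⟩ := hx
        refine ⟨1/((k:ℝ)+1) - dist x y, by linarith, fun z hz => ?_⟩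
        simp only [Set.mem_compl_iff, Set.mem_setOf_eq]
        push_neg
        refine ⟨y, hy1, ?_, hy3⟩
        have h3 : dist z y ≤ dist z x + dist x y := dist_triangle z x y
        have h4 : dist z x < 1/((k:ℝ)+1) - dist x y := Metric.mem_ball.1 hz
        linarith
      have hAeq : A i k = {x : K r 0 | (x:Z) ∈ Kinf} ∩
          ⋂ (n : ℕ) (_ : k ≤ n), {x : K r 0 | ∀ y : K r 0, (y:Z) ∈ K r n →
            dist x y < 1/((k:ℝ)+1) → (i:ℝ≥0∞) * s ≤ (Fn n (y:Z)).abs} := by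
        ext x
        simp only [hAdef, Set.mem_setOf_eq, Set.mem_inter_iff, Set.mem_iInter]
        try tauto
      rw [hAeq]
      exact h1.inter (isClosed_iInter fun n => isClosed_iInter fun _ => h2 n)
    have hAZm : ∀ i k, MeasurableSet (Subtype.val '' A i k) := fun i k =>
      (hK0cl.isClosedEmbedding_subtypeVal.isClosedMap _ (hAcl i k)).measurableSet
    set B : ℕ → ℕ → Set (K r 0) :=
      fun i k => {z : K r 0 | ∃ a ∈ A i k, dist a z < 1/((k:ℝ)+1)} with hBdef
    have hBopen : ∀ i k, IsOpen (B i k) := by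
      intro i k
      rw [Metric.isOpen_iff]
      intro z hz
      obtain ⟨a, ha, hd⟩ := hz
      refine ⟨1/((k:ℝ)+1) - dist a z, by linarith, fun w hw => ?_⟩
      refine ⟨a, ha, ?_⟩
      have h1 : dist a w ≤ dist a z + dist z w := dist_triangle a z w
      have h2 : dist z w = dist w z := dist_comm z w
      have h3 : dist w z < 1/((k:ℝ)+1) - dist a z := Metric.mem_ball.1 hw
      linarith
    have hVex : ∀ i k, ∃ Vik : Set Z, IsOpen Vik ∧ Subtype.val ⁻¹' Vik = B i k := by
      intro i k
      have h := hBopen i k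
      rw [isOpen_induced_iff] at h
      obtain ⟨Vik, hV1, hV2⟩ := h
      exact ⟨Vik, hV1, hV2⟩
    choose V hVopen hVpre using hVex
    set W : ℕ → ℕ → Set Z := fun i k => ⋂ l ∈ Finset.Icc 1 i, V l k with hWdef
    have hWopen : ∀ i k, IsOpen (W i k) := fun i k =>
      isOpen_biInter_finset fun l _ => hVopen l k
    have hAW : ∀ i k, Subtype.val '' A i k ⊆ W i k := by
      intro i k x hx
      obtain ⟨a, ha, rfl⟩ := hx
      refine Set.mem_iInter₂.2 fun l hl => ?_
      have hli : l ≤ i := (Finset.mem_Icc.1 hl).2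
      have haB : a ∈ B l k := ⟨a, hAanti k l i hli ha, by rw [dist_self]; exact hpos k⟩
      rw [← hVpre l k] at haB
      exact haB
    have hWbig : ∀ i k n, k ≤ n → 1 ≤ i → ∀ y : Z, y ∈ K r n → y ∈ W i k →
        (i:ℝ≥0∞) * s ≤ (Fn n y).abs := by
      intro i k n hkn hi y hyn hyW
      have hy0 : y ∈ K r 0 := hKanti r hr0 (Nat.zero_le n) hyn
      have hyV : (⟨y, hy0⟩ : K r 0) ∈ Subtype.val ⁻¹' (V i k) :=
        Set.mem_iInter₂.1 hyW i (Finset.mem_Icc.2 ⟨hi, le_rfl⟩)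
      rw [hVpre i k] at hyV
      obtain ⟨a, haA, had⟩ := hyV
      exact haA.2 n hkn ⟨y, hy0⟩ hyn had
    -- μn-side estimate
    have hmun : ∀ k n, k ≤ n →
        (∑ i ∈ Finset.Icc 1 m, s * μn n (W i k)) ≤
          (∫⁻ x, (Fn n x).abs ∂(μn n)) + (m:ℝ≥0∞) * s * ENNReal.ofReal r := by
      intro k n hkn
      have hWm : ∀ i, MeasurableSet (W i k) := fun i => (hWopen i k).measurableSet
      have hKnm : MeasurableSet (K r n) := (hKclosed r hr0 n).measurableSet
      have h1 : ∀ i ∈ Finset.Icc 1 m,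
          μn n (W i k) ≤ μn n (K r n ∩ W i k) + ENNReal.ofReal r := by
        intro i _
        have heq := measure_inter_add_diff (μ := μn n) (W i k) hKnm
        calc μn n (W i k) = μn n (W i k ∩ K r n) + μn n (W i k \ K r n) := heq.symm
          _ ≤ μn n (K r n ∩ W i k) + ENNReal.ofReal r := by
              refine add_le_add (le_of_eq (by rw [Set.inter_comm])) ?_
              refine le_trans (measure_mono fun x hx => hx.2) (hcomplμn n)
      have hpoint : ∀ y : Z,
          (∑ i ∈ Finset.Icc 1 m, (K r n ∩ W i k).indicator (fun _ => s) y) ≤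
            (Fn n y).abs := by
        intro y
        set T := (Finset.Icc 1 m).filter (fun i => y ∈ K r n ∩ W i k) with hTdef
        have hsum : (∑ i ∈ Finset.Icc 1 m, (K r n ∩ W i k).indicator (fun _ => s) y)
            = T.card • s := by
          simp only [Set.indicator_apply]
          rw [hTdef, ← Finset.sum_filter, Finset.sum_const]
        rcases T.eq_empty_or_nonempty with hT | hT
        · rw [hsum, hT]
          simp
        · set p := T.max' hT with hpdef
          have hpT : p ∈ T := T.max'_mem hT
          have hp1 : p ∈ Finset.Icc 1 m := (Finset.mem_filter.1 hpT).1
          have hpy : y ∈ K r n ∩ W p k := (Finset.mem_filter.1 hpT).2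
          have hcard : T.card ≤ p := by
            have hsubT : T ⊆ Finset.Icc 1 p := fun i hi =>
              Finset.mem_Icc.2 ⟨(Finset.mem_Icc.1 (Finset.mem_filter.1 hi).1).1, T.le_max' i hi⟩
            calc T.card ≤ (Finset.Icc 1 p).card := Finset.card_le_card hsubT
              _ = p := by rw [Nat.card_Icc]; omega
          have habsp := hWbig p k n hkn (Finset.mem_Icc.1 hp1).1 y hpy.1 hpy.2
          calc (∑ i ∈ Finset.Icc 1 m, (K r n ∩ W i k).indicator (fun _ => s) y)
              = T.card • s := hsum
            _ = (T.card : ℝ≥0∞) * s := nsmul_eq_mul _ _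
            _ ≤ (p:ℝ≥0∞) * s := mul_le_mul_left (by exact_mod_cast hcard) s
            _ ≤ (Fn n y).abs := habsp
      have h2 : (∑ i ∈ Finset.Icc 1 m, s * μn n (K r n ∩ W i k)) ≤
          ∫⁻ x, (Fn n x).abs ∂(μn n) := by
        calc (∑ i ∈ Finset.Icc 1 m, s * μn n (K r n ∩ W i k))
            = ∑ i ∈ Finset.Icc 1 m, ∫⁻ y, (K r n ∩ W i k).indicator (fun _ => s) y ∂(μn n) := by
              refine Finset.sum_congr rfl fun i _ => ?_
              rw [lintegral_indicator_const (hKnm.inter (hWm i))]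
          _ = ∫⁻ y, (∑ i ∈ Finset.Icc 1 m, (K r n ∩ W i k).indicator (fun _ => s) y) ∂(μn n) :=
              (lintegral_finset_sum' _ (fun i _ =>
                (measurable_const.indicator (hKnm.inter (hWm i))).aemeasurable)).symm
          _ ≤ ∫⁻ y, (Fn n y).abs ∂(μn n) := lintegral_mono hpoint
      calc (∑ i ∈ Finset.Icc 1 m, s * μn n (W i k))
          ≤ ∑ i ∈ Finset.Icc 1 m, (s * μn n (K r n ∩ W i k) + s * ENNReal.ofReal r) := by
            refine Finset.sum_le_sum fun i hi => ?_
            rw [← mul_add]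
            exact mul_le_mul_right (h1 i hi) s
        _ = (∑ i ∈ Finset.Icc 1 m, s * μn n (K r n ∩ W i k)) +
              (m:ℝ≥0∞) * s * ENNReal.ofReal r := by
            rw [Finset.sum_add_distrib, Finset.sum_const, Nat.card_Icc]
            congr 1
            rw [nsmul_eq_mul]
            have : (m + 1 - 1 : ℕ) = m := by omega
            rw [this, mul_assoc]
        _ ≤ (∫⁻ x, (Fn n x).abs ∂(μn n)) + (m:ℝ≥0∞) * s * ENNReal.ofReal r :=
            add_le_add_left h2 _
    -- per-k bound using portmanteau
    have hk : ∀ k, (∑ i ∈ Finset.Icc 1 m, s * μ (Subtype.val '' A i k)) ≤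
        L + (m:ℝ≥0∞) * s * ENNReal.ofReal r := by
      intro k
      have h1 : ∀ i ∈ Finset.Icc 1 m, s * μ (Subtype.val '' A i k) ≤
          Filter.atTop.liminf (fun n => s * μn n (W i k)) := by
        intro i _
        calc s * μ (Subtype.val '' A i k) ≤ s * μ (W i k) :=
              mul_le_mul_right (measure_mono (hAW i k)) s
          _ ≤ s * Filter.atTop.liminf (fun n => μn n (W i k)) :=
              mul_le_mul_right (open_liminf μn μ hμn hμ hRadon hweak (hWopen i k)) s
          _ ≤ Filter.atTop.liminf (fun n => s * μn n (W i k)) := ennreal_mul_liminf_le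
      calc (∑ i ∈ Finset.Icc 1 m, s * μ (Subtype.val '' A i k))
          ≤ ∑ i ∈ Finset.Icc 1 m, Filter.atTop.liminf (fun n => s * μn n (W i k)) :=
            Finset.sum_le_sum h1
        _ ≤ Filter.atTop.liminf (fun n => ∑ i ∈ Finset.Icc 1 m, s * μn n (W i k)) :=
            ennreal_sum_liminf_le _ _
        _ ≤ Filter.atTop.liminf (fun n =>
              (∫⁻ x, (Fn n x).abs ∂(μn n)) + (m:ℝ≥0∞) * s * ENNReal.ofReal r) := by
            refine Filter.liminf_le_liminf ?_
            rw [eventually_atTop]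
            exact ⟨k, fun n hn => hmun k n hn⟩
        _ = L + (m:ℝ≥0∞) * s * ENNReal.ofReal r := by
            rw [hLdef]
            exact liminf_add_const atTop _ _ (by isBoundedDefault) (by isBoundedDefault)
    -- supremum over k
    have hEbound : (∑ i ∈ Finset.Icc 1 m, s * μ (⋃ k, Subtype.val '' A i k)) ≤
        L + (m:ℝ≥0∞) * s * ENNReal.ofReal r := by
      have hEsup : ∀ i, μ (⋃ k, Subtype.val '' A i k) = ⨆ k, μ (Subtype.val '' A i k) :=
        fun i => Directed.measure_iUnion
          (Monotone.directed_le fun k k' hkk' => Set.image_mono (hAmono i hkk'))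
      calc (∑ i ∈ Finset.Icc 1 m, s * μ (⋃ k, Subtype.val '' A i k))
          = ∑ i ∈ Finset.Icc 1 m, ⨆ k, s * μ (Subtype.val '' A i k) := by
            refine Finset.sum_congr rfl fun i _ => ?_
            rw [hEsup i, ENNReal.mul_iSup]
        _ = ⨆ k, ∑ i ∈ Finset.Icc 1 m, s * μ (Subtype.val '' A i k) :=
            ENNReal.finsetSum_iSup_of_monotone fun i k k' hkk' =>
              mul_le_mul_right (measure_mono (Set.image_mono (hAmono i hkk'))) s
        _ ≤ L + (m:ℝ≥0∞) * s * ENNReal.ofReal r := iSup_le hk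
    -- the exceptional-set inclusion
    have hincl : ∀ i : ℕ, 1 ≤ i → (Kinf ∩ {x | (i:ℝ≥0∞) * s < ψ x}) ⊆
        ({x | x ∈ ⋂ n, K r n ∧ ∃ u : ℕ → Z, (∀ n, u n ∈ K r n) ∧
            Tendsto u atTop (nhds x) ∧
            Filter.atTop.liminf (fun n => Fn n (u n)) < F x}
          ∪ {x | ¬ (F x).abs = ψ x}) ∪ ⋃ k, Subtype.val '' A i k := by
      intro i hi x hx
      obtain ⟨hxK, hxψ⟩ := hx
      rw [Set.mem_setOf_eq] at hxψ
      simp only [Set.mem_union]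
      by_cases hne : (F x).abs = ψ x
      swap
      · exact Or.inl (Or.inr hne)
      by_cases hE : x ∈ ⋃ k, Subtype.val '' A i k
      · exact Or.inr hE
      left; left
      have hxK0 : x ∈ K r 0 := hKinfsub 0 hxK
      set x' : K r 0 := ⟨x, hxK0⟩ with hx'def
      have hc : (i:ℝ≥0∞) * s < (F x).abs := by rw [hne]; exact hxψ
      have hH : ∀ k : ℕ, ∃ n, k ≤ n ∧ ∃ y : K r 0, (y:Z) ∈ K r n ∧
          dist x' y < 1/((k:ℝ)+1) ∧ (Fn n (y:Z)).abs < (i:ℝ≥0∞) * s := by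
        intro k
        have hnot : x' ∉ A i k := by
          intro hmem
          exact hE (Set.mem_iUnion.2 ⟨k, ⟨x', hmem, rfl⟩⟩)
        have hnot2 : ¬ ∀ n, k ≤ n → ∀ y : K r 0, (y:Z) ∈ K r n →
            dist x' y < 1/((k:ℝ)+1) → (i:ℝ≥0∞) * s ≤ (Fn n (y:Z)).abs :=
          fun h => hnot ⟨hxK, h⟩
        push_neg at hnot2
        obtain ⟨n, hn, y, hy1, hy2, hy3⟩ := hnot2
        exact ⟨n, hn, y, hy1, hy2, hy3⟩
      choose nn hnn yy hyK hyd hyabs using hH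
      set uu : ℕ → K r 0 := fun n => if h : ∃ k, nn k = n then
          yy (Nat.findGreatest (fun k => nn k = n) n) else x' with huu
      have hukey : ∀ n, (∃ k, nn k = n) → nn (Nat.findGreatest (fun k => nn k = n) n) = n := by
        intro n h
        obtain ⟨k, hk⟩ := h
        have hkn : k ≤ n := by
          have := hnn k
          omega
        exact Nat.findGreatest_spec (P := fun k => nn k = n) hkn hk
      refine Set.mem_setOf.2 ⟨hxK, fun n => (uu n : Z), ?_, ?_, ?_⟩
      · intro n
        rw [huu]
        by_cases h : ∃ k, nn k = n
        · simp only [dif_pos h]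
          have hkey := hukey n h
          have hmem := hyK (Nat.findGreatest (fun k => nn k = n) n)
          rw [hkey] at hmem
          exact hmem
        · simp only [dif_neg h]
          exact hKinfsub n hxK
      · have huutends : Tendsto uu atTop (nhds x') := by
          rw [Metric.tendsto_atTop]
          intro ε hε
          obtain ⟨J, hJ⟩ := exists_nat_one_div_lt hε
          refine ⟨((Finset.range (J+1)).sup nn) + 1, fun n hn => ?_⟩
          rw [huu]
          by_cases h : ∃ k, nn k = n
          · simp only [dif_pos h]
            set j := Nat.findGreatest (fun k => nn k = n) n with hjdef
            have hj : nn j = n := hukey n h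
            have hjJ : J + 1 ≤ j := by
              by_contra hcon
              push_neg at hcon
              have hle : nn j ≤ (Finset.range (J+1)).sup nn :=
                Finset.le_sup (Finset.mem_range.2 (by omega))
              omega
            have hd := hyd j
            rw [dist_comm]
            calc dist x' (yy j) < 1/((j:ℝ)+1) := hd
              _ ≤ 1/((J:ℝ)+1) := by
                  apply one_div_le_one_div_of_le (by positivity)
                  have : (J:ℝ) ≤ (j:ℝ) := by exact_mod_cast (by omega : J ≤ j)
                  linarith
              _ < ε := hJ
          · simp only [dif_neg h, dist_self]
            exact hε
        exact (continuous_subtype_val.tendsto x').comp huutends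
      · have hfreq : ∃ᶠ n in atTop,
            Fn n ((uu n : Z)) ≤ (((i:ℝ≥0∞) * s : ℝ≥0∞) : EReal) := by
          rw [Filter.frequently_atTop]
          intro N
          refine ⟨nn N, hnn N, ?_⟩
          have h : ∃ k, nn k = nn N := ⟨N, rfl⟩
          rw [huu]
          simp only [dif_pos h]
          set j := Nat.findGreatest (fun k => nn k = nn N) (nn N) with hjdef
          have hjabs : (Fn (nn j) ((yy j : Z))).abs < (i:ℝ≥0∞) * s := hyabs j
          have hjn : nn j = nn N := hukey (nn N) h
          rw [hjn] at hjabs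
          have h1 : Fn (nn N) ((yy j : Z)) =
              (((Fn (nn N) ((yy j : Z))).abs : ℝ≥0∞) : EReal) :=
            (ereal_coe_abs (hFn0 _ _)).symm
          rw [h1]
          exact EReal.coe_ennreal_le_coe_ennreal_iff.2 hjabs.le
        have h2 : Filter.atTop.liminf (fun n => Fn n ((uu n : Z))) ≤
            (((i:ℝ≥0∞) * s : ℝ≥0∞) : EReal) :=
          Filter.liminf_le_of_frequently_le' hfreq
        have h3 : (((i:ℝ≥0∞) * s : ℝ≥0∞) : EReal) < F x := by
          have hcoe := ereal_coe_abs (hF0 x)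
          rw [← hcoe]
          exact EReal.coe_ennreal_lt_coe_ennreal_iff.2 hc
        exact lt_of_le_of_lt h2 h3
    -- measure comparison per level
    have hlevelμ : ∀ i : ℕ, 1 ≤ i → μ (Kinf ∩ {x | (i:ℝ≥0∞)*s < ψ x}) ≤
        μ (⋃ k, Subtype.val '' A i k) := by
      intro i hi
      have hD0 : μ {x | x ∈ ⋂ n, K r n ∧ ∃ u : ℕ → Z, (∀ n, u n ∈ K r n) ∧
          Tendsto u atTop (nhds x) ∧
          Filter.atTop.liminf (fun n => Fn n (u n)) < F x} = 0 := hD r ⟨hr0, hr1⟩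
      have hbad0 : μ {x | ¬ (F x).abs = ψ x} = 0 := by
        have := hψae
        rw [Filter.EventuallyEq, MeasureTheory.ae_iff] at this
        exact this
      calc μ (Kinf ∩ {x | (i:ℝ≥0∞)*s < ψ x})
          ≤ μ (({x | x ∈ ⋂ n, K r n ∧ ∃ u : ℕ → Z, (∀ n, u n ∈ K r n) ∧
                Tendsto u atTop (nhds x) ∧
                Filter.atTop.liminf (fun n => Fn n (u n)) < F x}
              ∪ {x | ¬ (F x).abs = ψ x}) ∪ ⋃ k, Subtype.val '' A i k) :=
            measure_mono (hincl i hi)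
        _ ≤ μ ({x | x ∈ ⋂ n, K r n ∧ ∃ u : ℕ → Z, (∀ n, u n ∈ K r n) ∧
                Tendsto u atTop (nhds x) ∧
                Filter.atTop.liminf (fun n => Fn n (u n)) < F x}
              ∪ {x | ¬ (F x).abs = ψ x}) + μ (⋃ k, Subtype.val '' A i k) :=
            measure_union_le _ _
        _ ≤ (μ {x | x ∈ ⋂ n, K r n ∧ ∃ u : ℕ → Z, (∀ n, u n ∈ K r n) ∧
                Tendsto u atTop (nhds x) ∧
                Filter.atTop.liminf (fun n => Fn n (u n)) < F x}
              + μ {x | ¬ (F x).abs = ψ x}) + μ (⋃ k, Subtype.val '' A i k) :=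
            add_le_add_left (measure_union_le _ _) _
        _ = μ (⋃ k, Subtype.val '' A i k) := by
            rw [hD0, hbad0, add_zero, zero_add]
    -- μ-side: splitting off the complement of Kinf
    have hsplit : ∫⁻ x, min (ψ x) (m*s) ∂μ ≤
        (∫⁻ x in Kinf, min (ψ x) (m*s) ∂μ) + (m:ℝ≥0∞)*s*ENNReal.ofReal r := by
      rw [← lintegral_add_compl (fun x => min (ψ x) (m*s)) hKinfm]
      refine add_le_add_right ?_ _
      calc ∫⁻ x in Kinfᶜ, min (ψ x) (m*s) ∂μ
          ≤ ∫⁻ _ in Kinfᶜ, (m:ℝ≥0∞)*s ∂μ := lintegral_mono fun x => min_le_right _ _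
        _ = (m:ℝ≥0∞)*s * μ Kinfᶜ := setLIntegral_const _ _
        _ ≤ (m:ℝ≥0∞)*s*ENNReal.ofReal r := mul_le_mul_right hcomplμ _
    -- μ-side: level decomposition
    have hlev : ∫⁻ x in Kinf, min (ψ x) (m*s) ∂μ ≤
        s + ∑ i ∈ Finset.Icc 1 m, s * μ (Kinf ∩ {x | (i:ℝ≥0∞)*s < ψ x}) := by
      have hmeaslv : ∀ i : ℕ, MeasurableSet {x | (i:ℝ≥0∞)*s < ψ x} :=
        fun i => measurableSet_lt measurable_const hψm
      calc ∫⁻ x in Kinf, min (ψ x) (m*s) ∂μ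
          ≤ ∫⁻ x in Kinf,
              (∑ i ∈ Finset.range m, ({x | (i:ℝ≥0∞)*s < ψ x}).indicator (fun _ => s) x) ∂μ := by
            refine lintegral_mono fun x => ?_
            refine (level_bound s m (ψ x)).trans (le_of_eq ?_)
            refine Finset.sum_congr rfl fun i _ => ?_
            rw [Set.indicator_apply]
            rfl
        _ = ∑ i ∈ Finset.range m, s * μ (Kinf ∩ {x | (i:ℝ≥0∞)*s < ψ x}) := by
            rw [lintegral_finset_sum' _ (fun i _ =>
              (measurable_const.indicator (hmeaslv i)).aemeasurable)]
            refine Finset.sum_congr rfl fun i _ => ?_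
            rw [lintegral_indicator_const (hmeaslv i), Measure.restrict_apply (hmeaslv i),
              Set.inter_comm]
        _ ≤ s + ∑ i ∈ Finset.Icc 1 m, s * μ (Kinf ∩ {x | (i:ℝ≥0∞)*s < ψ x}) := by
            have hsubset : Finset.range m ⊆ insert 0 (Finset.Icc 1 m) := by
              intro i hi
              rcases Nat.eq_zero_or_pos i with h0 | h0
              · simp [h0]
              · refine Finset.mem_insert_of_mem (Finset.mem_Icc.2 ⟨h0, ?_⟩)
                have := Finset.mem_range.1 hi
                omega
            calc (∑ i ∈ Finset.range m, s * μ (Kinf ∩ {x | (i:ℝ≥0∞)*s < ψ x}))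
                ≤ ∑ i ∈ insert 0 (Finset.Icc 1 m),
                    s * μ (Kinf ∩ {x | (i:ℝ≥0∞)*s < ψ x}) :=
                  Finset.sum_le_sum_of_subset hsubset
              _ = s * μ (Kinf ∩ {x | (0:ℝ≥0∞)*s < ψ x}) +
                    ∑ i ∈ Finset.Icc 1 m, s * μ (Kinf ∩ {x | (i:ℝ≥0∞)*s < ψ x}) := by
                  rw [Finset.sum_insert (by simp)]
                  norm_num
              _ ≤ s + ∑ i ∈ Finset.Icc 1 m, s * μ (Kinf ∩ {x | (i:ℝ≥0∞)*s < ψ x}) := by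
                  refine add_le_add_left ?_ _
                  calc s * μ (Kinf ∩ {x | (0:ℝ≥0∞)*s < ψ x}) ≤ s * 1 :=
                        mul_le_mul_right prob_le_one s
                    _ = s := mul_one s
    -- final assembly
    calc ∫⁻ x, min (ψ x) (m*s) ∂μ
        ≤ (∫⁻ x in Kinf, min (ψ x) (m*s) ∂μ) + (m:ℝ≥0∞)*s*ENNReal.ofReal r := hsplit
      _ ≤ (s + ∑ i ∈ Finset.Icc 1 m, s * μ (Kinf ∩ {x | (i:ℝ≥0∞)*s < ψ x})) +
            (m:ℝ≥0∞)*s*ENNReal.ofReal r := add_le_add_left hlev _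
      _ ≤ (s + ∑ i ∈ Finset.Icc 1 m, s * μ (⋃ k, Subtype.val '' A i k)) +
            (m:ℝ≥0∞)*s*ENNReal.ofReal r := by
          refine add_le_add_left (add_le_add_right (Finset.sum_le_sum fun i hi =>
            mul_le_mul_right (hlevelμ i (Finset.mem_Icc.1 hi).1) s) s) _
      _ ≤ (s + (L + (m:ℝ≥0∞) * s * ENNReal.ofReal r)) + (m:ℝ≥0∞)*s*ENNReal.ofReal r :=
          add_le_add_left (add_le_add_right hEbound s) _
      _ = L + s + ((m : ℝ≥0∞) * s + (m : ℝ≥0∞) * s) * ENNReal.ofReal r := by ring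

  -- r → 0
  have core2 : ∀ s : ℝ≥0∞, 0 < s → s ≠ ⊤ → ∀ m : ℕ,
      ∫⁻ x, min (ψ x) (m * s) ∂μ ≤ L + s := by
    intro s hs hstop m
    set C := (m : ℝ≥0∞) * s + (m : ℝ≥0∞) * s with hC
    have hCne : C ≠ ⊤ := by
      simp only [hC, Ne, ENNReal.add_eq_top, not_or]
      constructor <;>
        exact ENNReal.mul_ne_top (ENNReal.natCast_ne_top m) hstop
    have hseq : ∀ k : ℕ, ∫⁻ x, min (ψ x) (m * s) ∂μ ≤
        L + s + C * ENNReal.ofReal (1/(k+2)) := by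
      intro k
      have hmem : (1:ℝ)/(k+2) ∈ Set.Ioo (0:ℝ) 1 := by
        constructor
        · positivity
        · rw [div_lt_one (by positivity)]
          linarith [Nat.cast_nonneg (α := ℝ) k]
      exact core _ hmem s hs hstop m
    have htends : Tendsto (fun k : ℕ => L + s + C * ENNReal.ofReal (1/(k+2)))
        atTop (nhds (L + s)) := by
      have h0 : Tendsto (fun k : ℕ => (1:ℝ)/(k+2)) atTop (nhds 0) := by
        apply squeeze_zero (fun k => by positivity) (fun k => ?_)
          tendsto_one_div_add_atTop_nhds_zero_nat
        apply one_div_le_one_div_of_le (by positivity)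
        linarith [Nat.cast_nonneg (α := ℝ) k]
      have h1 : Tendsto (fun k : ℕ => ENNReal.ofReal ((1:ℝ)/(k+2))) atTop (nhds 0) := by
        rw [show (0:ℝ≥0∞) = ENNReal.ofReal 0 by simp]
        exact ENNReal.tendsto_ofReal h0
      have h2 : Tendsto (fun k : ℕ => C * ENNReal.ofReal ((1:ℝ)/(k+2))) atTop (nhds 0) := by
        have := ENNReal.Tendsto.const_mul h1 (Or.inr hCne)
        simpa using this
      have h3 := Tendsto.const_add (L + s) h2
      simpa using h3
    exact ge_of_tendsto' htends hseq
  -- conclude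
  have hcongr : ∫⁻ x, (F x).abs ∂μ = ∫⁻ x, ψ x ∂μ := lintegral_congr_ae hψae
  rw [hcongr]
  refine ENNReal.le_of_forall_pos_le_add fun ε hε hLfin => ?_
  have hεpos : (0:ℝ≥0∞) < ε := by exact_mod_cast hε
  have hεtop : (ε : ℝ≥0∞) ≠ ⊤ := ENNReal.coe_ne_top
  have hmono : Monotone (fun m : ℕ => fun x => min (ψ x) (m * (ε:ℝ≥0∞))) := by
    intro m m' hmm x
    exact min_le_min le_rfl (mul_le_mul_left (by exact_mod_cast hmm) _)
  have hsup : ∀ x, (⨆ m : ℕ, min (ψ x) (m * (ε:ℝ≥0∞))) = ψ x := by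
    intro x
    have htop : (⨆ m : ℕ, (m : ℝ≥0∞) * ε) = ⊤ := by
      rw [← ENNReal.iSup_mul, ENNReal.iSup_natCast, ENNReal.top_mul hεpos.ne']
    rcases eq_top_or_lt_top (ψ x) with hx | hx
    · rw [hx]
      have hmin : ∀ m : ℕ, min (⊤:ℝ≥0∞) ((m:ℝ≥0∞) * ε) = (m:ℝ≥0∞) * ε :=
        fun m => min_eq_right le_top
      calc (⨆ m : ℕ, min (⊤:ℝ≥0∞) ((m:ℝ≥0∞) * ε)) = ⨆ m : ℕ, (m:ℝ≥0∞) * ε := by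
            simp_rw [hmin]
        _ = ⊤ := htop
    · obtain ⟨m, hm⟩ : ∃ m : ℕ, ψ x < (m : ℝ≥0∞) * ε := by
        rw [← lt_iSup_iff, htop]
        exact hx
      apply le_antisymm (iSup_le fun m => min_le_left _ _)
      refine le_iSup_of_le m ?_
      rw [min_eq_left hm.le]
  calc ∫⁻ x, ψ x ∂μ = ∫⁻ x, ⨆ m : ℕ, min (ψ x) (m * (ε:ℝ≥0∞)) ∂μ := by
        apply lintegral_congr
        intro x
        rw [hsup x]
    _ = ⨆ m : ℕ, ∫⁻ x, min (ψ x) (m * (ε:ℝ≥0∞)) ∂μ := by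
        apply lintegral_iSup
        · intro m
          exact hψm.min measurable_const
        · intro m m' hmm x
          exact hmono hmm x
    _ ≤ L + ε := iSup_le fun m => core2 (ε:ℝ≥0∞) hεpos hεtop m
end
end

section
/- Let f : [0,T] → Y be continuous and affine on every interval [t_{i−1}, t_i], i = 1,…,N. Then for every s ∈ (0,1) and p ∈ [1,∞], [f]_{B^s_{p,∞}} ≤ 3 max_{1 ≤ i < N} f_{i,p} / t_i^{s}. -/
open Filter Topology Set MeasureTheory ENNReal NNReal

noncomputable section

/-- The quantity `f_{i,p}` of the paper: for `p < ∞`,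
`f_{i,p} = (τ Σ_{j=i}^N ‖f(t_j) - f(t_{j-i})‖^p)^{1/p}` and
`f_{i,∞} = max_{i ≤ j ≤ N} ‖f(t_j) - f(t_{j-i})‖`, with `t_j = j·τ`. -/
def discreteDiffNorm {Y : Type*} [NormedAddCommGroup Y] (f : ℝ → Y) (τ : ℝ) (N i : ℕ)
    (p : ℝ≥0∞) : ℝ≥0∞ :=
  if p = ⊤ then
    ((Finset.Icc i N).sup fun j => ‖f ((j : ℝ) * τ) - f (((j - i : ℕ) : ℝ) * τ)‖₊ : ℝ≥0)
  else
    (ENNReal.ofReal τ * ∑ j ∈ Finset.Icc i N,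
        (‖f ((j : ℝ) * τ) - f (((j - i : ℕ) : ℝ) * τ)‖₊ : ℝ≥0∞) ^ p.toReal) ^
      (1 / p.toReal)

/-- The Besov seminorm with `q = ∞`:
`[f]_{B^s_{p,∞}} = sup_{0<h<T} h^{-s} ‖u ↦ f(u+h) - f(u)‖_{L^p(0,T-h;Y)}`. -/
def besovSeminormTop {Y : Type*} [NormedAddCommGroup Y] (f : ℝ → Y) (T s : ℝ)
    (p : ℝ≥0∞) : ℝ≥0∞ :=
  ⨆ h ∈ Set.Ioo (0 : ℝ) T, ENNReal.ofReal (h ^ (-s)) *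
    eLpNorm (fun u => f (u + h) - f u) p
      (MeasureTheory.volume.restrict (Set.Ioo (0 : ℝ) (T - h)))

set_option linter.unusedSectionVars false

section PAAux
variable {Y : Type*} [NormedAddCommGroup Y] [NormedSpace ℝ Y]

def PAff (f : ℝ → Y) (τ : ℝ) (N : ℕ) : Prop :=
  ∀ j : ℕ, j + 1 ≤ N → ∀ u : ℝ, (j : ℝ) * τ ≤ u → u ≤ ((j : ℝ) + 1) * τ →
    f u = ((u - (j : ℝ) * τ) / τ) • f (((j : ℝ) + 1) * τ) +
      ((((j : ℝ) + 1) * τ - u) / τ) • f ((j : ℝ) * τ)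

lemma pa_diff_shift {f : ℝ → Y} {τ : ℝ} {N : ℕ} (hf : PAff f τ N)
    (j m : ℕ) (hjm : j + m + 1 ≤ N) (u : ℝ)
    (hu1 : (j : ℝ) * τ ≤ u) (hu2 : u ≤ ((j : ℝ) + 1) * τ) :
    f (u + (m : ℝ) * τ) - f u
      = ((u - (j : ℝ) * τ) / τ) •
          (f (((j : ℝ) + (m : ℝ) + 1) * τ) - f (((j : ℝ) + 1) * τ))
        + ((((j : ℝ) + 1) * τ - u) / τ) •
          (f (((j : ℝ) + (m : ℝ)) * τ) - f ((j : ℝ) * τ)) := by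
  have h1 := hf j (by omega) u hu1 hu2
  have h2 := hf (j + m) (by omega) (u + (m : ℝ) * τ)
    (by push_cast; nlinarith [hu1]) (by push_cast; nlinarith [hu2])
  push_cast at h2
  have e1 : u + (m : ℝ) * τ - ((j : ℝ) + (m : ℝ)) * τ = u - (j : ℝ) * τ := by ring
  have e2 : ((j : ℝ) + (m : ℝ) + 1) * τ - (u + (m : ℝ) * τ) = ((j : ℝ) + 1) * τ - u := by
    ring
  rw [e1, e2] at h2
  rw [h1, h2]
  module

lemma enorm_rpow_eq (x : Y) (P : ℝ) (hP0 : 0 ≤ P) :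
    (‖x‖₊ : ℝ≥0∞) ^ P = ENNReal.ofReal (‖x‖ ^ P) := by
  rw [← ENNReal.ofReal_rpow_of_nonneg (norm_nonneg x) hP0, ofReal_norm_eq_enorm]; rfl

lemma lcell (F : ℝ → ℝ≥0∞) (a b A B : ℝ) (hab : a ≤ b) (hA : 0 ≤ A) (hB : 0 ≤ B)
    (hF : ∀ u ∈ Set.Ioc a b,
      F u ≤ ENNReal.ofReal (((b - u) * A + (u - a) * B) / (b - a))) :
    ∫⁻ u in Set.Ioc a b, F u
      ≤ ENNReal.ofReal ((b - a) / 2) * (ENNReal.ofReal A + ENNReal.ofReal B) := by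
  rcases eq_or_lt_of_le hab with rfl | hlt
  · simp
  have hba : 0 < b - a := by linarith
  have hne : b - a ≠ 0 := ne_of_gt hba
  set φ : ℝ → ℝ := fun u => ((b - u) * A + (u - a) * B) / (b - a) with hφ
  have hφc : Continuous φ := by
    apply Continuous.div_const
    fun_prop
  have h1 : ∫⁻ u in Set.Ioc a b, F u ≤ ∫⁻ u in Set.Ioc a b, ENNReal.ofReal (φ u) :=
    setLIntegral_mono' measurableSet_Ioc hF
  have h2 : ∫⁻ u in Set.Ioc a b, ENNReal.ofReal (φ u)
      = ENNReal.ofReal (∫ u in Set.Ioc a b, φ u) := by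
    rw [ofReal_integral_eq_lintegral_ofReal (hφc.integrableOn_Ioc)]
    filter_upwards [ae_restrict_mem measurableSet_Ioc] with u hu
    have h3 : a < u := hu.1
    have h4 : u ≤ b := hu.2
    apply div_nonneg _ (le_of_lt hba)
    have := mul_nonneg (by linarith : (0:ℝ) ≤ b - u) hA
    have := mul_nonneg (by linarith : (0:ℝ) ≤ u - a) hB
    linarith
  have h3 : ∫ u in Set.Ioc a b, φ u = (b - a) / 2 * (A + B) := by
    rw [← intervalIntegral.integral_of_le hab]
    have hfe : ∀ u : ℝ, φ u = (b * A - a * B) / (b - a) + ((B - A) / (b - a)) * u := by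
      intro u; rw [hφ]; field_simp; ring
    simp only [hfe]
    have hg : IntervalIntegrable (fun x : ℝ => (B - A) / (b - a) * x) volume a b := by
      apply Continuous.intervalIntegrable; fun_prop
    rw [intervalIntegral.integral_add intervalIntegrable_const hg]
    rw [intervalIntegral.integral_const, intervalIntegral.integral_const_mul, integral_id]
    rw [smul_eq_mul]
    field_simp
    ring
  rw [h2, h3] at h1
  refine h1.trans (le_of_eq ?_)
  rw [← ENNReal.ofReal_add hA hB, ← ENNReal.ofReal_mul (by positivity)]

lemma lcov (F : ℝ → ℝ≥0∞) (c : ℕ → ℝ) (hc : ∀ k, c k ≤ c (k + 1)) :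
    ∀ m : ℕ, ∀ s : Set ℝ, s ⊆ Set.Ioc (c 0) (c m) →
      ∫⁻ u in s, F u ≤ ∑ k ∈ Finset.range m, ∫⁻ u in s ∩ Set.Ioc (c k) (c (k + 1)), F u := by
  have hmono : Monotone c := monotone_nat_of_le_succ hc
  intro m
  induction m with
  | zero =>
    intro s hs
    simp only [Set.Ioc_self, Set.subset_empty_iff] at hs
    simp [hs]
  | succ m ih =>
    intro s hs
    have hsplit : Set.Ioc (c 0) (c (m + 1)) = Set.Ioc (c 0) (c m) ∪ Set.Ioc (c m) (c (m + 1)) :=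
      (Set.Ioc_union_Ioc_eq_Ioc (hmono (Nat.zero_le m)) (hc m)).symm
    have hsub : s ⊆ (s ∩ Set.Ioc (c 0) (c m)) ∪ (s ∩ Set.Ioc (c m) (c (m + 1))) := by
      intro u hu
      rcases (hsplit ▸ hs hu) with h | h
      · exact Or.inl ⟨hu, h⟩
      · exact Or.inr ⟨hu, h⟩
    calc ∫⁻ u in s, F u
        ≤ ∫⁻ u in (s ∩ Set.Ioc (c 0) (c m)) ∪ (s ∩ Set.Ioc (c m) (c (m + 1))), F u :=
          lintegral_mono_set hsub
      _ ≤ (∫⁻ u in s ∩ Set.Ioc (c 0) (c m), F u)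
            + ∫⁻ u in s ∩ Set.Ioc (c m) (c (m + 1)), F u := lintegral_union_le _ _ _
      _ ≤ (∑ k ∈ Finset.range m, ∫⁻ u in (s ∩ Set.Ioc (c 0) (c m)) ∩ Set.Ioc (c k) (c (k + 1)), F u)
            + ∫⁻ u in s ∩ Set.Ioc (c m) (c (m + 1)), F u := by
          gcongr
          exact ih _ Set.inter_subset_right
      _ ≤ (∑ k ∈ Finset.range m, ∫⁻ u in s ∩ Set.Ioc (c k) (c (k + 1)), F u)
            + ∫⁻ u in s ∩ Set.Ioc (c m) (c (m + 1)), F u := by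
          gcongr with k hk
          exact Set.inter_subset_left
      _ = ∑ k ∈ Finset.range (m + 1), ∫⁻ u in s ∩ Set.Ioc (c k) (c (k + 1)), F u := by
          rw [Finset.sum_range_succ]

lemma claimA {f : ℝ → Y} {τ : ℝ} (hτ : 0 < τ) {N : ℕ} (hf : PAff f τ N)
    {P : ℝ} (hP : 1 ≤ P) (i : ℕ) (hiN : i ≤ N) :
    ∫⁻ u in Set.Ioo 0 (((N : ℝ) - (i : ℝ)) * τ),
        (‖f (u + (i : ℝ) * τ) - f u‖₊ : ℝ≥0∞) ^ P
      ≤ ENNReal.ofReal τ *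
        ∑ j ∈ Finset.Icc i N, (‖f ((j : ℝ) * τ) - f (((j - i : ℕ) : ℝ) * τ)‖₊ : ℝ≥0∞) ^ P := by
  have hP0 : (0:ℝ) ≤ P := by linarith
  set m := N - i with hm
  have hmN : ((m : ℕ) : ℝ) = (N : ℝ) - i := by
    rw [hm]; rw [Nat.cast_sub hiN]
  set E : ℕ → ℝ := fun k => ‖f (((k : ℝ) + (i : ℝ)) * τ) - f ((k : ℝ) * τ)‖ with hE
  have hE0 : ∀ k, 0 ≤ E k := fun k => norm_nonneg _
  have hEsucc : ∀ k : ℕ, E (k + 1) = ‖f (((k:ℝ) + (i:ℝ) + 1) * τ) - f (((k:ℝ) + 1) * τ)‖ := by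
    intro k
    simp only [hE]
    push_cast
    rw [show (k:ℝ) + 1 + (i:ℝ) = (k:ℝ) + (i:ℝ) + 1 from by ring]
  have hcm : ∀ k : ℕ, ((k : ℕ) : ℝ) * τ ≤ (((k + 1 : ℕ)) : ℝ) * τ := by
    intro k; push_cast
    have h : ((k:ℝ) + 1) * τ = (k:ℝ) * τ + τ := by ring
    linarith
  refine le_trans
    (lcov _ (fun k => ((k : ℕ) : ℝ) * τ) hcm m (Set.Ioo 0 (((N : ℝ) - i) * τ)) ?_) ?_
  · intro u hu
    simp only [Nat.cast_zero, zero_mul]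
    exact ⟨hu.1, by rw [hmN]; exact hu.2.le⟩
  -- per-cell bounds
  have hcell : ∀ k ∈ Finset.range m,
      (∫⁻ u in Set.Ioo 0 (((N : ℝ) - i) * τ) ∩ Set.Ioc (((k:ℕ):ℝ) * τ) (((k+1:ℕ):ℝ) * τ),
        (‖f (u + (i : ℝ) * τ) - f u‖₊ : ℝ≥0∞) ^ P)
      ≤ ENNReal.ofReal (τ / 2) *
          (ENNReal.ofReal (E k ^ P) + ENNReal.ofReal (E (k + 1) ^ P)) := by
    intro k hk
    have hkm : k + i + 1 ≤ N := by
      simp only [Finset.mem_range] at hk; omega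
    refine le_trans (lintegral_mono_set Set.inter_subset_right) ?_
    have hb : (((k+1:ℕ)):ℝ) * τ = ((k:ℝ) + 1) * τ := by push_cast; ring
    rw [hb]
    refine le_trans (lcell _ ((k:ℝ) * τ) (((k:ℝ) + 1) * τ) (E k ^ P) (E (k+1) ^ P)
      (by nlinarith) (by positivity) (by positivity) ?_) (le_of_eq ?_)
    · intro u hu
      obtain ⟨hu1, hu2⟩ := hu
      have hds := pa_diff_shift hf k i hkm u hu1.le hu2
      rw [enorm_rpow_eq _ _ hP0]
      apply ENNReal.ofReal_le_ofReal
      set α := (u - (k:ℝ) * τ) / τ with hαd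
      set β := (((k:ℝ) + 1) * τ - u) / τ with hβd
      have hα : 0 ≤ α := div_nonneg (by linarith) hτ.le
      have hβ : 0 ≤ β := div_nonneg (by linarith) hτ.le
      have hβα : β + α = 1 := by
        rw [hαd, hβd, ← add_div, show ((k:ℝ) + 1) * τ - u + (u - (k:ℝ) * τ) = τ from by ring,
          div_self hτ.ne']
      have hcomb : ‖f (u + (i : ℝ) * τ) - f u‖ ≤ β * E k + α * E (k + 1) := by
        rw [hds, hEsucc k]
        calc ‖α • (f (((k:ℝ) + (i:ℝ) + 1) * τ) - f (((k:ℝ) + 1) * τ))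
              + β • (f (((k:ℝ) + (i:ℝ)) * τ) - f ((k:ℝ) * τ))‖
            ≤ ‖α • (f (((k:ℝ) + (i:ℝ) + 1) * τ) - f (((k:ℝ) + 1) * τ))‖
              + ‖β • (f (((k:ℝ) + (i:ℝ)) * τ) - f ((k:ℝ) * τ))‖ := norm_add_le _ _
          _ = α * ‖f (((k:ℝ) + (i:ℝ) + 1) * τ) - f (((k:ℝ) + 1) * τ)‖
              + β * ‖f (((k:ℝ) + (i:ℝ)) * τ) - f ((k:ℝ) * τ)‖ := by
              rw [norm_smul, norm_smul, Real.norm_eq_abs, Real.norm_eq_abs,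
                abs_of_nonneg hα, abs_of_nonneg hβ]
          _ = β * E k + α * ‖f (((k:ℝ) + (i:ℝ) + 1) * τ) - f (((k:ℝ) + 1) * τ)‖ := by
              rw [hE]; ring
          _ = β * E k + α * ‖f (((k:ℝ) + (i:ℝ) + 1) * τ) - f (((k:ℝ) + 1) * τ)‖ := rfl
      have h5 : ‖f (u + (i : ℝ) * τ) - f u‖ ^ P ≤ (β * E k + α * E (k + 1)) ^ P :=
        Real.rpow_le_rpow (norm_nonneg _) hcomb hP0
      have h6 : (β * E k + α * E (k + 1)) ^ P ≤ β * E k ^ P + α * E (k + 1) ^ P := by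
        have := (convexOn_rpow hP).2 (Set.mem_Ici.mpr (hE0 k))
          (Set.mem_Ici.mpr (hE0 (k+1))) hβ hα hβα
        simpa [smul_eq_mul] using this
      have h7 : β * E k ^ P + α * E (k + 1) ^ P
          = ((((k:ℝ) + 1) * τ - u) * E k ^ P + (u - (k:ℝ) * τ) * E (k+1) ^ P)
            / (((k:ℝ) + 1) * τ - (k:ℝ) * τ) := by
        rw [hαd, hβd, show ((k:ℝ) + 1) * τ - (k:ℝ) * τ = τ from by ring]
        ring
      linarith
    · rw [show ((k:ℝ) + 1) * τ - (k:ℝ) * τ = τ from by ring]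
  refine le_trans (Finset.sum_le_sum hcell) ?_
  have h2τ : ENNReal.ofReal (τ/2) * 2 = ENNReal.ofReal τ := by
    rw [show (2:ℝ≥0∞) = ENNReal.ofReal 2 from (ENNReal.ofReal_ofNat 2).symm,
      ← ENNReal.ofReal_mul (by positivity)]
    norm_num
  calc ∑ k ∈ Finset.range m, ENNReal.ofReal (τ / 2) *
        (ENNReal.ofReal (E k ^ P) + ENNReal.ofReal (E (k + 1) ^ P))
      = ENNReal.ofReal (τ / 2) * ((∑ k ∈ Finset.range m, ENNReal.ofReal (E k ^ P))
          + ∑ k ∈ Finset.range m, ENNReal.ofReal (E (k + 1) ^ P)) := by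
        rw [← Finset.mul_sum, ← Finset.sum_add_distrib]
    _ ≤ ENNReal.ofReal (τ / 2) * ((∑ k ∈ Finset.range (m + 1), ENNReal.ofReal (E k ^ P))
          + ∑ k ∈ Finset.range (m + 1), ENNReal.ofReal (E k ^ P)) := by
        refine mul_le_mul_right (add_le_add ?_ ?_) _
        · exact Finset.sum_le_sum_of_subset (Finset.range_subset_range.mpr (Nat.le_succ m))
        · rw [Finset.sum_range_succ' (fun k => ENNReal.ofReal (E k ^ P)) m]
          exact self_le_add_right _ _
    _ = ENNReal.ofReal τ * ∑ k ∈ Finset.range (m + 1), ENNReal.ofReal (E k ^ P) := by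
        rw [← h2τ]; ring
    _ = ENNReal.ofReal τ *
        ∑ j ∈ Finset.Icc i N, (‖f ((j : ℝ) * τ) - f (((j - i : ℕ) : ℝ) * τ)‖₊ : ℝ≥0∞) ^ P := by
        congr 1
        rw [← Finset.Ico_add_one_right_eq_Icc, Finset.sum_Ico_eq_sum_range]
        rw [show N + 1 - i = m + 1 from by omega]
        refine Finset.sum_congr rfl fun k _ => ?_
        rw [enorm_rpow_eq _ _ hP0]
        congr 2
        rw [show i + k - i = k from by omega,
          show ((i + k : ℕ) : ℝ) = (k:ℝ) + (i:ℝ) from by push_cast; ring]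

lemma pa_diff_same {f : ℝ → Y} {τ : ℝ} {N : ℕ} (hf : PAff f τ N)
    (j : ℕ) (hj : j + 1 ≤ N) (r u : ℝ) (hr : 0 ≤ r)
    (hu1 : (j : ℝ) * τ ≤ u) (hu2 : u + r ≤ ((j : ℝ) + 1) * τ) :
    f (u + r) - f u = (r / τ) • (f (((j : ℝ) + 1) * τ) - f ((j : ℝ) * τ)) := by
  have h1 := hf j hj u hu1 (by linarith)
  have h2 := hf j hj (u + r) (by linarith) hu2
  rw [h1, h2]
  module

lemma pa_diff_cross {f : ℝ → Y} {τ : ℝ} {N : ℕ} (hf : PAff f τ N)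
    (j : ℕ) (hj : j + 2 ≤ N) (r u : ℝ)
    (hu1 : (j : ℝ) * τ ≤ u) (hu2 : u ≤ ((j : ℝ) + 1) * τ)
    (hv1 : ((j : ℝ) + 1) * τ ≤ u + r) (hv2 : u + r ≤ ((j : ℝ) + 2) * τ) :
    f (u + r) - f u
      = ((u + r - ((j : ℝ) + 1) * τ) / τ) •
          (f (((j : ℝ) + 2) * τ) - f (((j : ℝ) + 1) * τ))
        + ((((j : ℝ) + 1) * τ - u) / τ) •
          (f (((j : ℝ) + 1) * τ) - f ((j : ℝ) * τ)) := by
  have h1 := hf j (by omega) u hu1 hu2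
  have h2 := hf (j + 1) (by omega) (u + r) (by push_cast; linarith) (by push_cast; linarith)
  push_cast at h2
  rw [show ((j:ℝ) + 1 + 1) * τ = ((j:ℝ) + 2) * τ from by ring] at h2
  rw [h1, h2]
  module

lemma claimB {f : ℝ → Y} {τ : ℝ} (hτ : 0 < τ) {N : ℕ} (hf : PAff f τ N)
    {P : ℝ} (hP : 1 ≤ P) (r : ℝ) (hr0 : 0 ≤ r) (hrτ : r ≤ τ) :
    ∫⁻ u in Set.Ioo 0 ((N : ℝ) * τ - r), (‖f (u + r) - f u‖₊ : ℝ≥0∞) ^ P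
      ≤ ENNReal.ofReal ((r / τ) ^ P) * (2 * (ENNReal.ofReal τ *
          ∑ j ∈ Finset.Icc 1 N, (‖f ((j : ℝ) * τ) - f (((j - 1 : ℕ) : ℝ) * τ)‖₊ : ℝ≥0∞) ^ P)) := by
  have hP0 : (0:ℝ) ≤ P := by linarith
  set a : ℕ → ℝ := fun j => ‖f ((j : ℝ) * τ) - f (((j - 1 : ℕ) : ℝ) * τ)‖ with ha
  have ha0 : ∀ j, 0 ≤ a j := fun j => norm_nonneg _
  set eD : ℕ → ℝ≥0∞ := fun j => (‖f ((j : ℝ) * τ) - f (((j - 1 : ℕ) : ℝ) * τ)‖₊ : ℝ≥0∞) ^ P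
    with heD
  have heDa : ∀ j, eD j = ENNReal.ofReal (a j ^ P) := fun j => enorm_rpow_eq _ _ hP0
  have ha1 : ∀ k : ℕ, a (k + 1) = ‖f (((k:ℝ) + 1) * τ) - f ((k:ℝ) * τ)‖ := by
    intro k
    simp only [ha, Nat.add_sub_cancel]
    push_cast
    ring_nf
  have ha2 : ∀ k : ℕ, a (k + 2) = ‖f (((k:ℝ) + 2) * τ) - f (((k:ℝ) + 1) * τ)‖ := by
    intro k
    simp only [ha, Nat.add_sub_cancel]
    push_cast
    ring_nf
  have hcm : ∀ k : ℕ, ((k : ℕ) : ℝ) * τ ≤ (((k + 1 : ℕ)) : ℝ) * τ := by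
    intro k; push_cast
    have h : ((k:ℝ) + 1) * τ = (k:ℝ) * τ + τ := by ring
    linarith
  set s : Set ℝ := Set.Ioo 0 ((N : ℝ) * τ - r) with hsdef
  refine le_trans (lcov _ (fun k => ((k : ℕ) : ℝ) * τ) hcm N s ?_) ?_
  · intro u hu
    simp only [Nat.cast_zero, zero_mul]
    exact ⟨hu.1, by linarith [hu.2]⟩
  have hcell : ∀ k ∈ Finset.range N,
      (∫⁻ u in s ∩ Set.Ioc (((k:ℕ):ℝ) * τ) (((k+1:ℕ):ℝ) * τ),
        (‖f (u + r) - f u‖₊ : ℝ≥0∞) ^ P)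
      ≤ ENNReal.ofReal ((r / τ) ^ P) * (ENNReal.ofReal τ *
          (eD (k + 1) + if k + 2 ≤ N then eD (k + 2) else 0)) := by
    intro k hk
    simp only [Finset.mem_range] at hk
    have hb : (((k+1:ℕ)):ℝ) * τ = ((k:ℝ) + 1) * τ := by push_cast; ring
    rw [hb]
    set C : ℝ≥0∞ := ENNReal.ofReal ((r / τ) ^ P) *
      (eD (k + 1) + if k + 2 ≤ N then eD (k + 2) else 0) with hC
    have hpt : ∀ u ∈ s ∩ Set.Ioc ((k:ℝ) * τ) (((k:ℝ) + 1) * τ),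
        (‖f (u + r) - f u‖₊ : ℝ≥0∞) ^ P ≤ C := by
      intro u hu
      obtain ⟨⟨hu0, huN⟩, hu1, hu2⟩ := hu
      rw [enorm_rpow_eq _ _ hP0, hC]
      by_cases hcase : u + r ≤ ((k:ℝ) + 1) * τ
      · have hds := pa_diff_same hf k (by omega) r u hr0 hu1.le hcase
        have hnorm : ‖f (u + r) - f u‖ = (r / τ) * a (k + 1) := by
          rw [hds, norm_smul, Real.norm_eq_abs, abs_of_nonneg (by positivity), ha1 k]
        rw [hnorm, Real.mul_rpow (by positivity) (ha0 _), ENNReal.ofReal_mul (by positivity),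
          ← heDa]
        exact mul_le_mul_right le_self_add _
      · push_neg at hcase
        have hk2 : k + 2 ≤ N := by
          have h1 : ((k:ℝ) + 1) * τ < (N:ℝ) * τ := by linarith
          have h2 : ((k:ℝ) + 1) < (N:ℝ) := by
            by_contra hcon
            push_neg at hcon
            nlinarith
          have h3 : (k + 1 : ℕ) < N := by exact_mod_cast h2
          omega
        have hv2 : u + r ≤ ((k:ℝ) + 2) * τ := by
          have h : ((k:ℝ) + 2) * τ = ((k:ℝ) + 1) * τ + τ := by ring
          linarith
        have hds := pa_diff_cross hf k hk2 r u hu1.le hu2 hcase.le hv2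
        set μ' := (u + r - ((k:ℝ) + 1) * τ) / τ with hμd
        set ν := (((k:ℝ) + 1) * τ - u) / τ with hνd
        have hμ0 : 0 ≤ μ' := div_nonneg (by linarith) hτ.le
        have hν0 : 0 ≤ ν := div_nonneg (by linarith) hτ.le
        have hμν : μ' + ν = r / τ := by
          rw [hμd, hνd, ← add_div]
          congr 1; ring
        set M := max (a (k+1)) (a (k+2)) with hM
        have hM0 : 0 ≤ M := le_max_of_le_left (ha0 _)
        have hnorm : ‖f (u + r) - f u‖ ≤ (r / τ) * M := by
          rw [hds]
          calc ‖μ' • (f (((k:ℝ) + 2) * τ) - f (((k:ℝ) + 1) * τ))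
                + ν • (f (((k:ℝ) + 1) * τ) - f ((k:ℝ) * τ))‖
              ≤ μ' * ‖f (((k:ℝ) + 2) * τ) - f (((k:ℝ) + 1) * τ)‖
                + ν * ‖f (((k:ℝ) + 1) * τ) - f ((k:ℝ) * τ)‖ := by
                refine (norm_add_le _ _).trans (le_of_eq ?_)
                rw [norm_smul, norm_smul, Real.norm_eq_abs, Real.norm_eq_abs,
                  abs_of_nonneg hμ0, abs_of_nonneg hν0]
            _ = μ' * a (k+2) + ν * a (k+1) := by rw [ha1 k, ha2 k]
            _ ≤ μ' * M + ν * M := by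
                refine add_le_add (mul_le_mul_of_nonneg_left (le_max_right _ _) hμ0)
                  (mul_le_mul_of_nonneg_left (le_max_left _ _) hν0)
            _ = (r / τ) * M := by rw [← add_mul, hμν]
        have hrp : ‖f (u + r) - f u‖ ^ P ≤ (r / τ) ^ P * (a (k+1) ^ P + a (k+2) ^ P) := by
          have h5 : ‖f (u + r) - f u‖ ^ P ≤ ((r / τ) * M) ^ P :=
            Real.rpow_le_rpow (norm_nonneg _) hnorm hP0
          have h6 : ((r / τ) * M) ^ P = (r / τ) ^ P * M ^ P :=
            Real.mul_rpow (by positivity) hM0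
          have h7 : M ^ P ≤ a (k+1) ^ P + a (k+2) ^ P := by
            rcases max_cases (a (k+1)) (a (k+2)) with ⟨he, _⟩ | ⟨he, _⟩ <;> rw [hM, he]
            · nlinarith [Real.rpow_nonneg (ha0 (k+2)) P]
            · nlinarith [Real.rpow_nonneg (ha0 (k+1)) P]
          nlinarith [Real.rpow_nonneg (div_nonneg hr0 hτ.le) P]
        refine (ENNReal.ofReal_le_ofReal hrp).trans ?_
        rw [if_pos hk2, ENNReal.ofReal_mul (by positivity),
          ENNReal.ofReal_add (by positivity) (by positivity), ← heDa (k+1), ← heDa (k+2)]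
    calc (∫⁻ u in s ∩ Set.Ioc ((k:ℝ) * τ) (((k:ℝ)+1) * τ), (‖f (u + r) - f u‖₊ : ℝ≥0∞) ^ P)
        ≤ ∫⁻ _ in s ∩ Set.Ioc ((k:ℝ) * τ) (((k:ℝ)+1) * τ), C :=
          setLIntegral_mono' (measurableSet_Ioo.inter measurableSet_Ioc) hpt
      _ = C * volume (s ∩ Set.Ioc ((k:ℝ) * τ) (((k:ℝ)+1) * τ)) := by
          rw [setLIntegral_const]
      _ ≤ C * ENNReal.ofReal τ := by
          refine mul_le_mul_right ?_ _
          refine (measure_mono Set.inter_subset_right).trans (le_of_eq ?_)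
          rw [Real.volume_Ioc]
          congr 1; ring
      _ = ENNReal.ofReal ((r / τ) ^ P) * (ENNReal.ofReal τ *
            (eD (k + 1) + if k + 2 ≤ N then eD (k + 2) else 0)) := by
          rw [hC]; ring
  refine le_trans (Finset.sum_le_sum hcell) ?_
  have hfac : ∑ k ∈ Finset.range N, ENNReal.ofReal ((r / τ) ^ P) * (ENNReal.ofReal τ *
      (eD (k + 1) + if k + 2 ≤ N then eD (k + 2) else 0))
      = ENNReal.ofReal ((r / τ) ^ P) * (ENNReal.ofReal τ *
        ((∑ k ∈ Finset.range N, eD (k + 1)) +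
          ∑ k ∈ Finset.range N, (if k + 2 ≤ N then eD (k + 2) else 0))) := by
    rw [← Finset.sum_add_distrib, ← Finset.mul_sum, ← Finset.mul_sum]
  rw [hfac]
  have hS1 : ∑ k ∈ Finset.range N, eD (k + 1) = ∑ j ∈ Finset.Icc 1 N, eD j := by
    rw [← Finset.Ico_add_one_right_eq_Icc, Finset.sum_Ico_eq_sum_range]
    simp only [Nat.add_sub_cancel]
    exact Finset.sum_congr rfl fun k _ => by rw [Nat.add_comm]
  have hS2 : ∑ k ∈ Finset.range N, (if k + 2 ≤ N then eD (k + 2) else 0)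
      ≤ ∑ j ∈ Finset.Icc 1 N, eD j := by
    have e1 : ∑ k ∈ Finset.range (N - 1), (if k + 2 ≤ N then eD (k + 2) else 0)
        = ∑ k ∈ Finset.range N, (if k + 2 ≤ N then eD (k + 2) else 0) :=
      Finset.sum_subset (Finset.range_subset_range.mpr (by omega))
        (fun x hx hnx => by
          simp only [Finset.mem_range] at hx hnx
          rw [if_neg (by omega)])
    rw [← e1]
    have e2 : ∑ k ∈ Finset.range (N - 1), (if k + 2 ≤ N then eD (k + 2) else 0)
        = ∑ k ∈ Finset.range (N - 1), eD (k + 2) :=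
      Finset.sum_congr rfl fun k hk => by
        simp only [Finset.mem_range] at hk
        rw [if_pos (by omega)]
    rw [e2]
    have e3 : ∑ j ∈ Finset.Icc 2 N, eD j = ∑ k ∈ Finset.range (N - 1), eD (2 + k) := by
      rw [← Finset.Ico_add_one_right_eq_Icc, Finset.sum_Ico_eq_sum_range]
      congr 1
    rw [show (∑ k ∈ Finset.range (N - 1), eD (k + 2)) = ∑ j ∈ Finset.Icc 2 N, eD j from by
      rw [e3]; exact Finset.sum_congr rfl fun k _ => by rw [Nat.add_comm]]
    exact Finset.sum_le_sum_of_subset (Finset.Icc_subset_Icc_left (by omega))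
  calc ENNReal.ofReal ((r / τ) ^ P) * (ENNReal.ofReal τ *
        ((∑ k ∈ Finset.range N, eD (k + 1)) +
          ∑ k ∈ Finset.range N, (if k + 2 ≤ N then eD (k + 2) else 0)))
      ≤ ENNReal.ofReal ((r / τ) ^ P) * (ENNReal.ofReal τ *
          ((∑ j ∈ Finset.Icc 1 N, eD j) + ∑ j ∈ Finset.Icc 1 N, eD j)) := by
        exact mul_le_mul_right (mul_le_mul_right (add_le_add (le_of_eq hS1) hS2) _) _
    _ = ENNReal.ofReal ((r / τ) ^ P) *
          (2 * (ENNReal.ofReal τ * ∑ j ∈ Finset.Icc 1 N, eD j)) := by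
        rw [← two_mul]; ring

lemma cell_of_mem {τ : ℝ} (hτ : 0 < τ) (M : ℕ) (u : ℝ) (hu0 : 0 < u)
    (hub : u < (M : ℝ) * τ) :
    ∃ k : ℕ, k + 1 ≤ M ∧ (k : ℝ) * τ ≤ u ∧ u ≤ ((k : ℝ) + 1) * τ := by
  refine ⟨⌊u / τ⌋₊, ?_, ?_, ?_⟩
  · have h1 : u / τ < M := (div_lt_iff₀ hτ).mpr hub
    have h2 := (Nat.floor_lt (by positivity : (0:ℝ) ≤ u / τ)).mpr h1
    omega
  · have h3 := Nat.floor_le (by positivity : (0:ℝ) ≤ u / τ)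
    calc (⌊u / τ⌋₊ : ℝ) * τ ≤ (u / τ) * τ := by nlinarith
    _ = u := by field_simp
  · have h4 := (Nat.lt_floor_add_one (u / τ)).le
    calc u = (u / τ) * τ := by field_simp
    _ ≤ ((⌊u / τ⌋₊ : ℝ) + 1) * τ := by nlinarith

lemma claimA_top {f : ℝ → Y} {τ : ℝ} (hτ : 0 < τ) {N : ℕ} (hf : PAff f τ N)
    (i : ℕ) (hiN : i ≤ N) (u : ℝ) (hu : u ∈ Set.Ioo 0 (((N : ℝ) - i) * τ)) :
    ‖f (u + (i : ℝ) * τ) - f u‖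
      ≤ (((Finset.Icc i N).sup fun j => ‖f ((j : ℝ) * τ) - f (((j - i : ℕ) : ℝ) * τ)‖₊ : ℝ≥0) : ℝ) := by
  obtain ⟨hu0, hub⟩ := hu
  have hub' : u < ((N - i : ℕ) : ℝ) * τ := by rw [Nat.cast_sub hiN]; exact hub
  obtain ⟨k, hk1, hk2, hk3⟩ := cell_of_mem hτ (N - i) u hu0 hub'
  have hds := pa_diff_shift hf k i (by omega) u hk2 hk3
  set S : ℝ≥0 := (Finset.Icc i N).sup fun j => ‖f ((j : ℝ) * τ) - f (((j - i : ℕ) : ℝ) * τ)‖₊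
    with hSdef
  have hle : ∀ l : ℕ, i ≤ l → l ≤ N →
      ‖f ((l : ℝ) * τ) - f (((l - i : ℕ) : ℝ) * τ)‖ ≤ (S : ℝ) := by
    intro l hl1 hl2
    have := Finset.le_sup (f := fun j : ℕ => ‖f ((j : ℝ) * τ) - f (((j - i : ℕ) : ℝ) * τ)‖₊)
      (Finset.mem_Icc.mpr ⟨hl1, hl2⟩)
    exact_mod_cast this
  have hS1 : ‖f (((k:ℝ) + (i:ℝ) + 1) * τ) - f (((k:ℝ) + 1) * τ)‖ ≤ (S : ℝ) := by
    have h := hle (k + i + 1) (by omega) (by omega)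
    rw [show ((k + i + 1 : ℕ) : ℝ) = (k:ℝ) + (i:ℝ) + 1 from by push_cast; ring,
      show ((k + i + 1 - i : ℕ) : ℝ) = (k:ℝ) + 1 from by
        rw [show k + i + 1 - i = k + 1 from by omega]; push_cast; ring] at h
    exact h
  have hS2 : ‖f (((k:ℝ) + (i:ℝ)) * τ) - f ((k:ℝ) * τ)‖ ≤ (S : ℝ) := by
    have h := hle (k + i) (by omega) (by omega)
    rw [show ((k + i : ℕ) : ℝ) = (k:ℝ) + (i:ℝ) from by push_cast; ring,
      show ((k + i - i : ℕ) : ℝ) = (k:ℝ) from by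
        rw [show k + i - i = k from by omega]] at h
    exact h
  set α := (u - (k:ℝ) * τ) / τ with hαd
  set β := (((k:ℝ) + 1) * τ - u) / τ with hβd
  have hα : 0 ≤ α := div_nonneg (by linarith) hτ.le
  have hβ : 0 ≤ β := div_nonneg (by linarith) hτ.le
  have hαβ : α + β = 1 := by
    rw [hαd, hβd, ← add_div,
      show u - (k:ℝ) * τ + (((k:ℝ) + 1) * τ - u) = τ from by ring, div_self hτ.ne']
  rw [hds]
  calc ‖α • (f (((k:ℝ) + (i:ℝ) + 1) * τ) - f (((k:ℝ) + 1) * τ))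
        + β • (f (((k:ℝ) + (i:ℝ)) * τ) - f ((k:ℝ) * τ))‖
      ≤ α * ‖f (((k:ℝ) + (i:ℝ) + 1) * τ) - f (((k:ℝ) + 1) * τ)‖
        + β * ‖f (((k:ℝ) + (i:ℝ)) * τ) - f ((k:ℝ) * τ)‖ := by
        refine (norm_add_le _ _).trans (le_of_eq ?_)
        rw [norm_smul, norm_smul, Real.norm_eq_abs, Real.norm_eq_abs,
          abs_of_nonneg hα, abs_of_nonneg hβ]
    _ ≤ α * (S : ℝ) + β * (S : ℝ) :=
        add_le_add (mul_le_mul_of_nonneg_left hS1 hα) (mul_le_mul_of_nonneg_left hS2 hβ)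
    _ = (S : ℝ) := by rw [← add_mul, hαβ, one_mul]

lemma claimB_top {f : ℝ → Y} {τ : ℝ} (hτ : 0 < τ) {N : ℕ} (hf : PAff f τ N)
    (r : ℝ) (hr0 : 0 ≤ r) (hrτ : r ≤ τ) (u : ℝ) (hu : u ∈ Set.Ioo 0 ((N : ℝ) * τ - r)) :
    ‖f (u + r) - f u‖
      ≤ (r / τ) * (2 * (((Finset.Icc 1 N).sup
          fun j => ‖f ((j : ℝ) * τ) - f (((j - 1 : ℕ) : ℝ) * τ)‖₊ : ℝ≥0) : ℝ)) := by
  obtain ⟨hu0, hub⟩ := hu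
  obtain ⟨k, hk1, hk2, hk3⟩ := cell_of_mem hτ N u hu0 (by linarith)
  set S : ℝ≥0 := (Finset.Icc 1 N).sup fun j => ‖f ((j : ℝ) * τ) - f (((j - 1 : ℕ) : ℝ) * τ)‖₊
    with hSdef
  have hS0 : (0:ℝ) ≤ (S : ℝ) := S.coe_nonneg
  have hle : ∀ l : ℕ, 1 ≤ l → l ≤ N →
      ‖f ((l : ℝ) * τ) - f (((l - 1 : ℕ) : ℝ) * τ)‖ ≤ (S : ℝ) := by
    intro l hl1 hl2
    have := Finset.le_sup (f := fun j : ℕ => ‖f ((j : ℝ) * τ) - f (((j - 1 : ℕ) : ℝ) * τ)‖₊)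
      (Finset.mem_Icc.mpr ⟨hl1, hl2⟩)
    exact_mod_cast this
  have hS1 : ‖f (((k:ℝ) + 1) * τ) - f ((k:ℝ) * τ)‖ ≤ (S : ℝ) := by
    have h := hle (k + 1) (by omega) (by omega)
    rw [show ((k + 1 : ℕ) : ℝ) = (k:ℝ) + 1 from by push_cast; ring,
      Nat.add_sub_cancel] at h
    exact h
  by_cases hcase : u + r ≤ ((k:ℝ) + 1) * τ
  · have hds := pa_diff_same hf k (by omega) r u hr0 hk2 hcase
    rw [hds, norm_smul, Real.norm_eq_abs, abs_of_nonneg (by positivity)]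
    nlinarith [div_nonneg hr0 hτ.le]
  · push_neg at hcase
    have hk2N : k + 2 ≤ N := by
      have h1 : ((k:ℝ) + 1) * τ < (N:ℝ) * τ := by linarith
      have h2 : ((k:ℝ) + 1) < (N:ℝ) := by
        by_contra hcon
        push_neg at hcon
        nlinarith
      have h3 : (k + 1 : ℕ) < N := by exact_mod_cast h2
      omega
    have hS2 : ‖f (((k:ℝ) + 2) * τ) - f (((k:ℝ) + 1) * τ)‖ ≤ (S : ℝ) := by
      have h := hle (k + 2) (by omega) (by omega)
      rw [show ((k + 2 : ℕ) : ℝ) = (k:ℝ) + 2 from by push_cast; ring,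
        show ((k + 2 - 1 : ℕ) : ℝ) = (k:ℝ) + 1 from by
          rw [show k + 2 - 1 = k + 1 from by omega]; push_cast; ring] at h
      exact h
    have hv2 : u + r ≤ ((k:ℝ) + 2) * τ := by
      have h : ((k:ℝ) + 2) * τ = ((k:ℝ) + 1) * τ + τ := by ring
      linarith
    have hds := pa_diff_cross hf k hk2N r u hk2 hk3 hcase.le hv2
    set μ' := (u + r - ((k:ℝ) + 1) * τ) / τ with hμd
    set ν := (((k:ℝ) + 1) * τ - u) / τ with hνd
    have hμ0 : 0 ≤ μ' := div_nonneg (by linarith) hτ.le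
    have hν0 : 0 ≤ ν := div_nonneg (by linarith) hτ.le
    have hμν : μ' + ν = r / τ := by
      rw [hμd, hνd, ← add_div]
      congr 1; ring
    rw [hds]
    calc ‖μ' • (f (((k:ℝ) + 2) * τ) - f (((k:ℝ) + 1) * τ))
          + ν • (f (((k:ℝ) + 1) * τ) - f ((k:ℝ) * τ))‖
        ≤ μ' * ‖f (((k:ℝ) + 2) * τ) - f (((k:ℝ) + 1) * τ)‖
          + ν * ‖f (((k:ℝ) + 1) * τ) - f ((k:ℝ) * τ)‖ := by
          refine (norm_add_le _ _).trans (le_of_eq ?_)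
          rw [norm_smul, norm_smul, Real.norm_eq_abs, Real.norm_eq_abs,
            abs_of_nonneg hμ0, abs_of_nonneg hν0]
      _ ≤ μ' * (S : ℝ) + ν * (S : ℝ) :=
          add_le_add (mul_le_mul_of_nonneg_left hS2 hμ0) (mul_le_mul_of_nonneg_left hS1 hν0)
      _ = (r / τ) * (S : ℝ) := by rw [← add_mul, hμν]
      _ ≤ (r / τ) * (2 * (S : ℝ)) := by nlinarith [div_nonneg hr0 hτ.le]

end PAAux


lemma dDN_zero {Y : Type*} [NormedAddCommGroup Y] (f : ℝ → Y) (τ : ℝ) (N : ℕ)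
    (p : ℝ≥0∞) (hp : 1 ≤ p) : discreteDiffNorm f τ N 0 p = 0 := by
  rw [discreteDiffNorm]
  split_ifs with hq
  · norm_cast
    refine le_antisymm (Finset.sup_le fun j _ => ?_) zero_le
    simp
  · have hP1 : 1 ≤ p.toReal := by
      rw [← ENNReal.toReal_one]
      exact ENNReal.toReal_mono hq hp
    have hz : ∀ j ∈ Finset.Icc 0 N,
        (‖f ((j : ℝ) * τ) - f (((j - 0 : ℕ) : ℝ) * τ)‖₊ : ℝ≥0∞) ^ p.toReal = 0 := by
      intro j _
      simp only [Nat.sub_zero, sub_self, nnnorm_zero, ENNReal.coe_zero]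
      exact ENNReal.zero_rpow_of_pos (by linarith)
    rw [Finset.sum_congr rfl hz, Finset.sum_const_zero, mul_zero]
    exact ENNReal.zero_rpow_of_pos (one_div_pos.mpr (by linarith))

/-- Besov bound (`q = ∞`) for continuous piecewise affine functions: for `s ∈ (0,1)` and
`p ∈ [1,∞]`, `[f]_{B^s_{p,∞}} ≤ 3 max_{1 ≤ i < N} f_{i,p} / t_i^s`. -/
theorem piecewise_affine_besov_sup_bound {Y : Type*} [NormedAddCommGroup Y]
    [NormedSpace ℝ Y] [CompleteSpace Y] (T : ℝ) (hT : 0 < T) (N : ℕ) (hN : 2 ≤ N)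
    (f : ℝ → Y) (hcont : ContinuousOn f (Set.Icc 0 T))
    (haff : ∀ i : ℕ, 1 ≤ i → i ≤ N → ∀ t : ℝ,
      ((i : ℝ) - 1) * (T / N) ≤ t → t ≤ (i : ℝ) * (T / N) →
      f t = ((t - ((i : ℝ) - 1) * (T / N)) / (T / N)) • f ((i : ℝ) * (T / N)) +
        (((i : ℝ) * (T / N) - t) / (T / N)) • f (((i : ℝ) - 1) * (T / N)))
    (s : ℝ) (hs : s ∈ Set.Ioo (0 : ℝ) 1) (p : ℝ≥0∞) (hp : 1 ≤ p) :
    besovSeminormTop f T s p ≤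
      3 * (Finset.Icc 1 (N - 1)).sup
        (fun i => discreteDiffNorm f (T / N) N i p /
          ENNReal.ofReal (((i : ℝ) * (T / N)) ^ s)) := by
  obtain ⟨hs0, hs1⟩ := hs
  set τ := T / N with hτdef
  have hNpos : 0 < (N : ℝ) := by
    have : 0 < N := by omega
    exact_mod_cast this
  have hτ : 0 < τ := div_pos hT hNpos
  have hNτ : (N : ℝ) * τ = T := by rw [hτdef]; field_simp
  have hp0' : p ≠ 0 := (lt_of_lt_of_le zero_lt_one hp).ne'
  have hpa : PAff f τ N := by
    intro j hj u hu1 hu2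
    have h := haff (j + 1) (by omega) (by omega) u
      (by push_cast; linarith) (by push_cast; linarith)
    push_cast at h
    rw [show (j : ℝ) + 1 - 1 = (j : ℝ) from by ring] at h
    exact h
  unfold besovSeminormTop
  refine iSup₂_le fun h hh => ?_
  obtain ⟨hh0, hhT⟩ := hh
  set SS := (Finset.Icc 1 (N - 1)).sup
    (fun i => discreteDiffNorm f τ N i p / ENNReal.ofReal (((i : ℝ) * τ) ^ s)) with hSSdef
  set i := ⌊h / τ⌋₊ with hidef
  have hiτ : (i : ℝ) * τ ≤ h := by
    have h3 := Nat.floor_le (by positivity : (0:ℝ) ≤ h / τ)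
    calc (i : ℝ) * τ ≤ (h / τ) * τ := by nlinarith
    _ = h := by field_simp
  have hhi : h < ((i : ℝ) + 1) * τ := by
    have h4 := Nat.lt_floor_add_one (h / τ)
    calc h = (h / τ) * τ := by field_simp
    _ < ((i : ℝ) + 1) * τ := by nlinarith
  have hiN : i < N := by
    have h5 : h / τ < (N : ℝ) := (div_lt_iff₀ hτ).mpr (by rw [hNτ]; linarith)
    have h6 := (Nat.floor_lt (by positivity : (0:ℝ) ≤ h / τ)).mpr h5
    omega
  set r := h - (i : ℝ) * τ with hrdef
  have hr0 : 0 ≤ r := by rw [hrdef]; linarith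
  have hrτ : r ≤ τ := by rw [hrdef]; nlinarith
  have hrh : r + (i : ℝ) * τ = h := by rw [hrdef]; ring
  have hiτ0 : (0:ℝ) ≤ (i : ℝ) * τ := by positivity
  have hTh : T - h + r = ((N : ℝ) - i) * τ := by rw [hrdef, ← hNτ]; ring
  have hThN : T - h ≤ (N : ℝ) * τ - r := by
    rw [hrdef, ← hNτ]; linarith
  -- measurability
  have hmf : ∀ c : ℝ, 0 ≤ c → c ≤ h →
      AEStronglyMeasurable (fun u => f (u + c)) (volume.restrict (Set.Ioo 0 (T - h))) := by
    intro c hc0 hch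
    refine ContinuousOn.aestronglyMeasurable ?_ measurableSet_Ioo
    refine hcont.comp ((continuous_id.add continuous_const).continuousOn) ?_
    intro u hu
    exact ⟨by simp only [id]; linarith [hu.1], by simp only [id]; linarith [hu.2]⟩
  have hm2 : AEStronglyMeasurable (fun u => f (u + r) - f u)
      (volume.restrict (Set.Ioo 0 (T - h))) := by
    refine AEStronglyMeasurable.sub (hmf r hr0 (by linarith)) ?_
    have := hmf 0 le_rfl hh0.le
    simpa using this
  have hm1 : AEStronglyMeasurable (fun u => f (u + r + (i : ℝ) * τ) - f (u + r))
      (volume.restrict (Set.Ioo 0 (T - h))) := by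
    refine AEStronglyMeasurable.sub ?_ (hmf r hr0 (by linarith))
    have e : (fun u : ℝ => f (u + (r + (i : ℝ) * τ))) = fun u => f (u + r + (i : ℝ) * τ) := by
      funext u; rw [← add_assoc]
    rw [← e]
    exact hmf _ (by positivity) (le_of_eq hrh)
  have hsplit : (fun u => f (u + h) - f u)
      = (fun u => f (u + r + (i : ℝ) * τ) - f (u + r)) + (fun u => f (u + r) - f u) := by
    funext u
    simp only [Pi.add_apply]
    rw [show u + r + (i : ℝ) * τ = u + h from by rw [hrdef]; ring]
    abel
  have htri : eLpNorm (fun u => f (u + h) - f u) p (volume.restrict (Set.Ioo 0 (T - h)))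
      ≤ eLpNorm (fun u => f (u + r + (i : ℝ) * τ) - f (u + r)) p
          (volume.restrict (Set.Ioo 0 (T - h)))
        + eLpNorm (fun u => f (u + r) - f u) p (volume.restrict (Set.Ioo 0 (T - h))) := by
    rw [hsplit]
    exact eLpNorm_add_le hm1 hm2 hp
  have H1 : eLpNorm (fun u => f (u + r + (i : ℝ) * τ) - f (u + r)) p
      (volume.restrict (Set.Ioo 0 (T - h))) ≤ discreteDiffNorm f τ N i p := by
    rcases eq_or_ne p ⊤ with hq | hq
    · subst hq
      rw [eLpNorm_exponent_top, discreteDiffNorm, if_pos rfl]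
      refine le_trans (eLpNormEssSup_le_of_ae_bound ?_) (le_of_eq ENNReal.ofReal_coe_nnreal)
      filter_upwards [ae_restrict_mem measurableSet_Ioo] with u hu
      have huv : u + r ∈ Set.Ioo 0 (((N : ℝ) - i) * τ) :=
        ⟨by linarith [hu.1], by linarith [hu.2, hTh]⟩
      exact claimA_top hτ hpa i hiN.le (u + r) huv
    · rw [eLpNorm_eq_lintegral_rpow_enorm_toReal hp0' hq, discreteDiffNorm, if_neg hq]
      have hP1 : 1 ≤ p.toReal := by
        rw [← ENNReal.toReal_one]; exact ENNReal.toReal_mono hq hp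
      refine ENNReal.rpow_le_rpow ?_ (by positivity)
      calc ∫⁻ u in Set.Ioo 0 (T - h),
            (‖f (u + r + (i : ℝ) * τ) - f (u + r)‖₊ : ℝ≥0∞) ^ p.toReal
          = ∫⁻ u, (Set.Ioo 0 (T - h)).indicator
              (fun u => (‖f (u + r + (i : ℝ) * τ) - f (u + r)‖₊ : ℝ≥0∞) ^ p.toReal) u :=
            (lintegral_indicator measurableSet_Ioo _).symm
        _ = ∫⁻ u, (Set.Ioo r (T - h + r)).indicator
              (fun v => (‖f (v + (i : ℝ) * τ) - f v‖₊ : ℝ≥0∞) ^ p.toReal) (u + r) := by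
            congr 1 with u
            simp only [Set.indicator_apply]
            refine if_congr ?_ rfl rfl
            simp only [Set.mem_Ioo]
            constructor
            · rintro ⟨a, b⟩; exact ⟨by linarith, by linarith⟩
            · rintro ⟨a, b⟩; exact ⟨by linarith, by linarith⟩
        _ = ∫⁻ v, (Set.Ioo r (T - h + r)).indicator
              (fun v => (‖f (v + (i : ℝ) * τ) - f v‖₊ : ℝ≥0∞) ^ p.toReal) v :=
            lintegral_add_right_eq_self _ r
        _ = ∫⁻ v in Set.Ioo r (T - h + r),
              (‖f (v + (i : ℝ) * τ) - f v‖₊ : ℝ≥0∞) ^ p.toReal :=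
            lintegral_indicator measurableSet_Ioo _
        _ ≤ ∫⁻ v in Set.Ioo 0 (((N : ℝ) - i) * τ),
              (‖f (v + (i : ℝ) * τ) - f v‖₊ : ℝ≥0∞) ^ p.toReal := by
            refine lintegral_mono_set ?_
            intro v hv
            exact ⟨lt_of_le_of_lt hr0 hv.1, by linarith [hv.2, hTh]⟩
        _ ≤ _ := claimA hτ hpa hP1 i hiN.le
  have H2 : eLpNorm (fun u => f (u + r) - f u) p (volume.restrict (Set.Ioo 0 (T - h)))
      ≤ ENNReal.ofReal (r / τ) * (2 * discreteDiffNorm f τ N 1 p) := by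
    rcases eq_or_ne p ⊤ with hq | hq
    · subst hq
      rw [eLpNorm_exponent_top, discreteDiffNorm, if_pos rfl]
      refine le_trans (eLpNormEssSup_le_of_ae_bound
        (C := (r / τ) * (2 * (((Finset.Icc 1 N).sup
          fun j : ℕ => ‖f ((j : ℝ) * τ) - f (((j - 1 : ℕ) : ℝ) * τ)‖₊ : ℝ≥0) : ℝ))) ?_) ?_
      · filter_upwards [ae_restrict_mem measurableSet_Ioo] with u hu
        refine claimB_top hτ hpa r hr0 hrτ u ⟨hu.1, by linarith [hu.2, hThN]⟩
      · rw [ENNReal.ofReal_mul (by positivity), ENNReal.ofReal_mul (by norm_num : (0:ℝ) ≤ 2),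
          ENNReal.ofReal_ofNat, ENNReal.ofReal_coe_nnreal]
    · rw [eLpNorm_eq_lintegral_rpow_enorm_toReal hp0' hq, discreteDiffNorm, if_neg hq]
      have hP1 : 1 ≤ p.toReal := by
        rw [← ENNReal.toReal_one]; exact ENNReal.toReal_mono hq hp
      have hP0' : p.toReal ≠ 0 := by linarith
      have step : ∫⁻ u in Set.Ioo 0 (T - h), (‖f (u + r) - f u‖₊ : ℝ≥0∞) ^ p.toReal
          ≤ ENNReal.ofReal ((r / τ) ^ p.toReal) * (2 * (ENNReal.ofReal τ *
              ∑ j ∈ Finset.Icc 1 N,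
                (‖f ((j : ℝ) * τ) - f (((j - 1 : ℕ) : ℝ) * τ)‖₊ : ℝ≥0∞) ^ p.toReal)) := by
        refine le_trans (lintegral_mono_set ?_) (claimB hτ hpa hP1 r hr0 hrτ)
        intro v hv
        exact ⟨hv.1, by linarith [hv.2, hThN]⟩
      refine le_trans (ENNReal.rpow_le_rpow step (by positivity)) ?_
      rw [ENNReal.mul_rpow_of_nonneg _ _ (by positivity),
        ENNReal.mul_rpow_of_nonneg _ _ (by positivity),
        ← ENNReal.ofReal_rpow_of_nonneg (by positivity) (by positivity),
        ← ENNReal.rpow_mul, mul_one_div, div_self hP0', ENNReal.rpow_one]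
      refine mul_le_mul_right (mul_le_mul_left ?_ _) _
      calc (2 : ℝ≥0∞) ^ (1 / p.toReal) ≤ 2 ^ (1 : ℝ) :=
            ENNReal.rpow_le_rpow_of_exponent_le (by norm_num)
              ((div_le_one (by linarith)).mpr (by linarith))
        _ = 2 := ENNReal.rpow_one 2
  have hMle : ∀ l : ℕ, 1 ≤ l → l ≤ N - 1 →
      ENNReal.ofReal (((l : ℝ) * τ) ^ (-s)) * discreteDiffNorm f τ N l p ≤ SS := by
    intro l hl1 hl2
    have hl0 : (0:ℝ) < (l : ℝ) := by exact_mod_cast hl1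
    have hlt : 0 < (l : ℝ) * τ := by positivity
    have heq : ENNReal.ofReal (((l : ℝ) * τ) ^ (-s)) * discreteDiffNorm f τ N l p
        = discreteDiffNorm f τ N l p / ENNReal.ofReal (((l : ℝ) * τ) ^ s) := by
      rw [Real.rpow_neg hlt.le, ENNReal.ofReal_inv_of_pos (Real.rpow_pos_of_pos hlt s),
        div_eq_mul_inv, mul_comm]
    rw [heq, hSSdef]
    exact Finset.le_sup (f := fun i : ℕ => discreteDiffNorm f τ N i p /
      ENNReal.ofReal (((i : ℝ) * τ) ^ s)) (Finset.mem_Icc.mpr ⟨hl1, hl2⟩)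
  have B1 : ENNReal.ofReal (h ^ (-s)) * discreteDiffNorm f τ N i p ≤ SS := by
    rcases Nat.eq_zero_or_pos i with hi0 | hi1
    · rw [hi0, dDN_zero f τ N p hp, mul_zero]
      exact zero_le
    · have hit : 0 < (i : ℝ) * τ := by
        have : (0:ℝ) < (i : ℝ) := by exact_mod_cast hi1
        positivity
      have hhs : h ^ (-s) ≤ ((i : ℝ) * τ) ^ (-s) := by
        have h1 : ((i : ℝ) * τ) ^ s ≤ h ^ s := Real.rpow_le_rpow hit.le hiτ hs0.le
        rw [Real.rpow_neg hit.le, Real.rpow_neg (by linarith : (0:ℝ) ≤ h)]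
        exact inv_anti₀ (Real.rpow_pos_of_pos hit s) h1
      exact le_trans (mul_le_mul_left (ENNReal.ofReal_le_ofReal hhs) _)
        (hMle i hi1 (by omega))
  have KI : ENNReal.ofReal (h ^ (-s)) * ENNReal.ofReal (r / τ) ≤ ENNReal.ofReal (τ ^ (-s)) := by
    rw [← ENNReal.ofReal_mul (Real.rpow_nonneg (by linarith) _)]
    apply ENNReal.ofReal_le_ofReal
    rcases Nat.eq_zero_or_pos i with hi0 | hi1
    · have hrh' : r = h := by rw [hrdef, hi0]; simp
      have hhτ' : h ≤ τ := by
        have h7 := hhi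
        rw [hi0] at h7
        push_cast at h7
        linarith
      rw [hrh']
      have e1 : h ^ (-s) * (h / τ) = h ^ (1 - s) / τ := by
        rw [show (1:ℝ) - s = -s + 1 from by ring, Real.rpow_add hh0, Real.rpow_one]
        ring
      have e2 : τ ^ (-s) = τ ^ (1 - s) / τ := by
        rw [show (1:ℝ) - s = -s + 1 from by ring, Real.rpow_add hτ, Real.rpow_one]
        field_simp
      rw [e1, e2]
      have h10 : h ^ (1 - s) ≤ τ ^ (1 - s) :=
        Real.rpow_le_rpow hh0.le hhτ' (by linarith)
      exact div_le_div_of_nonneg_right h10 hτ.le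
    · have h1 : h ^ (-s) ≤ τ ^ (-s) := by
        have hτh : τ ≤ h := by
          have h8 : (1:ℝ) ≤ (i : ℝ) := by exact_mod_cast hi1
          nlinarith
        have h9 : τ ^ s ≤ h ^ s := Real.rpow_le_rpow hτ.le hτh hs0.le
        rw [Real.rpow_neg hτ.le, Real.rpow_neg (by linarith : (0:ℝ) ≤ h)]
        exact inv_anti₀ (Real.rpow_pos_of_pos hτ s) h9
      have h2 : r / τ ≤ 1 := (div_le_one hτ).mpr hrτ
      calc h ^ (-s) * (r / τ) ≤ τ ^ (-s) * 1 :=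
            mul_le_mul h1 h2 (by positivity) (Real.rpow_nonneg hτ.le _)
        _ = τ ^ (-s) := mul_one _
  have M1 : ENNReal.ofReal (τ ^ (-s)) * discreteDiffNorm f τ N 1 p ≤ SS := by
    have := hMle 1 le_rfl (by omega)
    simpa using this
  calc ENNReal.ofReal (h ^ (-s)) *
        eLpNorm (fun u => f (u + h) - f u) p (volume.restrict (Set.Ioo 0 (T - h)))
      ≤ ENNReal.ofReal (h ^ (-s)) * (discreteDiffNorm f τ N i p
          + ENNReal.ofReal (r / τ) * (2 * discreteDiffNorm f τ N 1 p)) :=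
        mul_le_mul_right (le_trans htri (add_le_add H1 H2)) _
    _ = ENNReal.ofReal (h ^ (-s)) * discreteDiffNorm f τ N i p
          + (ENNReal.ofReal (h ^ (-s)) * ENNReal.ofReal (r / τ))
            * (2 * discreteDiffNorm f τ N 1 p) := by ring
    _ ≤ SS + ENNReal.ofReal (τ ^ (-s)) * (2 * discreteDiffNorm f τ N 1 p) :=
        add_le_add B1 (mul_le_mul_left KI _)
    _ = SS + 2 * (ENNReal.ofReal (τ ^ (-s)) * discreteDiffNorm f τ N 1 p) := by ring
    _ ≤ SS + 2 * SS := add_le_add le_rfl (mul_le_mul_right M1 2)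
    _ = 3 * SS := by ring
end
end
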